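/- arXiv:2204.09129 — 3 statements merged into one kernel-verified Lean document; each statement's English description precedes it below -/
import Mathlib

section
/- Let P ⊆ ℝ^n be a half-integral polytope of dimension d. Then for every c ∈ ℝ^n and every vertex u of P there exists a c-monotone path of length at most 3d from u to a vertex maximizing x ↦ cᵀx over P. In particular, the monotone diameter of P is at most 3d. -/
open Set Finset

/-- The standard dot product on `Fin n → ℝ`. -/
def dotp {n : ℕ} (c x : Fin n → ℝ) : ℝ := ∑ i, c i * x i

/-- A polytope is the convex hull of a finite nonempty set of points. -/
def IsPolytope {n : ℕ} (P : Set (Fin n → ℝ)) : Prop :=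
  ∃ S : Finset (Fin n → ℝ), S.Nonempty ∧ P = convexHull ℝ (S : Set (Fin n → ℝ))

/-- The dimension of a polytope: the dimension of its affine hull. -/
noncomputable def polytopeDim {n : ℕ} (P : Set (Fin n → ℝ)) : ℕ :=
  Module.finrank ℝ (affineSpan ℝ P).direction

/-- A vertex of a polytope is an extreme point. -/
def IsVertexOf {n : ℕ} (P : Set (Fin n → ℝ)) (v : Fin n → ℝ) : Prop :=
  v ∈ Set.extremePoints ℝ P

/-- An edge of a polytope: a segment between two distinct vertices that is an
exposed face of `P`; its endpoints are then called neighbors. -/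
def IsEdgeOf {n : ℕ} (P : Set (Fin n → ℝ)) (u v : Fin n → ℝ) : Prop :=
  u ≠ v ∧ IsVertexOf P u ∧ IsVertexOf P v ∧ IsExposed ℝ P (segment ℝ u v)

/-- A `c`-monotone path of length `m` in `P`: a sequence of `m+1` vertices of `P`
such that consecutive vertices form edges of `P` and the value of `cᵀx` strictly
increases along the path. -/
def IsMonotonePath {n : ℕ} (P : Set (Fin n → ℝ)) (c : Fin n → ℝ) (m : ℕ)
    (p : Fin (m + 1) → (Fin n → ℝ)) : Prop :=
  (∀ i, IsVertexOf P (p i)) ∧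
  ∀ i : Fin m, IsEdgeOf P (p i.castSucc) (p i.succ) ∧
    dotp c (p i.castSucc) < dotp c (p i.succ)

namespace HalfIntegralAux

variable {n : ℕ}

/-! ### dotp basics -/

lemma dotp_add_left (a b x : Fin n → ℝ) : dotp (a + b) x = dotp a x + dotp b x := by
  simp [dotp, add_mul, Finset.sum_add_distrib]

lemma dotp_smul_left (t : ℝ) (a x : Fin n → ℝ) : dotp (t • a) x = t * dotp a x := by
  simp [dotp, Finset.mul_sum, mul_assoc]

lemma isLinearMap_dotp (a : Fin n → ℝ) : IsLinearMap ℝ (dotp a) := by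
  constructor
  · intro x y; simp [dotp, mul_add, Finset.sum_add_distrib]
  · intro t x; simp [dotp, Finset.mul_sum]; congr 1; ext i; ring

lemma dotp_sub_right (a x y : Fin n → ℝ) : dotp a (x - y) = dotp a x - dotp a y := by
  simp [dotp, mul_sub, Finset.sum_sub_distrib]

lemma dotp_smul_right (t : ℝ) (a x : Fin n → ℝ) : dotp a (t • x) = t * dotp a x :=
  (isLinearMap_dotp a).map_smul t x

/-- dotp as a continuous linear map. -/
noncomputable def dlin (a : Fin n → ℝ) : (Fin n → ℝ) →L[ℝ] ℝ :=
  LinearMap.toContinuousLinearMap (IsLinearMap.mk' _ (isLinearMap_dotp a))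

@[simp] lemma dlin_apply (a x : Fin n → ℝ) : dlin a x = dotp a x := rfl

lemma dotp_of_clm (l : (Fin n → ℝ) →L[ℝ] ℝ) (x : Fin n → ℝ) :
    dotp (fun i => l (fun j => if i = j then (1:ℝ) else 0)) x = l x := by
  conv_rhs => rw [pi_eq_sum_univ x]
  rw [map_sum]
  simp [dotp, mul_comm]

/-! ### argmax machinery -/

/-- The set of maximizers of `dotp c` within a finset. -/
noncomputable def argmaxF (c : Fin n → ℝ) (A : Finset (Fin n → ℝ)) : Finset (Fin n → ℝ) :=
  letI := Classical.decPred fun v : Fin n → ℝ => ∀ w ∈ A, dotp c w ≤ dotp c v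
  A.filter fun v => ∀ w ∈ A, dotp c w ≤ dotp c v

lemma mem_argmaxF {c : Fin n → ℝ} {A : Finset (Fin n → ℝ)} {v : Fin n → ℝ} :
    v ∈ argmaxF c A ↔ v ∈ A ∧ ∀ w ∈ A, dotp c w ≤ dotp c v := by
  classical
  simp [argmaxF]

lemma argmaxF_subset (c : Fin n → ℝ) (A : Finset (Fin n → ℝ)) : argmaxF c A ⊆ A :=
  fun v hv => (mem_argmaxF.1 hv).1

lemma argmaxF_nonempty (c : Fin n → ℝ) {A : Finset (Fin n → ℝ)} (hA : A.Nonempty) :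
    (argmaxF c A).Nonempty := by
  obtain ⟨v, hv, hmax⟩ := A.exists_max_image (dotp c) hA
  exact ⟨v, mem_argmaxF.2 ⟨hv, hmax⟩⟩

/-- value is constant on argmaxF -/
lemma argmaxF_const {c : Fin n → ℝ} {A : Finset (Fin n → ℝ)} {v w : Fin n → ℝ}
    (hv : v ∈ argmaxF c A) (hw : w ∈ argmaxF c A) : dotp c v = dotp c w := by
  rw [mem_argmaxF] at hv hw
  exact le_antisymm (hw.2 v hv.1) (hv.2 w hw.1)

lemma dotp_le_of_mem_convexHull {A : Finset (Fin n → ℝ)} {c x : Fin n → ℝ} {M : ℝ}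
    (hx : x ∈ convexHull ℝ (A : Set (Fin n → ℝ))) (hM : ∀ v ∈ A, dotp c v ≤ M) :
    dotp c x ≤ M :=
  convexHull_min (fun v hv => hM v hv) (convex_halfSpace_le (isLinearMap_dotp c) M) hx

lemma dotp_ge_of_mem_convexHull {A : Finset (Fin n → ℝ)} {c x : Fin n → ℝ} {M : ℝ}
    (hx : x ∈ convexHull ℝ (A : Set (Fin n → ℝ))) (hM : ∀ v ∈ A, M ≤ dotp c v) :
    M ≤ dotp c x :=
  convexHull_min (fun v hv => hM v hv) (convex_halfSpace_ge (isLinearMap_dotp c) M) hx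

/-- The exposed face of the polytope `conv A` induced by the functional `dotp c`. -/
def faceSet (c : Fin n → ℝ) (A : Finset (Fin n → ℝ)) : Set (Fin n → ℝ) :=
  {x ∈ convexHull ℝ (A : Set (Fin n → ℝ)) |
    ∀ y ∈ convexHull ℝ (A : Set (Fin n → ℝ)), dotp c y ≤ dotp c x}

lemma isExposed_faceSet (c : Fin n → ℝ) (A : Finset (Fin n → ℝ)) :
    IsExposed ℝ (convexHull ℝ (A : Set (Fin n → ℝ))) (faceSet c A) := by
  intro _
  exact ⟨dlin c, by ext x; simp [faceSet]⟩

lemma dotp_centerMass (c : Fin n → ℝ) (A : Finset (Fin n → ℝ)) (w : (Fin n → ℝ) → ℝ)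
    (hw : ∑ y ∈ A, w y = 1) :
    dotp c (A.centerMass w id) = ∑ y ∈ A, w y * dotp c y := by
  rw [Finset.centerMass_eq_of_sum_1 _ _ hw]
  rw [show ((∑ i ∈ A, w i • id i : Fin n → ℝ)) = ∑ i ∈ A, w i • i by simp]
  have : dotp c (∑ i ∈ A, w i • i) = (IsLinearMap.mk' _ (isLinearMap_dotp c)) (∑ i ∈ A, w i • i) := rfl
  rw [this, map_sum]
  congr 1; ext y
  rw [map_smul]
  simp only [smul_eq_mul]; rfl

lemma faceSet_eq {A : Finset (Fin n → ℝ)} (hA : A.Nonempty) (c : Fin n → ℝ) :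
    faceSet c A = convexHull ℝ ((argmaxF c A : Finset (Fin n → ℝ)) : Set (Fin n → ℝ)) := by
  obtain ⟨z, hz⟩ := argmaxF_nonempty c hA
  have hzA : z ∈ A := argmaxF_subset c A hz
  have hzmax : ∀ w ∈ A, dotp c w ≤ dotp c z := (mem_argmaxF.1 hz).2
  set M := dotp c z with hM
  have hargval : ∀ v ∈ argmaxF c A, dotp c v = M := fun v hv => (argmaxF_const hv hz)
  apply Set.Subset.antisymm
  · rintro x ⟨hxP, hxmax⟩
    have hxM : dotp c x = M := by
      refine le_antisymm (dotp_le_of_mem_convexHull hxP hzmax) ?_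
      exact hxmax z (subset_convexHull ℝ _ hzA)
    rw [Finset.convexHull_eq] at hxP
    obtain ⟨w, hw0, hw1, hcm⟩ := hxP
    have hsupp : ∀ v ∈ A, w v ≠ 0 → v ∈ argmaxF c A := by
      intro v hv hwv
      by_contra hvarg
      have hvlt : dotp c v < M := by
        refine lt_of_le_of_ne (hzmax v hv) ?_
        intro heq
        exact hvarg (mem_argmaxF.2 ⟨hv, fun w' hw' => heq ▸ hzmax w' hw'⟩)
      have hlt : ∑ y ∈ A, w y * dotp c y < ∑ y ∈ A, w y * M := by
        refine Finset.sum_lt_sum (fun i hi => ?_) ⟨v, hv, ?_⟩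
        · exact mul_le_mul_of_nonneg_left (hzmax i hi) (hw0 i hi)
        · exact mul_lt_mul_of_pos_left hvlt (lt_of_le_of_ne (hw0 v hv) (Ne.symm hwv))
      rw [← Finset.sum_mul, hw1, one_mul] at hlt
      rw [← dotp_centerMass c A w hw1, hcm, hxM] at hlt
      exact lt_irrefl _ hlt
    classical
    have hcm2 : (A.filter fun y => w y ≠ 0).centerMass w id = x := by
      rw [Finset.centerMass_filter_ne_zero]; exact hcm
    have hsum2 : (0:ℝ) < ∑ y ∈ A.filter fun y => w y ≠ 0, w y := by
      rw [Finset.sum_filter_ne_zero]; rw [hw1]; norm_num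
    have hz2 : ∀ i ∈ A.filter fun y => w y ≠ 0,
        id i ∈ ((argmaxF c A : Finset (Fin n → ℝ)) : Set (Fin n → ℝ)) := by
      intro i hi
      have hi' := Finset.mem_filter.1 hi
      exact Finset.mem_coe.2 (hsupp i hi'.1 hi'.2)
    have := Finset.centerMass_mem_convexHull (A.filter fun y => w y ≠ 0)
      (fun i hi => hw0 i (Finset.mem_filter.1 hi).1) hsum2 hz2
    rw [hcm2] at this; exact this
  · intro y hy
    have hyP : y ∈ convexHull ℝ (A : Set (Fin n → ℝ)) :=
      convexHull_mono (Finset.coe_subset.2 (argmaxF_subset c A)) hy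
    have hyM : dotp c y = M := by
      exact le_antisymm
        (dotp_le_of_mem_convexHull hy (fun v hv => le_of_eq (hargval v hv)))
        (dotp_ge_of_mem_convexHull hy (fun v hv => ge_of_eq (hargval v hv)))
    exact ⟨hyP, fun z' hz' => by rw [hyM]; exact dotp_le_of_mem_convexHull hz' hzmax⟩

/-! ### Composing exposed faces: the shift trick -/

lemma exists_shift {A : Finset (Fin n → ℝ)} (hA : A.Nonempty) (a b : Fin n → ℝ) :
    ∃ e : Fin n → ℝ, argmaxF e A = argmaxF b (argmaxF a A) := by
  classical
  set A' := argmaxF a A with hA'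
  obtain ⟨z, hz⟩ := argmaxF_nonempty a hA
  have hzA : z ∈ A := argmaxF_subset a A hz
  set M := dotp a z with hMdef
  have hvalA' : ∀ v ∈ A', dotp a v = M := fun v hv => argmaxF_const hv hz
  have hltA' : ∀ v ∈ A, v ∉ A' → dotp a v < M := by
    intro v hv hv'
    refine lt_of_le_of_ne ((mem_argmaxF.1 hz).2 v hv) fun heq => hv' ?_
    exact mem_argmaxF.2 ⟨hv, fun w hw => heq ▸ (mem_argmaxF.1 hz).2 w hw⟩
  obtain ⟨bmax, hbmaxA, hbmax⟩ := A.exists_max_image (dotp b) hA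
  obtain ⟨bmin, hbminA, hbmin⟩ := A.exists_min_image (dotp b) hA
  by_cases hrest : (A \ A').Nonempty
  · obtain ⟨g, hgmem, hgmin⟩ := (A \ A').exists_min_image (fun v => M - dotp a v) hrest
    have hgm := Finset.mem_sdiff.1 hgmem
    have hgpos : 0 < M - dotp a g := by
      have := hltA' g hgm.1 hgm.2; linarith
    set N := (dotp b bmax - dotp b bmin) / (M - dotp a g) + 1 with hN
    have hq : 0 ≤ (dotp b bmax - dotp b bmin) / (M - dotp a g) :=
      div_nonneg (by linarith [hbmax bmin hbminA]) (le_of_lt hgpos)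
    have hNpos : 0 < N := by rw [hN]; linarith
    refine ⟨b + N • a, ?_⟩
    have key : ∀ x ∈ A', ∀ v ∈ A, v ∉ A' → dotp (b + N • a) v < dotp (b + N • a) x := by
      intro x hx v hv hv'
      rw [dotp_add_left, dotp_add_left, dotp_smul_left, dotp_smul_left, hvalA' x hx]
      have h1 : M - dotp a v ≥ M - dotp a g := by
        have := hgmin v (Finset.mem_sdiff.2 ⟨hv, hv'⟩); linarith
      have h2 : N * (M - dotp a g) > dotp b bmax - dotp b bmin := by
        rw [hN, add_mul, div_mul_cancel₀ _ (ne_of_gt hgpos)]; linarith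
      have h3 : dotp b x ≥ dotp b bmin := hbmin x (argmaxF_subset a A hx)
      have h4 : dotp b v ≤ dotp b bmax := hbmax v hv
      nlinarith [mul_le_mul_of_nonneg_left h1 (le_of_lt hNpos)]
    apply Finset.ext
    intro v
    rw [mem_argmaxF, mem_argmaxF]
    constructor
    · rintro ⟨hvA, hvmax⟩
      have hvA' : v ∈ A' := by
        by_contra hv'
        have := key z (mem_argmaxF.2 ⟨hzA, (mem_argmaxF.1 hz).2⟩) v hvA hv'
        have h2 := hvmax z hzA
        linarith
      refine ⟨hvA', fun w hw => ?_⟩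
      have hwA : w ∈ A := argmaxF_subset a A hw
      have := hvmax w hwA
      rw [dotp_add_left, dotp_add_left, dotp_smul_left, dotp_smul_left,
        hvalA' w hw, hvalA' v hvA'] at this
      linarith
    · rintro ⟨hvA', hvmax⟩
      have hvA : v ∈ A := argmaxF_subset a A hvA'
      refine ⟨hvA, fun w hw => ?_⟩
      by_cases hwA' : w ∈ A'
      · have := hvmax w hwA'
        rw [dotp_add_left, dotp_add_left, dotp_smul_left, dotp_smul_left,
          hvalA' w hwA', hvalA' v hvA']
        linarith
      · exact le_of_lt (key v hvA' w hw hwA')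
  · -- A' = A
    have hAA' : A' = A := by
      apply Finset.Subset.antisymm (argmaxF_subset a A)
      intro v hv
      by_contra hv'
      exact hrest ⟨v, Finset.mem_sdiff.2 ⟨hv, hv'⟩⟩
    exact ⟨b, by rw [hAA']⟩

/-! ### Extreme points and lifting -/

lemma mem_extremePoints_of_subset {B C : Set (Fin n → ℝ)} {v : Fin n → ℝ}
    (hv : v ∈ Set.extremePoints ℝ B) (hCB : C ⊆ B) (hvC : v ∈ C) :
    v ∈ Set.extremePoints ℝ C := by
  rw [mem_extremePoints] at hv ⊢
  exact ⟨hvC, fun x₁ h₁ x₂ h₂ hseg => hv.2 x₁ (hCB h₁) x₂ (hCB h₂) hseg⟩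

lemma extremePoints_convexHull_subset_finset {A' : Finset (Fin n → ℝ)} :
    Set.extremePoints ℝ (convexHull ℝ (A' : Set (Fin n → ℝ))) ⊆ (A' : Set (Fin n → ℝ)) :=
  extremePoints_convexHull_subset

lemma extreme_of_subset {A A' : Finset (Fin n → ℝ)}
    (hext : (A : Set (Fin n → ℝ)) = Set.extremePoints ℝ (convexHull ℝ (A : Set (Fin n → ℝ))))
    (hsub : A' ⊆ A) :
    (A' : Set (Fin n → ℝ)) = Set.extremePoints ℝ (convexHull ℝ (A' : Set (Fin n → ℝ))) := by
  apply Set.Subset.antisymm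
  · intro v hv
    have hvA : v ∈ (A : Set (Fin n → ℝ)) := Finset.coe_subset.2 hsub hv
    have hvext : v ∈ Set.extremePoints ℝ (convexHull ℝ (A : Set (Fin n → ℝ))) := hext ▸ hvA
    exact mem_extremePoints_of_subset hvext
      (convexHull_mono (Finset.coe_subset.2 hsub)) (subset_convexHull ℝ _ hv)
  · exact extremePoints_convexHull_subset

lemma isExposed_lift {A : Finset (Fin n → ℝ)} (hA : A.Nonempty) (a : Fin n → ℝ)
    {B : Set (Fin n → ℝ)} (hB : B.Nonempty)
    (hexp : IsExposed ℝ (convexHull ℝ ((argmaxF a A : Finset (Fin n → ℝ)) : Set (Fin n → ℝ))) B) :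
    IsExposed ℝ (convexHull ℝ (A : Set (Fin n → ℝ))) B := by
  obtain ⟨l, hl⟩ := hexp hB
  set b : Fin n → ℝ := fun i => l (fun j => if i = j then (1:ℝ) else 0) with hb
  have hbl : ∀ x, dotp b x = l x := fun x => dotp_of_clm l x
  have hBface : B = faceSet b (argmaxF a A) := by
    rw [hl]
    unfold faceSet
    ext x
    simp only [Set.mem_setOf_eq, hbl]
  obtain ⟨e, he⟩ := exists_shift hA a b
  have : B = faceSet e A := by
    rw [hBface, faceSet_eq (argmaxF_nonempty a hA) b, ← he, ← faceSet_eq hA e]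
  rw [this]
  exact isExposed_faceSet e A

lemma isEdgeOf_lift {A : Finset (Fin n → ℝ)} (hA : A.Nonempty) (a : Fin n → ℝ)
    (hext : (A : Set (Fin n → ℝ)) = Set.extremePoints ℝ (convexHull ℝ (A : Set (Fin n → ℝ))))
    {x y : Fin n → ℝ}
    (h : IsEdgeOf (convexHull ℝ ((argmaxF a A : Finset (Fin n → ℝ)) : Set (Fin n → ℝ))) x y) :
    IsEdgeOf (convexHull ℝ (A : Set (Fin n → ℝ))) x y := by
  obtain ⟨hxy, hxv, hyv, hexp⟩ := h
  have hextA' := extreme_of_subset hext (argmaxF_subset a A)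
  have hvert : ∀ z, IsVertexOf (convexHull ℝ ((argmaxF a A : Finset (Fin n → ℝ)) : Set (Fin n → ℝ))) z →
      IsVertexOf (convexHull ℝ (A : Set (Fin n → ℝ))) z := by
    intro z hz
    have : z ∈ (argmaxF a A : Set (Fin n → ℝ)) := hextA' ▸ hz
    have h2 : z ∈ (A : Set (Fin n → ℝ)) := Finset.coe_subset.2 (argmaxF_subset a A) this
    show z ∈ Set.extremePoints ℝ (convexHull ℝ (A : Set (Fin n → ℝ)))
    rw [← hext]; exact h2
  exact ⟨hxy, hvert x hxv, hvert y hyv,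
    isExposed_lift hA a ⟨x, left_mem_segment ℝ x y⟩ hexp⟩


/-! ### Generic vectors -/

lemma dotp_self_pos {w : Fin n → ℝ} (hw : w ≠ 0) : 0 < dotp w w := by
  have h1 : ∃ i, w i ≠ 0 := by
    by_contra h
    push_neg at h
    exact hw (funext h)
  obtain ⟨i, hi⟩ := h1
  have : ∀ j ∈ Finset.univ, 0 ≤ w j * w j := fun j _ => mul_self_nonneg _
  exact Finset.sum_pos' this ⟨i, Finset.mem_univ i, mul_self_pos.2 hi⟩

lemma exists_generic (W : Finset (Fin n → ℝ)) (hW : ∀ w ∈ W, w ≠ 0) :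
    ∃ a : Fin n → ℝ, ∀ w ∈ W, dotp a w ≠ 0 := by
  classical
  induction W using Finset.induction_on with
  | empty => exact ⟨0, fun w hw => absurd hw (Finset.notMem_empty w)⟩
  | @insert w₀ s hw₀s ih =>
    obtain ⟨a, ha⟩ := ih (fun w hw => hW w (Finset.mem_insert_of_mem hw))
    have hw₀ : w₀ ≠ 0 := hW w₀ (Finset.mem_insert_self w₀ s)
    have hd : 0 < dotp w₀ w₀ := dotp_self_pos hw₀
    set B : Finset ℝ :=
      insert (-(dotp a w₀) / dotp w₀ w₀) (s.image fun w => -(dotp a w) / dotp w₀ w) with hB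
    obtain ⟨t, ht⟩ := B.exists_notMem
    refine ⟨a + t • w₀, ?_⟩
    have hcomp : ∀ w : Fin n → ℝ, dotp (a + t • w₀) w = dotp a w + t * dotp w₀ w := by
      intro w; rw [dotp_add_left, dotp_smul_left]
    intro w hw
    rw [hcomp]
    rcases Finset.mem_insert.1 hw with rfl | hws
    · intro heq
      apply ht
      have hteq : t = -(dotp a w) / dotp w w := by
        field_simp
        linarith
      rw [hB, hteq]
      exact Finset.mem_insert_self _ _
    · intro heq
      by_cases h0 : dotp w₀ w = 0
      · rw [h0, mul_zero, add_zero] at heq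
        exact ha w hws heq
      · apply ht
        have hteq : t = -(dotp a w) / dotp w₀ w := by
          field_simp
          linarith
      
        rw [hB, hteq]
        exact Finset.mem_insert_of_mem (Finset.mem_image.2 ⟨w, hws, rfl⟩)

/-! ### No three collinear extreme points -/

lemma wvec_ne_zero {A : Finset (Fin n → ℝ)}
    (hext : (A : Set (Fin n → ℝ)) = Set.extremePoints ℝ (convexHull ℝ (A : Set (Fin n → ℝ))))
    (c : Fin n → ℝ) {x y z : Fin n → ℝ}
    (hx : x ∈ A) (hy : y ∈ A) (hz : z ∈ A)
    (hxy : x ≠ y) (hxz : x ≠ z) (hyz : y ≠ z)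
    (hc : dotp c x ≠ dotp c y) :
    (dotp c x - dotp c y) • (x - z) - (dotp c x - dotp c z) • (x - y) ≠ 0 := by
  intro hw
  set α := dotp c x - dotp c y with hα
  set β := dotp c x - dotp c z with hβ
  have hαne : α ≠ 0 := sub_ne_zero.2 hc
  set μ := β / α with hμ
  have hβμ : β = μ * α := by rw [hμ]; field_simp
  have hzxy : z = (1 - μ) • x + μ • y := by
    have h1 : α • (x - z) = β • (x - y) := by
      rw [sub_eq_zero] at hw; exact hw
    rw [hβμ] at h1
    have h2 : α • (x - z) = α • (μ • (x - y)) := by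
      rw [h1, smul_smul, mul_comm]
    have h3 : x - z = μ • (x - y) := smul_right_injective _ hαne h2
    have : z = x - μ • (x - y) := by rw [← h3]; abel
    rw [this, smul_sub, sub_smul, one_smul]; abel
  have hxC : x ∈ convexHull ℝ (A : Set (Fin n → ℝ)) := subset_convexHull ℝ _ hx
  have hyC : y ∈ convexHull ℝ (A : Set (Fin n → ℝ)) := subset_convexHull ℝ _ hy
  have hzC : z ∈ convexHull ℝ (A : Set (Fin n → ℝ)) := subset_convexHull ℝ _ hz
  obtain ⟨-, hxe⟩ := mem_extremePoints.1 (show x ∈ Set.extremePoints ℝ (convexHull ℝ (A : Set (Fin n → ℝ))) from hext ▸ (Finset.mem_coe.2 hx))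
  obtain ⟨-, hye⟩ := mem_extremePoints.1 (show y ∈ Set.extremePoints ℝ (convexHull ℝ (A : Set (Fin n → ℝ))) from hext ▸ (Finset.mem_coe.2 hy))
  obtain ⟨-, hze⟩ := mem_extremePoints.1 (show z ∈ Set.extremePoints ℝ (convexHull ℝ (A : Set (Fin n → ℝ))) from hext ▸ (Finset.mem_coe.2 hz))
  rcases lt_trichotomy μ 0 with hμ0 | hμ0 | hμ0
  · -- x ∈ openSegment z y
    have h1μ : (0:ℝ) < 1 - μ := by linarith
    have hxseg : x ∈ openSegment ℝ z y := by
      refine ⟨1 / (1 - μ), -μ / (1 - μ), by positivity,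
        div_pos (by linarith) h1μ, by field_simp; ring, ?_⟩
      rw [hzxy]
      match_scalars <;> field_simp <;> ring
    obtain ⟨h1, -⟩ := hxe z hzC y hyC hxseg
    exact hxz h1.symm
  · rw [hμ0, zero_smul, sub_zero, add_zero, one_smul] at hzxy
    exact hxz hzxy.symm
  · rcases lt_trichotomy μ 1 with hμ1 | hμ1 | hμ1
    · have hzseg : z ∈ openSegment ℝ x y :=
        ⟨1 - μ, μ, by linarith, hμ0, by ring, hzxy.symm⟩
      obtain ⟨h1, -⟩ := hze x hxC y hyC hzseg
      exact hxz h1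
    · rw [hμ1, one_smul] at hzxy
      rw [sub_self, zero_smul, zero_add] at hzxy
      exact hyz hzxy.symm
    · -- y ∈ openSegment x z
      have hμpos : (0:ℝ) < μ := by linarith
      have hyseg : y ∈ openSegment ℝ x z := by
        have hi1 : 1/μ < 1 := by rw [div_lt_one hμpos]; exact hμ1
        refine ⟨1 - 1/μ, 1/μ, by linarith, by positivity, by ring, ?_⟩
        rw [hzxy]
        match_scalars <;> field_simp <;> ring
      obtain ⟨h1, -⟩ := hye x hxC z hzC hyseg
      exact hxy h1


/-! ### Path constructions -/

lemma path_single {P : Set (Fin n → ℝ)} {c y : Fin n → ℝ} (hy : IsVertexOf P y) :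
    IsMonotonePath P c 0 (fun _ => y) :=
  ⟨fun _ => hy, fun i => i.elim0⟩

lemma path_cons {P : Set (Fin n → ℝ)} {c : Fin n → ℝ} {m : ℕ} {p : Fin (m + 1) → (Fin n → ℝ)}
    (h : IsMonotonePath P c m p) {y : Fin n → ℝ}
    (he : IsEdgeOf P y (p 0)) (hlt : dotp c y < dotp c (p 0)) :
    IsMonotonePath P c (m + 1) (Fin.cons y p) ∧ (Fin.cons y p : Fin (m+2) → (Fin n → ℝ)) 0 = y ∧
      (Fin.cons y p : Fin (m+2) → (Fin n → ℝ)) (Fin.last (m+1)) = p (Fin.last m) := by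
  have hy : IsVertexOf P y := he.2.1
  refine ⟨⟨?_, ?_⟩, rfl, ?_⟩
  · intro i
    refine Fin.cases ?_ ?_ i
    · exact hy
    · intro j; exact h.1 j
  · intro i
    refine Fin.cases ?_ ?_ i
    · simpa using ⟨he, hlt⟩
    · intro j
      rw [← Fin.succ_castSucc]
      simp only [Fin.cons_succ]
      exact h.2 j
  · rw [← Fin.succ_last]
    simp only [Fin.cons_succ]

lemma path_snoc {P : Set (Fin n → ℝ)} {c : Fin n → ℝ} {m : ℕ} {p : Fin (m + 1) → (Fin n → ℝ)}
    (h : IsMonotonePath P c m p) {x : Fin n → ℝ}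
    (he : IsEdgeOf P (p (Fin.last m)) x) (hlt : dotp c (p (Fin.last m)) < dotp c x) :
    IsMonotonePath P c (m + 1) (Fin.snoc p x) ∧ (Fin.snoc p x : Fin (m+2) → (Fin n → ℝ)) 0 = p 0 ∧
      (Fin.snoc p x : Fin (m+2) → (Fin n → ℝ)) (Fin.last (m+1)) = x := by
  have hx : IsVertexOf P x := he.2.2.1
  refine ⟨⟨?_, ?_⟩, ?_, by simp⟩
  · intro i
    refine Fin.lastCases ?_ ?_ i
    · simpa using hx
    · intro j; simpa using h.1 j
  · intro i
    refine Fin.lastCases ?_ ?_ i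
    · rw [Fin.succ_last]
      simp only [Fin.snoc_castSucc, Fin.snoc_last]
      exact ⟨he, hlt⟩
    · intro j
      rw [Fin.succ_castSucc]
      simp only [Fin.snoc_castSucc]
      exact h.2 j
  · have h0 : ((0 : Fin (m+2))) = (0 : Fin (m+1)).castSucc := by simp
    rw [h0]
    simp only [Fin.snoc_castSucc]

/-! ### Parametric argmax machinery -/

lemma dotp_param (f c : Fin n → ℝ) (t : ℝ) (v : Fin n → ℝ) :
    dotp (f + t • c) v = dotp f v + t * dotp c v := by
  rw [dotp_add_left, dotp_smul_left]

/-- Stability: strict non-maximizers at time `T` remain beaten by `z` a bit later. -/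
lemma stab {A : Finset (Fin n → ℝ)} (f c : Fin n → ℝ) (T : ℝ) {z : Fin n → ℝ}
    (hz : z ∈ argmaxF (f + T • c) A) :
    ∃ δ : ℝ, 0 < δ ∧ ∀ v ∈ A, v ∉ argmaxF (f + T • c) A →
      dotp (f + (T + δ) • c) v < dotp (f + (T + δ) • c) z := by
  classical
  have hzA : z ∈ A := argmaxF_subset _ A hz
  have hzmax := (mem_argmaxF.1 hz).2
  set R := A \ argmaxF (f + T • c) A with hR
  by_cases hRne : R.Nonempty
  · set δfun : (Fin n → ℝ) → ℝ :=
      fun v => (dotp (f + T • c) z - dotp (f + T • c) v) / (|dotp c z - dotp c v| + 1) with hδfun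
    have hδpos : ∀ v ∈ R, 0 < δfun v := by
      intro v hv
      have hv' := Finset.mem_sdiff.1 hv
      have hlt : dotp (f + T • c) v < dotp (f + T • c) z := by
        refine lt_of_le_of_ne (hzmax v hv'.1) fun heq => hv'.2 ?_
        exact mem_argmaxF.2 ⟨hv'.1, fun w hw => heq ▸ hzmax w hw⟩
      have : (0:ℝ) < |dotp c z - dotp c v| + 1 := by positivity
      exact div_pos (by linarith) this
    obtain ⟨v₀, hv₀, hmin⟩ := R.exists_min_image δfun hRne
    refine ⟨δfun v₀ / 2, by linarith [hδpos v₀ hv₀], ?_⟩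
    intro v hvA hvS
    have hvR : v ∈ R := Finset.mem_sdiff.2 ⟨hvA, hvS⟩
    have h1 : δfun v₀ / 2 ≤ δfun v / 2 := by linarith [hmin v hvR]
    have hm : dotp (f + T • c) v < dotp (f + T • c) z := by
      have hv' := Finset.mem_sdiff.1 hvR
      refine lt_of_le_of_ne (hzmax v hv'.1) fun heq => hv'.2 ?_
      exact mem_argmaxF.2 ⟨hv'.1, fun w hw => heq ▸ hzmax w hw⟩
    rw [dotp_param, dotp_param]
    rw [mem_argmaxF] at hz
    have hTz := dotp_param f c T z
    have hTv := dotp_param f c T v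
    -- goal: dotp f v + (T+δ) dcv < dotp f z + (T+δ) dcz
    have habs : |dotp c z - dotp c v| + 1 > 0 := by positivity
    have hkey : δfun v * (|dotp c z - dotp c v| + 1) = dotp (f + T • c) z - dotp (f + T • c) v := by
      rw [hδfun]; field_simp
    have hbound : (δfun v₀ / 2) * (dotp c v - dotp c z) < dotp (f + T • c) z - dotp (f + T • c) v := by
      have h2 : dotp c v - dotp c z ≤ |dotp c z - dotp c v| := by
        rw [abs_sub_comm]; exact le_abs_self _
      have h3 : (δfun v₀ / 2) * (dotp c v - dotp c z) ≤ (δfun v / 2) * |dotp c z - dotp c v| := by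
        rcases le_or_gt (dotp c v - dotp c z) 0 with hle | hlt
        · have : (δfun v₀ / 2) * (dotp c v - dotp c z) ≤ 0 :=
            mul_nonpos_of_nonneg_of_nonpos (by linarith [hδpos v₀ hv₀]) hle
          have : (0:ℝ) ≤ (δfun v / 2) * |dotp c z - dotp c v| :=
            mul_nonneg (by linarith [hδpos v hvR]) (abs_nonneg _)
          linarith
        · calc (δfun v₀ / 2) * (dotp c v - dotp c z) ≤ (δfun v / 2) * (dotp c v - dotp c z) :=
              mul_le_mul_of_nonneg_right h1 (le_of_lt hlt)
            _ ≤ (δfun v / 2) * |dotp c z - dotp c v| :=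
              mul_le_mul_of_nonneg_left h2 (by linarith [hδpos v hvR])
      have h4 : (δfun v / 2) * |dotp c z - dotp c v| < δfun v * (|dotp c z - dotp c v| + 1) := by
        have hδv := hδpos v hvR
        nlinarith [abs_nonneg (dotp c z - dotp c v)]
      linarith [hkey ▸ h4, h3]
    rw [hTz, hTv] at hbound
    ring_nf
    ring_nf at hbound
    linarith [hbound]
  · refine ⟨1, one_pos, ?_⟩
    intro v hvA hvS
    exact absurd (Finset.mem_sdiff.2 ⟨hvA, hvS⟩) (by rw [← hR]; exact fun h => hRne ⟨v, h⟩)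

/-- Persistence: a `c`-maximal element of the face at time `s` stays maximal slightly later. -/
lemma pers {A : Finset (Fin n → ℝ)} (f c : Fin n → ℝ) {y : Fin n → ℝ} (s : ℝ)
    (hy : y ∈ argmaxF (f + s • c) A)
    (hmax : ∀ w ∈ argmaxF (f + s • c) A, dotp c w ≤ dotp c y) :
    ∃ s' : ℝ, s < s' ∧ y ∈ argmaxF (f + s' • c) A := by
  obtain ⟨δ, hδ, hst⟩ := stab f c s hy
  refine ⟨s + δ, by linarith, ?_⟩
  have hyA : y ∈ A := argmaxF_subset _ A hy
  refine mem_argmaxF.2 ⟨hyA, fun w hw => ?_⟩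
  by_cases hwS : w ∈ argmaxF (f + s • c) A
  · have h1 : dotp (f + s • c) w = dotp (f + s • c) y := argmaxF_const hwS hy
    have h2 : dotp c w ≤ dotp c y := hmax w hwS
    rw [dotp_param, dotp_param]
    rw [dotp_param, dotp_param] at h1
    nlinarith [h2, hδ]
  · exact le_of_lt (hst w hw hwS)

lemma supface {A : Finset (Fin n → ℝ)} (hA : A.Nonempty) (f c : Fin n → ℝ) {y v' : Fin n → ℝ}
    (s : ℝ) (hys : y ∈ argmaxF (f + s • c) A) (hv' : v' ∈ A) (himp : dotp c y < dotp c v') :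
    ∃ T t₀ : ℝ, s ≤ T ∧ T < t₀ ∧ y ∈ argmaxF (f + T • c) A ∧ y ∉ argmaxF (f + t₀ • c) A ∧
      argmaxF (f + t₀ • c) A ⊆ argmaxF (f + T • c) A ∧ (argmaxF (f + t₀ • c) A).Nonempty ∧
      ∀ x ∈ argmaxF (f + t₀ • c) A, dotp c y < dotp c x := by
  classical
  have hyA : y ∈ A := argmaxF_subset _ A hys
  -- interval property
  have hint : ∀ t₁ t₂ t : ℝ, t₁ ≤ t → t ≤ t₂ →
      y ∈ argmaxF (f + t₁ • c) A → y ∈ argmaxF (f + t₂ • c) A → y ∈ argmaxF (f + t • c) A := by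
    intro t₁ t₂ t h1t h2t hy1 hy2
    refine mem_argmaxF.2 ⟨hyA, fun w hw => ?_⟩
    have e1 := (mem_argmaxF.1 hy1).2 w hw
    have e2 := (mem_argmaxF.1 hy2).2 w hw
    rw [dotp_param, dotp_param] at e1 e2 ⊢
    rcases le_or_gt (dotp c w) (dotp c y) with hc | hc
    · nlinarith [mul_le_mul_of_nonneg_left hc (sub_nonneg.2 h1t)]
    · nlinarith [mul_le_mul_of_nonneg_left (le_of_lt hc) (sub_nonneg.2 h2t)]
  set 𝒯 : Set ℝ := {t | s ≤ t ∧ y ∈ argmaxF (f + t • c) A} with h𝒯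
  have h𝒯ne : 𝒯.Nonempty := ⟨s, le_refl s, hys⟩
  have hgap : 0 < dotp c v' - dotp c y := by linarith
  set tb : ℝ := max s ((dotp f y - dotp f v') / (dotp c v' - dotp c y)) + 1 with htb
  have htbs : s ≤ tb := by
    rw [htb]
    have := le_max_left s ((dotp f y - dotp f v') / (dotp c v' - dotp c y)); linarith
  have hnb : y ∉ argmaxF (f + tb • c) A := by
    intro hmem
    have := (mem_argmaxF.1 hmem).2 v' hv'
    rw [dotp_param, dotp_param] at this
    have hq : (dotp f y - dotp f v') / (dotp c v' - dotp c y) < tb := by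
      have := le_max_right s ((dotp f y - dotp f v') / (dotp c v' - dotp c y)); linarith
    rw [div_lt_iff₀ hgap] at hq
    nlinarith
  have hbdd : ∀ t' ∈ 𝒯, t' ≤ tb := by
    intro t' ht'
    by_contra hcon
    push_neg at hcon
    exact hnb (hint s t' tb htbs (le_of_lt hcon) hys ht'.2)
  have hbddAbove : BddAbove 𝒯 := ⟨tb, fun t' ht' => hbdd t' ht'⟩
  set T := sSup 𝒯 with hT
  have hsT : s ≤ T := le_csSup hbddAbove ⟨le_refl s, hys⟩
  have hyT : y ∈ argmaxF (f + T • c) A := by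
    by_contra hnot
    have : ∃ w ∈ A, dotp (f + T • c) y < dotp (f + T • c) w := by
      by_contra hno
      push_neg at hno
      exact hnot (mem_argmaxF.2 ⟨hyA, fun w hw => hno w hw⟩)
    obtain ⟨w, hwA, hwlt⟩ := this
    rw [dotp_param, dotp_param] at hwlt
    set D := dotp c y - dotp c w with hD
    set hTval : ℝ := (dotp f y - dotp f w) + T * D with hTvaldef
    have hTneg : hTval < 0 := by rw [hTvaldef, hD]; ring_nf; ring_nf at hwlt; linarith
    set η := (-hTval) / (2 * (|D| + 1)) with hη
    have hDpos : (0:ℝ) < |D| + 1 := by positivity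
    have hηpos : 0 < η := by
      rw [hη]; apply div_pos (by linarith) (by linarith)
    obtain ⟨t', ht'mem, ht'gt⟩ := exists_lt_of_lt_csSup h𝒯ne (show T - η < T by linarith)
    have ht'le : t' ≤ T := le_csSup hbddAbove ht'mem
    have ht'v : dotp (f + t' • c) w ≤ dotp (f + t' • c) y := (mem_argmaxF.1 ht'mem.2).2 w hwA
    rw [dotp_param, dotp_param] at ht'v
    have hexp : (dotp f y - dotp f w) + t' * D ≥ 0 := by rw [hD]; ring_nf; ring_nf at ht'v; linarith
    have habs1 : (t' - T) * D ≤ |t' - T| * |D| := by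
      calc (t' - T) * D ≤ |(t' - T) * D| := le_abs_self _
        _ = |t' - T| * |D| := abs_mul _ _
    have habs2 : |t' - T| ≤ η := by
      rw [abs_le]; constructor <;> linarith
    have habs3 : |t' - T| * |D| ≤ η * |D| :=
      mul_le_mul_of_nonneg_right habs2 (abs_nonneg _)
    have habs4 : η * |D| ≤ η * (|D| + 1) :=
      mul_le_mul_of_nonneg_left (by linarith) (le_of_lt hηpos)
    have heq : η * (|D| + 1) = -hTval / 2 := by
      rw [hη]; field_simp
    have hlast : (t' - T) * D = t' * D - T * D := by ring
    nlinarith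
  obtain ⟨z, hz⟩ := argmaxF_nonempty (f + T • c) hA
  obtain ⟨δ, hδpos, hδ⟩ := stab f c T hz
  set t₀ := T + δ with ht₀
  have hTt₀ : T < t₀ := by rw [ht₀]; linarith
  have hsub : argmaxF (f + t₀ • c) A ⊆ argmaxF (f + T • c) A := by
    intro v hv
    by_contra hvT
    have h1 := hδ v (argmaxF_subset _ A hv) hvT
    have h2 := (mem_argmaxF.1 hv).2 z (argmaxF_subset _ A hz)
    rw [ht₀] at h2
    linarith
  have hyt₀ : y ∉ argmaxF (f + t₀ • c) A := by
    intro hmem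
    have : t₀ ∈ 𝒯 := ⟨by linarith, hmem⟩
    have : t₀ ≤ T := le_csSup hbddAbove this
    linarith
  have hne₀ : (argmaxF (f + t₀ • c) A).Nonempty := argmaxF_nonempty _ hA
  refine ⟨T, t₀, hsT, hTt₀, hyT, hyt₀, hsub, hne₀, ?_⟩
  intro x hx
  have hxT : x ∈ argmaxF (f + T • c) A := hsub hx
  have hxA : x ∈ A := argmaxF_subset _ A hx
  have e1 : dotp (f + t₀ • c) y ≤ dotp (f + t₀ • c) x := (mem_argmaxF.1 hx).2 y hyA
  have e2 : dotp (f + T • c) x ≤ dotp (f + T • c) y := (mem_argmaxF.1 hyT).2 x hxA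
  rw [dotp_param, dotp_param] at e1 e2
  have hcx : dotp c y ≤ dotp c x := by nlinarith
  rcases lt_or_eq_of_le hcx with h | h
  · exact h
  · exfalso
    apply hyt₀
    refine mem_argmaxF.2 ⟨hyA, fun w hw => ?_⟩
    have e3 := (mem_argmaxF.1 hx).2 w hw
    simp only [dotp_param] at e3 ⊢
    rw [← h] at e2 e3
    linarith

/-! ### Improving neighbor -/

lemma improving_neighbor {A : Finset (Fin n → ℝ)} (hA : A.Nonempty)
    (hext : (A : Set (Fin n → ℝ)) = Set.extremePoints ℝ (convexHull ℝ (A : Set (Fin n → ℝ))))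
    {c u v' : Fin n → ℝ} (hu : u ∈ A) (hv' : v' ∈ A) (himp : dotp c u < dotp c v') :
    ∃ x ∈ A, dotp c u < dotp c x ∧ IsEdgeOf (convexHull ℝ (A : Set (Fin n → ℝ))) u x := by
  classical
  -- u is not in the hull of the others
  have hv'u : v' ≠ u := fun h => absurd himp (by rw [h]; exact lt_irrefl _)
  have herne : (A.erase u).Nonempty := ⟨v', Finset.mem_erase.2 ⟨hv'u, hv'⟩⟩
  have notu : u ∉ convexHull ℝ ((A.erase u : Finset (Fin n → ℝ)) : Set (Fin n → ℝ)) := by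
    intro hmem
    have h1 : u ∈ Set.extremePoints ℝ (convexHull ℝ (A : Set (Fin n → ℝ))) :=
      hext ▸ (Finset.mem_coe.2 hu)
    have h2 := mem_extremePoints_of_subset h1
      (convexHull_mono (Finset.coe_subset.2 (Finset.erase_subset u A))) hmem
    have h3 : u ∈ ((A.erase u : Finset (Fin n → ℝ)) : Set (Fin n → ℝ)) :=
      extremePoints_convexHull_subset h2
    exact Finset.notMem_erase u A (Finset.mem_coe.1 h3)
  -- separating functional
  obtain ⟨l, r, hlr, hru⟩ := geometric_hahn_banach_closed_point
    (convex_convexHull ℝ _) ((A.erase u).finite_toSet.isClosed_convexHull ℝ) notu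
  set g : Fin n → ℝ := fun i => l (fun j => if i = j then (1:ℝ) else 0) with hgdef
  have hgl : ∀ x, dotp g x = l x := fun x => dotp_of_clm l x
  have hg : ∀ v ∈ A, v ≠ u → dotp g v < dotp g u := by
    intro v hvA hvu
    rw [hgl, hgl]
    have : v ∈ convexHull ℝ ((A.erase u : Finset (Fin n → ℝ)) : Set (Fin n → ℝ)) :=
      subset_convexHull ℝ _ (Finset.mem_coe.2 (Finset.mem_erase.2 ⟨hvu, hvA⟩))
    exact lt_trans (hlr v this) hru
  -- generic direction a
  set wv : (Fin n → ℝ) × ((Fin n → ℝ) × (Fin n → ℝ)) → (Fin n → ℝ) :=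
    fun p => (dotp c p.1 - dotp c p.2.1) • (p.1 - p.2.2) -
             (dotp c p.1 - dotp c p.2.2) • (p.1 - p.2.1) with hwv
  set W₁ : Finset (Fin n → ℝ) :=
    ((A ×ˢ A).filter (fun p => p.1 ≠ p.2)).image (fun p => p.1 - p.2) with hW₁
  set W₂ : Finset (Fin n → ℝ) := ((A ×ˢ (A ×ˢ A)).image wv).filter (· ≠ 0) with hW₂
  set W : Finset (Fin n → ℝ) := (W₁ ∪ W₂).filter (· ≠ 0) with hW
  obtain ⟨a, ha⟩ := exists_generic W (fun w hw => (Finset.mem_filter.1 hw).2)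
  have ha_pairs : ∀ v w, v ∈ A → w ∈ A → v ≠ w → dotp a (v - w) ≠ 0 := by
    intro v w hvA hwA hvw
    apply ha
    rw [hW]
    refine Finset.mem_filter.2 ⟨Finset.mem_union_left _ ?_, sub_ne_zero.2 hvw⟩
    rw [hW₁]
    exact Finset.mem_image.2 ⟨(v, w),
      Finset.mem_filter.2 ⟨Finset.mem_product.2 ⟨hvA, hwA⟩, hvw⟩, rfl⟩
  have ha_wvec : ∀ x y z, x ∈ A → y ∈ A → z ∈ A → wv (x, (y, z)) ≠ 0 →
      dotp a (wv (x, (y, z))) ≠ 0 := by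
    intro x y z hx hy hz hne
    apply ha
    rw [hW]
    refine Finset.mem_filter.2 ⟨Finset.mem_union_right _ ?_, hne⟩
    rw [hW₂]
    refine Finset.mem_filter.2 ⟨?_, hne⟩
    exact Finset.mem_image.2 ⟨(x, (y, z)),
      Finset.mem_product.2 ⟨hx, Finset.mem_product.2 ⟨hy, hz⟩⟩, rfl⟩
  -- bad epsilon values
  set Bad₁ : Finset ℝ := ((A ×ˢ A).filter (fun p => p.1 ≠ p.2)).image
    (fun p => -(dotp g (p.1 - p.2)) / dotp a (p.1 - p.2)) with hBad₁
  set Bad₂ : Finset ℝ := (A ×ˢ (A ×ˢ A)).image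
    (fun p => -((dotp c p.1 - dotp c p.2.1) * (dotp g p.1 - dotp g p.2.2) -
        (dotp c p.1 - dotp c p.2.2) * (dotp g p.1 - dotp g p.2.1)) / dotp a (wv p)) with hBad₂
  set Bad := Bad₁ ∪ Bad₂ with hBad
  -- margin
  set m : ℝ := (A.erase u).inf' herne
    (fun v => (dotp g u - dotp g v) / (|dotp a (u - v)| + 1)) with hm
  have hmpos : 0 < m := by
    rw [hm, Finset.lt_inf'_iff]
    intro v hv
    have hv' := Finset.mem_erase.1 hv
    have h1 : 0 < dotp g u - dotp g v := by
      have := hg v hv'.2 hv'.1; linarith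
    positivity
  -- choose epsilon
  have hinf : (Set.Ioo (0:ℝ) m \ (Bad : Set ℝ)).Infinite :=
    (Set.Ioo_infinite hmpos).diff (Bad.finite_toSet)
  obtain ⟨ε, hε⟩ := hinf.nonempty
  obtain ⟨⟨hε0, hεm⟩, hεBad⟩ := hε
  set g' : Fin n → ℝ := g + ε • a with hg'def
  have hg'v : ∀ p, dotp g' p = dotp g p + ε * dotp a p := by
    intro p; rw [hg'def, dotp_add_left, dotp_smul_left]
  -- P1 : strict exposure of u by g'
  have hP1 : ∀ v ∈ A, v ≠ u → dotp g' v < dotp g' u := by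
    intro v hvA hvu
    have hvm : v ∈ A.erase u := Finset.mem_erase.2 ⟨hvu, hvA⟩
    have hmv : m ≤ (dotp g u - dotp g v) / (|dotp a (u - v)| + 1) := by
      rw [hm]; exact Finset.inf'_le _ hvm
    have hd : (0:ℝ) < |dotp a (u - v)| + 1 := by positivity
    have h1 : ε * (|dotp a (u - v)| + 1) < dotp g u - dotp g v := by
      have h2 : ε < (dotp g u - dotp g v) / (|dotp a (u - v)| + 1) := lt_of_lt_of_le hεm hmv
      calc ε * (|dotp a (u - v)| + 1)
          < ((dotp g u - dotp g v) / (|dotp a (u - v)| + 1)) * (|dotp a (u - v)| + 1) :=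
            mul_lt_mul_of_pos_right h2 hd
        _ = dotp g u - dotp g v := by field_simp
    have h3 : -(ε * dotp a (u - v)) ≤ ε * |dotp a (u - v)| := by
      rw [← mul_neg]
      exact mul_le_mul_of_nonneg_left (neg_le_abs _) (le_of_lt hε0)
    have h4 : ε * |dotp a (u - v)| ≤ ε * (|dotp a (u - v)| + 1) :=
      mul_le_mul_of_nonneg_left (by linarith) (le_of_lt hε0)
    have h5 : dotp a (u - v) = dotp a u - dotp a v := dotp_sub_right a u v
    have h6 : dotp g (u - v) = dotp g u - dotp g v := dotp_sub_right g u v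
    rw [hg'v, hg'v]
    rw [h5] at h1 h3 h4
    nlinarith
  -- P2 : injectivity of g' on A
  have hP2 : ∀ v w, v ∈ A → w ∈ A → v ≠ w → dotp g' v ≠ dotp g' w := by
    intro v w hvA hwA hvw heq
    apply hεBad
    rw [hBad]
    apply Finset.mem_union_left
    rw [hBad₁]
    refine Finset.mem_image.2 ⟨(v, w),
      Finset.mem_filter.2 ⟨Finset.mem_product.2 ⟨hvA, hwA⟩, hvw⟩, ?_⟩
    have hda := ha_pairs v w hvA hwA hvw
    rw [eq_comm, eq_div_iff hda]
    have h1 := hg'v v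
    have h2 := hg'v w
    have h3 : dotp a (v - w) = dotp a v - dotp a w := dotp_sub_right a v w
    have h4 : dotp g (v - w) = dotp g v - dotp g w := dotp_sub_right g v w
    rw [h3, h4]
    nlinarith
  -- P3 : no triple ties for distinct c-values
  have hP3 : ∀ x y z, x ∈ A → y ∈ A → z ∈ A → x ≠ y → x ≠ z → y ≠ z →
      dotp c x ≠ dotp c y →
      (dotp c x - dotp c y) * (dotp g' x - dotp g' z) -
        (dotp c x - dotp c z) * (dotp g' x - dotp g' y) ≠ 0 := by
    intro x y z hx hy hz hxy hxz hyz hcxy habs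
    have hw0 : wv (x, (y, z)) ≠ 0 := by
      rw [hwv]
      exact wvec_ne_zero hext c hx hy hz hxy hxz hyz hcxy
    have hda := ha_wvec x y z hx hy hz hw0
    apply hεBad
    rw [hBad]
    apply Finset.mem_union_right
    rw [hBad₂]
    refine Finset.mem_image.2 ⟨(x, (y, z)),
      Finset.mem_product.2 ⟨hx, Finset.mem_product.2 ⟨hy, hz⟩⟩, ?_⟩
    rw [eq_comm, eq_div_iff hda]
    have hexp : dotp a (wv (x, (y, z))) =
        (dotp c x - dotp c y) * (dotp a x - dotp a z) -
        (dotp c x - dotp c z) * (dotp a x - dotp a y) := by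
      rw [hwv]
      simp only [dotp_sub_right, dotp_smul_right]
    rw [hexp]
    have e1 := hg'v x
    have e2 := hg'v y
    have e3 := hg'v z
    rw [e1, e2, e3] at habs
    ring_nf
    ring_nf at habs
    linarith
  -- start the parametric sweep at t = 0
  clear_value g'
  have hu0 : u ∈ argmaxF (g' + (0:ℝ) • c) A := by
    refine mem_argmaxF.2 ⟨hu, fun w hw => ?_⟩
    simp only [dotp_param]
    by_cases hwu : w = u
    · rw [hwu]
    · have := hP1 w hw hwu; linarith
  obtain ⟨T, t₀, hsT, hTt₀, hyT, hyt₀, hsub, hne₀, hstrict⟩ :=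
    supface hA g' c 0 hu0 hv' himp
  obtain ⟨x, hx⟩ := hne₀
  have hxA : x ∈ A := argmaxF_subset _ A hx
  have hcux : dotp c u < dotp c x := hstrict x hx
  have hxu : x ≠ u := fun h => absurd hcux (by rw [h]; exact lt_irrefl _)
  have hxT : x ∈ argmaxF (g' + T • c) A := hsub hx
  -- T > 0
  have hTpos : 0 < T := by
    rcases lt_or_eq_of_le hsT with h | h
    · exact h
    · exfalso
      have h1 := (mem_argmaxF.1 hxT).2 u hu
      rw [← h] at h1
      simp only [dotp_param] at h1
      have h2 := hP1 x hxA hxu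
      linarith
  -- the face at time T is exactly {u, x}
  have hface : argmaxF (g' + T • c) A = {u, x} := by
    apply Finset.Subset.antisymm
    · intro z' hz'
      by_contra hz'ne
      rw [Finset.mem_insert, Finset.mem_singleton] at hz'ne
      push_neg at hz'ne
      obtain ⟨hz'u, hz'x⟩ := hz'ne
      have hz'A : z' ∈ A := argmaxF_subset _ A hz'
      have eq1 : dotp (g' + T • c) u = dotp (g' + T • c) z' := argmaxF_const hyT hz'
      have eq2 : dotp (g' + T • c) u = dotp (g' + T • c) x := argmaxF_const hyT hxT
      simp only [dotp_param] at eq1 eq2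
      by_cases hcuz : dotp c u = dotp c z'
      · have : dotp g' u = dotp g' z' := by rw [hcuz] at eq1; linarith
        exact hP2 u z' hu hz'A (Ne.symm hz'u) this
      · by_cases hcxz : dotp c x = dotp c z'
        · have : dotp g' x = dotp g' z' := by rw [hcxz] at eq2; linarith
          exact hP2 x z' hxA hz'A (Ne.symm hz'x) this
        · have hd := hP3 u x z' hu hxA hz'A (Ne.symm hxu) (Ne.symm hz'u)
            (fun h => hz'x h.symm) (ne_of_lt hcux)
          apply hd
          linear_combination (dotp c u - dotp c x) * eq1 - (dotp c u - dotp c z') * eq2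
    · intro z' hz'
      rw [Finset.mem_insert, Finset.mem_singleton] at hz'
      rcases hz' with rfl | rfl
      · exact hyT
      · exact hxT
  -- conclude: the segment [u,x] is an exposed face
  have hvu : IsVertexOf (convexHull ℝ (A : Set (Fin n → ℝ))) u := by
    show u ∈ Set.extremePoints ℝ (convexHull ℝ (A : Set (Fin n → ℝ)))
    rw [← hext]; exact Finset.mem_coe.2 hu
  have hvx : IsVertexOf (convexHull ℝ (A : Set (Fin n → ℝ))) x := by
    show x ∈ Set.extremePoints ℝ (convexHull ℝ (A : Set (Fin n → ℝ)))
    rw [← hext]; exact Finset.mem_coe.2 hxA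
  refine ⟨x, hxA, hcux, Ne.symm hxu, hvu, hvx, ?_⟩
  have hseg : segment ℝ u x = faceSet (g' + T • c) A := by
    rw [faceSet_eq hA, hface]
    have : (({u, x} : Finset (Fin n → ℝ)) : Set (Fin n → ℝ)) = {u, x} := by
      simp
    rw [this, convexHull_pair]
  rw [hseg]
  exact isExposed_faceSet _ A

/-! ### The monotone sweep (phase 2) -/

lemma sweep_step {A : Finset (Fin n → ℝ)} (hA : A.Nonempty)
    (hext : (A : Set (Fin n → ℝ)) = Set.extremePoints ℝ (convexHull ℝ (A : Set (Fin n → ℝ))))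
    (c f : Fin n → ℝ) {y v' : Fin n → ℝ} (hyA : y ∈ A) (hv' : v' ∈ A)
    (himp : dotp c y < dotp c v') {s : ℝ} (hs : 0 < s)
    (hys : y ∈ argmaxF (f + s • c) A) :
    ∃ (x' : Fin n → ℝ) (T : ℝ), 0 < T ∧ x' ∈ argmaxF (f + T • c) A ∧ x' ∈ A ∧
      dotp c y < dotp c x' ∧ IsEdgeOf (convexHull ℝ (A : Set (Fin n → ℝ))) y x' ∧
      dotp f x' < dotp f y := by
  obtain ⟨T, t₀, hsT, hTt₀, hyT, hyt₀, hsub, hne₀, hstrict⟩ := supface hA f c s hys hv' himp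
  have hTpos : 0 < T := lt_of_lt_of_le hs hsT
  obtain ⟨x₀, hx₀⟩ := hne₀
  have hx₀T : x₀ ∈ argmaxF (f + T • c) A := hsub hx₀
  have hcx₀ : dotp c y < dotp c x₀ := hstrict x₀ hx₀
  set A' := argmaxF (f + T • c) A with hA'
  have hA'ne : A'.Nonempty := ⟨y, hyT⟩
  have hextA' : (A' : Set (Fin n → ℝ)) = Set.extremePoints ℝ (convexHull ℝ (A' : Set (Fin n → ℝ))) :=
    extreme_of_subset hext (argmaxF_subset _ A)
  obtain ⟨x', hx'A', hcx', hedge'⟩ := improving_neighbor hA'ne hextA' hyT hx₀T hcx₀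
  have hedge : IsEdgeOf (convexHull ℝ (A : Set (Fin n → ℝ))) y x' :=
    isEdgeOf_lift hA (f + T • c) hext hedge'
  have hx'A : x' ∈ A := argmaxF_subset _ A hx'A'
  have hdrop : dotp f x' < dotp f y := by
    have heq : dotp (f + T • c) y = dotp (f + T • c) x' := argmaxF_const hyT hx'A'
    simp only [dotp_param] at heq
    nlinarith
  exact ⟨x', T, hTpos, hx'A', hx'A, hcx', hedge, hdrop⟩

lemma sweep {A : Finset (Fin n → ℝ)} (hA : A.Nonempty)
    (hext : (A : Set (Fin n → ℝ)) = Set.extremePoints ℝ (convexHull ℝ (A : Set (Fin n → ℝ))))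
    (c f : Fin n → ℝ) (L : ℝ)
    (hhalff : ∀ v ∈ A, ∃ k : ℤ, dotp f v = k / 2)
    (hfL : ∀ v ∈ A, L ≤ dotp f v) :
    ∀ (N m₀ : ℕ) (p : Fin (m₀+1) → (Fin n → ℝ)),
    IsMonotonePath (convexHull ℝ (A : Set (Fin n → ℝ))) c m₀ p →
    p (Fin.last m₀) ∈ A →
    (∃ s : ℝ, 0 < s ∧ p (Fin.last m₀) ∈ argmaxF (f + s • c) A) →
    2 * (dotp f (p (Fin.last m₀)) - L) ≤ (N : ℝ) →
    ∃ (m : ℕ) (q : Fin (m+1) → (Fin n → ℝ)), m ≤ m₀ + N ∧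
      IsMonotonePath (convexHull ℝ (A : Set (Fin n → ℝ))) c m q ∧
      q 0 = p 0 ∧ (∀ v ∈ A, dotp c v ≤ dotp c (q (Fin.last m))) := by
  intro N
  induction N with
  | zero =>
    intro m₀ p hpath hyA hinv hbound
    by_cases hmax : ∀ v ∈ A, dotp c v ≤ dotp c (p (Fin.last m₀))
    · exact ⟨m₀, p, by omega, hpath, rfl, hmax⟩
    · exfalso
      push_neg at hmax
      obtain ⟨v', hv'A, hv'⟩ := hmax
      obtain ⟨s, hs, hys⟩ := hinv
      obtain ⟨x', T, hT, hx'T, hx'A, hcx', hedge, hdrop⟩ :=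
        sweep_step hA hext c f hyA hv'A hv' hs hys
      have h1 := hfL x' hx'A
      have h2 := hfL (p (Fin.last m₀)) hyA
      simp only [Nat.cast_zero] at hbound
      linarith
  | succ N' ih =>
    intro m₀ p hpath hyA hinv hbound
    by_cases hmax : ∀ v ∈ A, dotp c v ≤ dotp c (p (Fin.last m₀))
    · exact ⟨m₀, p, by omega, hpath, rfl, hmax⟩
    · push_neg at hmax
      obtain ⟨v', hv'A, hv'⟩ := hmax
      obtain ⟨s, hs, hys⟩ := hinv
      obtain ⟨x', T, hT, hx'T, hx'A, hcx', hedge, hdrop⟩ :=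
        sweep_step hA hext c f hyA hv'A hv' hs hys
      -- half-integrality gives a quantified drop
      have hhalfdrop : dotp f x' ≤ dotp f (p (Fin.last m₀)) - 1/2 := by
        obtain ⟨k, hk⟩ := hhalff (p (Fin.last m₀)) hyA
        obtain ⟨k', hk'⟩ := hhalff x' hx'A
        rw [hk, hk'] at hdrop ⊢
        have hkk : (k' : ℝ) < (k : ℝ) := by linarith
        have hkk' : k' < k := by exact_mod_cast hkk
        have h3 : k' ≤ k - 1 := by omega
        have h4 : (k' : ℝ) ≤ (k : ℝ) - 1 := by exact_mod_cast h3
        linarith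
      obtain ⟨hpath', h0', hlast'⟩ := path_snoc hpath hedge hcx'
      have hlastA : (Fin.snoc p x' : Fin (m₀+2) → (Fin n → ℝ)) (Fin.last (m₀+1)) ∈ A := by
        rw [hlast']; exact hx'A
      have hinv' : ∃ s : ℝ, 0 < s ∧
          (Fin.snoc p x' : Fin (m₀+2) → (Fin n → ℝ)) (Fin.last (m₀+1)) ∈ argmaxF (f + s • c) A := by
        rw [hlast']; exact ⟨T, hT, hx'T⟩
      have hbound' : 2 * (dotp f ((Fin.snoc p x' : Fin (m₀+2) → (Fin n → ℝ)) (Fin.last (m₀+1))) - L) ≤ (N' : ℝ) := by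
        rw [hlast']
        push_cast at hbound ⊢
        linarith
      obtain ⟨m, q, hm, hq, hq0, hqmax⟩ := ih (m₀+1) (Fin.snoc p x') hpath' hlastA hinv' hbound'
      refine ⟨m, q, by omega, hq, ?_, hqmax⟩
      rw [hq0, h0']

/-! ### Setup and dimension lemmas -/

lemma dotp_unit (i₀ : Fin n) (x : Fin n → ℝ) :
    dotp (fun j => if j = i₀ then (1:ℝ) else 0) x = x i₀ := by
  unfold dotp
  rw [Finset.sum_eq_single i₀]
  · simp
  · intro b _ hb; simp [hb]
  · intro h; exact absurd (Finset.mem_univ i₀) h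

lemma dotp_neg_left (a x : Fin n → ℝ) : dotp (-a) x = -dotp a x := by
  simp [dotp, Finset.sum_neg_distrib]

lemma polytope_setup {P : Set (Fin n → ℝ)} (hP : IsPolytope P) :
    ∃ A : Finset (Fin n → ℝ), A.Nonempty ∧
      (A : Set (Fin n → ℝ)) = Set.extremePoints ℝ P ∧
      P = convexHull ℝ (A : Set (Fin n → ℝ)) := by
  classical
  obtain ⟨S, hSne, rfl⟩ := hP
  have hfin : (Set.extremePoints ℝ (convexHull ℝ (S : Set (Fin n → ℝ)))).Finite :=
    Set.Finite.subset S.finite_toSet extremePoints_convexHull_subset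
  refine ⟨hfin.toFinset, ?_, hfin.coe_toFinset, ?_⟩
  · -- nonempty
    obtain ⟨x, hx⟩ := hSne
    have hxP : (x : Fin n → ℝ) ∈ convexHull ℝ (S : Set (Fin n → ℝ)) :=
      subset_convexHull ℝ _ (Finset.mem_coe.2 hx)
    obtain ⟨y, hy⟩ := (S.finite_toSet.isCompact_convexHull ℝ).extremePoints_nonempty ⟨x, hxP⟩
    exact ⟨y, by rw [← Finset.mem_coe, hfin.coe_toFinset]; exact hy⟩
  · -- P = conv extremePoints
    have h1 : convexHull ℝ (S : Set (Fin n → ℝ)) =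
        closure (convexHull ℝ (Set.extremePoints ℝ (convexHull ℝ (S : Set (Fin n → ℝ))))) :=
      (closure_convexHull_extremePoints (S.finite_toSet.isCompact_convexHull ℝ)
        (convex_convexHull ℝ _)).symm
    have h3 : convexHull ℝ (Set.extremePoints ℝ (convexHull ℝ (S : Set (Fin n → ℝ)))) =
        convexHull ℝ ((hfin.toFinset : Finset (Fin n → ℝ)) : Set (Fin n → ℝ)) := by
      rw [hfin.coe_toFinset]
    conv_lhs => rw [h1]
    rw [h3, IsClosed.closure_eq (hfin.toFinset.finite_toSet.isClosed_convexHull ℝ)]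

lemma dim_pos {A : Finset (Fin n → ℝ)} {v w : Fin n → ℝ}
    (hv : v ∈ A) (hw : w ∈ A) (hne : v ≠ w) :
    1 ≤ polytopeDim (convexHull ℝ (A : Set (Fin n → ℝ))) := by
  have hv' : v ∈ affineSpan ℝ (convexHull ℝ (A : Set (Fin n → ℝ))) :=
    subset_affineSpan ℝ _ (subset_convexHull ℝ _ (Finset.mem_coe.2 hv))
  have hw' : w ∈ affineSpan ℝ (convexHull ℝ (A : Set (Fin n → ℝ))) :=
    subset_affineSpan ℝ _ (subset_convexHull ℝ _ (Finset.mem_coe.2 hw))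
  have hmem : v - w ∈ (affineSpan ℝ (convexHull ℝ (A : Set (Fin n → ℝ)))).direction :=
    AffineSubspace.vsub_mem_direction hv' hw'
  have hne0 : v - w ≠ 0 := sub_ne_zero.2 hne
  unfold polytopeDim
  rw [Nat.one_le_iff_ne_zero]
  intro h0
  have : Module.finrank ℝ (affineSpan ℝ (convexHull ℝ (A : Set (Fin n → ℝ)))).direction = 0 := h0
  rw [Module.finrank_zero_iff] at this
  exact hne0 (by
    have := @Subsingleton.elim _ this ⟨v - w, hmem⟩ ⟨0, Submodule.zero_mem _⟩
    simpa using congrArg Subtype.val this)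

lemma dim_drop {A A₀ : Finset (Fin n → ℝ)} (hsub : A₀ ⊆ A) (i₀ : Fin n) (r : ℝ)
    (hconst : ∀ x ∈ convexHull ℝ (A₀ : Set (Fin n → ℝ)), x i₀ = r)
    {v w : Fin n → ℝ} (hv : v ∈ A) (hw : w ∈ A) (hne : v i₀ ≠ w i₀) :
    polytopeDim (convexHull ℝ (A₀ : Set (Fin n → ℝ))) <
      polytopeDim (convexHull ℝ (A : Set (Fin n → ℝ))) := by
  set φ : (Fin n → ℝ) →ₗ[ℝ] ℝ := LinearMap.proj i₀ with hφ
  set dir := (affineSpan ℝ (convexHull ℝ (A : Set (Fin n → ℝ)))).direction with hdir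
  set dir₀ := (affineSpan ℝ (convexHull ℝ (A₀ : Set (Fin n → ℝ)))).direction with hdir₀
  have hle : dir₀ ≤ dir :=
    AffineSubspace.direction_le (affineSpan_mono ℝ (convexHull_mono (Finset.coe_subset.2 hsub)))
  have hker : dir₀ ≤ LinearMap.ker φ := by
    rw [hdir₀, direction_affineSpan, vectorSpan_def]
    rw [Submodule.span_le]
    rintro u ⟨p, hp, q, hq, rfl⟩
    have : φ (p -ᵥ q) = 0 := by
      show (p - q) i₀ = 0
      have := hconst p hp
      have := hconst q hq
      simp [Pi.sub_apply, *]
    exact this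
  have hvw : v - w ∈ dir := by
    apply AffineSubspace.vsub_mem_direction
    · exact subset_affineSpan ℝ _ (subset_convexHull ℝ _ (Finset.mem_coe.2 hv))
    · exact subset_affineSpan ℝ _ (subset_convexHull ℝ _ (Finset.mem_coe.2 hw))
  have hvwk : v - w ∉ LinearMap.ker φ := by
    rw [LinearMap.mem_ker]
    show ¬ (v - w) i₀ = 0
    simp only [Pi.sub_apply]
    intro h
    exact hne (by linarith)
  have hlt : dir ⊓ LinearMap.ker φ < dir := by
    rw [lt_iff_le_and_ne]
    refine ⟨inf_le_left, fun heq => ?_⟩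
    have hmem2 : v - w ∈ dir ⊓ LinearMap.ker φ := by rw [heq]; exact hvw
    exact hvwk hmem2.2
  have h1 : Module.finrank ℝ dir₀ ≤ Module.finrank ℝ (dir ⊓ LinearMap.ker φ : Submodule ℝ (Fin n → ℝ)) :=
    Submodule.finrank_mono (le_inf hle hker)
  have h2 : Module.finrank ℝ (dir ⊓ LinearMap.ker φ : Submodule ℝ (Fin n → ℝ)) <
      Module.finrank ℝ dir :=
    Submodule.finrank_lt_finrank_of_lt hlt
  unfold polytopeDim
  rw [← hdir₀, ← hdir]
  omega

lemma path_lift {A : Finset (Fin n → ℝ)} (hA : A.Nonempty) (a : Fin n → ℝ)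
    (hext : (A : Set (Fin n → ℝ)) = Set.extremePoints ℝ (convexHull ℝ (A : Set (Fin n → ℝ))))
    {c : Fin n → ℝ} {m : ℕ} {p : Fin (m+1) → (Fin n → ℝ)}
    (h : IsMonotonePath (convexHull ℝ ((argmaxF a A : Finset (Fin n → ℝ)) : Set (Fin n → ℝ))) c m p) :
    IsMonotonePath (convexHull ℝ (A : Set (Fin n → ℝ))) c m p := by
  have hextA' := extreme_of_subset hext (argmaxF_subset a A)
  constructor
  · intro i
    have h1 : p i ∈ (argmaxF a A : Set (Fin n → ℝ)) := hextA' ▸ h.1 i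
    have h2 : p i ∈ (A : Set (Fin n → ℝ)) := Finset.coe_subset.2 (argmaxF_subset a A) h1
    show p i ∈ Set.extremePoints ℝ (convexHull ℝ (A : Set (Fin n → ℝ)))
    rw [← hext]; exact h2
  · intro i
    exact ⟨isEdgeOf_lift hA a hext (h.2 i).1, (h.2 i).2⟩

/-! ### Main induction -/

lemma aux : ∀ (d : ℕ) (A : Finset (Fin n → ℝ)), A.Nonempty →
    (A : Set (Fin n → ℝ)) = Set.extremePoints ℝ (convexHull ℝ (A : Set (Fin n → ℝ))) →
    (∀ v ∈ A, ∀ i, v i = 0 ∨ v i = 1/2 ∨ v i = 1) →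
    polytopeDim (convexHull ℝ (A : Set (Fin n → ℝ))) ≤ d →
    ∀ (c u : Fin n → ℝ), u ∈ A →
    ∃ (m : ℕ) (q : Fin (m+1) → (Fin n → ℝ)), m ≤ 3*d ∧
      IsMonotonePath (convexHull ℝ (A : Set (Fin n → ℝ))) c m q ∧ q 0 = u ∧
      ∀ v ∈ A, dotp c v ≤ dotp c (q (Fin.last m)) := by
  intro d
  induction d with
  | zero =>
    intro A hA hext hhalfA hd c u hu
    have hvertu : IsVertexOf (convexHull ℝ (A : Set (Fin n → ℝ))) u := by
      show u ∈ Set.extremePoints ℝ (convexHull ℝ (A : Set (Fin n → ℝ)))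
      rw [← hext]; exact hu
    by_cases hmax : ∀ v ∈ A, dotp c v ≤ dotp c u
    · exact ⟨0, fun _ => u, by omega, path_single hvertu, rfl, hmax⟩
    · exfalso
      push_neg at hmax
      obtain ⟨v', hv'A, hlt⟩ := hmax
      have hne : u ≠ v' := fun h => absurd hlt (by rw [h]; exact lt_irrefl _)
      have := dim_pos hu hv'A hne
      omega
  | succ d' ih =>
    intro A hA hext hhalfA hd c u hu
    have hvert : ∀ z ∈ A, IsVertexOf (convexHull ℝ (A : Set (Fin n → ℝ))) z := by
      intro z hz
      show z ∈ Set.extremePoints ℝ (convexHull ℝ (A : Set (Fin n → ℝ)))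
      rw [← hext]; exact hz
    by_cases hmax : ∀ v ∈ A, dotp c v ≤ dotp c u
    · exact ⟨0, fun _ => u, by omega, path_single (hvert u hu), rfl, hmax⟩
    push_neg at hmax
    obtain ⟨v', hv'A, hlt⟩ := hmax
    -- the main construction, for a starting vertex with a 0/1 coordinate that is
    -- not constant on the polytope
    have hconstruct : ∀ y, y ∈ A → ∀ i₀ : Fin n, (y i₀ = 0 ∨ y i₀ = 1) →
        ∀ vv, vv ∈ A → ∀ ww, ww ∈ A → vv i₀ ≠ ww i₀ →
        ∃ (m : ℕ) (q : Fin (m+1) → (Fin n → ℝ)), m ≤ 3*d' + 2 ∧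
          IsMonotonePath (convexHull ℝ (A : Set (Fin n → ℝ))) c m q ∧ q 0 = y ∧
          ∀ v ∈ A, dotp c v ≤ dotp c (q (Fin.last m)) := by
      intro y hyA i₀ h01 vv hvvA ww hwwA hvw
      have hrange : ∀ v ∈ A, v i₀ = 0 ∨ v i₀ = 1/2 ∨ v i₀ = 1 := fun v hv => hhalfA v hv i₀
      obtain ⟨f, hfmax, hfhalf, hfL1, hcoord⟩ : ∃ f : Fin n → ℝ,
          (∀ w ∈ A, dotp f w ≤ dotp f y) ∧ (∀ v ∈ A, ∃ k : ℤ, dotp f v = (k : ℝ)/2) ∧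
          (∀ v ∈ A, dotp f y - 1 ≤ dotp f v) ∧
          (∀ w ∈ A, dotp f w = dotp f y → w i₀ = y i₀) := by
        rcases h01 with h0 | h1
        · refine ⟨-(fun j => if j = i₀ then (1:ℝ) else 0), ?_, ?_, ?_, ?_⟩ <;>
            simp only [dotp_neg_left, dotp_unit]
          · intro w hw; rw [h0]; rcases hrange w hw with h|h|h <;> rw [h] <;> norm_num
          · intro v hv
            rcases hrange v hv with h|h|h
            · exact ⟨0, by rw [h]; norm_num⟩
            · exact ⟨-1, by rw [h]; norm_num⟩
            · exact ⟨-2, by rw [h]; norm_num⟩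
          · intro v hv; rw [h0]; rcases hrange v hv with h|h|h <;> rw [h] <;> norm_num
          · intro w hw heq; linarith
        · refine ⟨(fun j => if j = i₀ then (1:ℝ) else 0), ?_, ?_, ?_, ?_⟩ <;>
            simp only [dotp_unit]
          · intro w hw; rw [h1]; rcases hrange w hw with h|h|h <;> rw [h] <;> norm_num
          · intro v hv
            rcases hrange v hv with h|h|h
            · exact ⟨0, by rw [h]; norm_num⟩
            · exact ⟨1, by rw [h]; norm_num⟩
            · exact ⟨2, by rw [h]; norm_num⟩
          · intro v hv; rw [h1]; rcases hrange v hv with h|h|h <;> rw [h] <;> norm_num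
          · intro w hw heq; linarith
      have hyA₀ : y ∈ argmaxF f A := mem_argmaxF.2 ⟨hyA, hfmax⟩
      have hA₀ne : (argmaxF f A).Nonempty := ⟨y, hyA₀⟩
      have hextA₀ := extreme_of_subset hext (argmaxF_subset f A)
      have hhalfA₀ : ∀ v ∈ argmaxF f A, ∀ i, v i = 0 ∨ v i = 1/2 ∨ v i = 1 :=
        fun v hv => hhalfA v (argmaxF_subset f A hv)
      -- the coordinate i₀ is constant on the face
      have hconstA₀ : ∀ v ∈ argmaxF f A, v i₀ = y i₀ := by
        intro v hv
        exact hcoord v (argmaxF_subset f A hv) (argmaxF_const hv hyA₀)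
      have hconst : ∀ x ∈ convexHull ℝ ((argmaxF f A : Finset (Fin n → ℝ)) : Set (Fin n → ℝ)),
          x i₀ = y i₀ := by
        intro x hx
        have h1 : dotp (fun j => if j = i₀ then (1:ℝ) else 0) x ≤ y i₀ :=
          dotp_le_of_mem_convexHull hx (fun v hv => by rw [dotp_unit, hconstA₀ v hv])
        have h2 : y i₀ ≤ dotp (fun j => if j = i₀ then (1:ℝ) else 0) x :=
          dotp_ge_of_mem_convexHull hx (fun v hv => by rw [dotp_unit, hconstA₀ v hv])
        rw [dotp_unit] at h1 h2
        linarith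
      have hdim : polytopeDim (convexHull ℝ ((argmaxF f A : Finset (Fin n → ℝ)) : Set (Fin n → ℝ))) ≤ d' := by
        have := dim_drop (argmaxF_subset f A) i₀ (y i₀) hconst hvvA hwwA hvw
        omega
      obtain ⟨m₁, p₁, hm₁, hpath₁, hp₁0, hp₁max⟩ := ih (argmaxF f A) hA₀ne hextA₀ hhalfA₀ hdim c y hyA₀
      have hpathP := path_lift hA f hext hpath₁
      have hu₀A₀ : p₁ (Fin.last m₁) ∈ argmaxF f A := by
        have h1 := hpath₁.1 (Fin.last m₁)
        have : p₁ (Fin.last m₁) ∈ ((argmaxF f A : Finset (Fin n → ℝ)) : Set (Fin n → ℝ)) := by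
          rw [hextA₀]; exact h1
        exact Finset.mem_coe.1 this
      have hu₀A : p₁ (Fin.last m₁) ∈ A := argmaxF_subset f A hu₀A₀
      have hf0 : f + (0:ℝ) • c = f := by simp
      have hu₀arg : p₁ (Fin.last m₁) ∈ argmaxF (f + (0:ℝ) • c) A := by
        rw [hf0]; exact hu₀A₀
      have hmaxc : ∀ w ∈ argmaxF (f + (0:ℝ) • c) A, dotp c w ≤ dotp c (p₁ (Fin.last m₁)) := by
        intro w hw
        rw [hf0] at hw
        exact hp₁max w hw
      obtain ⟨s', hs', hu₀s'⟩ := pers (f := f) (c := c) 0 hu₀arg hmaxc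
      have hfu₀ : dotp f (p₁ (Fin.last m₁)) = dotp f y := argmaxF_const hu₀A₀ hyA₀
      obtain ⟨m, q, hm, hq, hq0, hqmax⟩ := sweep hA hext c f (dotp f y - 1) hfhalf hfL1 2 m₁ p₁
        hpathP hu₀A ⟨s', hs', hu₀s'⟩ (by rw [hfu₀]; push_cast; linarith)
      exact ⟨m, q, by omega, hq, by rw [hq0, hp₁0], hqmax⟩
    by_cases hgood : ∃ i₀ : Fin n, (u i₀ = 0 ∨ u i₀ = 1) ∧ ∃ vv ∈ A, ∃ ww ∈ A, vv i₀ ≠ ww i₀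
    · obtain ⟨i₀, h01, vv, hvvA, ww, hwwA, hneq⟩ := hgood
      obtain ⟨m, q, hm, hq, hq0, hqmax⟩ := hconstruct u hu i₀ h01 vv hvvA ww hwwA hneq
      exact ⟨m, q, by omega, hq, hq0, hqmax⟩
    · push_neg at hgood
      obtain ⟨v₁, hv₁A, hcv₁, hedge⟩ := improving_neighbor hA hext hu hv'A hlt
      have hne : v₁ ≠ u := fun h => absurd hcv₁ (by rw [h]; exact lt_irrefl _)
      have hdiff : ∃ i₁, v₁ i₁ ≠ u i₁ := by
        by_contra hcon
        push_neg at hcon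
        exact hne (funext hcon)
      obtain ⟨i₁, hdiff⟩ := hdiff
      have hu12 : u i₁ = 1/2 := by
        rcases hhalfA u hu i₁ with h|h|h
        · exact absurd (hgood i₁ (Or.inl h) v₁ hv₁A u hu) hdiff
        · exact h
        · exact absurd (hgood i₁ (Or.inr h) v₁ hv₁A u hu) hdiff
      have hv01 : v₁ i₁ = 0 ∨ v₁ i₁ = 1 := by
        rcases hhalfA v₁ hv₁A i₁ with h|h|h
        · exact Or.inl h
        · exact absurd (h.trans hu12.symm) hdiff
        · exact Or.inr h
      obtain ⟨m, q, hm, hq, hq0, hqmax⟩ := hconstruct v₁ hv₁A i₁ hv01 v₁ hv₁A u hu hdiff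
      obtain ⟨hpath2, h20, h2last⟩ := path_cons hq (by rw [hq0]; exact hedge)
        (by rw [hq0]; exact hcv₁)
      refine ⟨m+1, Fin.cons u q, by omega, hpath2, h20, ?_⟩
      intro v hv
      rw [h2last]
      exact hqmax v hv

end HalfIntegralAux

/-- **Theorem 1 (half-integral monotone diameter bound).**
Let `P ⊆ ℝ^n` be a half-integral polytope of dimension `d`. Then for every
`c ∈ ℝ^n` and every vertex `u` of `P` there is a `c`-monotone path of length at
most `3d` from `u` to a vertex maximizing `cᵀx` over `P`. -/
theorem half_integral_monotone_diameter {n : ℕ} (P : Set (Fin n → ℝ))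
    (hP : IsPolytope P)
    (hhalf : ∀ v, IsVertexOf P v → ∀ i, v i = 0 ∨ v i = 1 / 2 ∨ v i = 1)
    (c : Fin n → ℝ) (u : Fin n → ℝ) (hu : IsVertexOf P u) :
    ∃ (m : ℕ) (p : Fin (m + 1) → (Fin n → ℝ)),
      m ≤ 3 * polytopeDim P ∧
      IsMonotonePath P c m p ∧
      p 0 = u ∧
      (∀ x ∈ P, dotp c x ≤ dotp c (p (Fin.last m))) := by

  obtain ⟨A, hAne, hAext, hPA⟩ := HalfIntegralAux.polytope_setup hP
  subst hPA
  have hhalfA : ∀ v ∈ A, ∀ i, v i = 0 ∨ v i = 1/2 ∨ v i = 1 := by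
    intro v hv i
    exact hhalf v (by show v ∈ Set.extremePoints ℝ _; rw [← hAext]; exact hv) i
  have huA : u ∈ A := by
    rw [← Finset.mem_coe, hAext]
    exact hu
  obtain ⟨m, q, hm, hq, hq0, hqmax⟩ := HalfIntegralAux.aux
    (polytopeDim (convexHull ℝ (A : Set (Fin n → ℝ)))) A hAne hAext hhalfA (le_refl _) c u huA
  refine ⟨m, q, hm, hq, hq0, ?_⟩
  intro x hx
  exact HalfIntegralAux.dotp_le_of_mem_convexHull hx hqmax
end

section
/- Let P ⊆ ℝ^n be a half-integral polytope of dimension d, and suppose there is an integer s such that every vertex of P has exactly n − s coordinates equal to 1/2. Then for every c ∈ ℝ^n and every vertex u of P there exists a c-monotone path of length at most 2s from u to a vertex maximizing x ↦ cᵀx over P. -/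
open Set Finset

namespace HIP

variable {n : ℕ}

lemma dotp_add_left (a b x : Fin n → ℝ) : dotp (a + b) x = dotp a x + dotp b x := by
  simp [dotp, add_mul, Finset.sum_add_distrib]

lemma dotp_smul_left (t : ℝ) (a x : Fin n → ℝ) : dotp (t • a) x = t * dotp a x := by
  simp [dotp, Finset.mul_sum, mul_assoc]

lemma dotp_sub_right (c x y : Fin n → ℝ) : dotp c (x - y) = dotp c x - dotp c y := by
  simp [dotp, mul_sub, Finset.sum_sub_distrib]

lemma dotp_add_right (c x y : Fin n → ℝ) : dotp c (x + y) = dotp c x + dotp c y := by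
  simp [dotp, mul_add, Finset.sum_add_distrib]

lemma dotp_smul_right (c : Fin n → ℝ) (t : ℝ) (x : Fin n → ℝ) :
    dotp c (t • x) = t * dotp c x := by
  simp [dotp, Finset.mul_sum]; apply Finset.sum_congr rfl; intro i _; ring

/-- `dotp c` as a linear map. -/
def dlin (c : Fin n → ℝ) : (Fin n → ℝ) →ₗ[ℝ] ℝ where
  toFun := dotp c
  map_add' := dotp_add_right c
  map_smul' := fun t x => dotp_smul_right c t x

lemma dlin_apply (c x : Fin n → ℝ) : dlin c x = dotp c x := rfl

/-- `dotp c` as a continuous linear map. -/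
noncomputable def dclm (c : Fin n → ℝ) : (Fin n → ℝ) →L[ℝ] ℝ :=
  LinearMap.toContinuousLinearMap (dlin c)

lemma dclm_apply (c x : Fin n → ℝ) : dclm c x = dotp c x := rfl

/-- Upper bound for a linear functional on a convex hull. -/
lemma dotp_le_of_mem_hull {V : Finset (Fin n → ℝ)} {c : Fin n → ℝ} {M : ℝ}
    (hub : ∀ v ∈ V, dotp c v ≤ M) {x : Fin n → ℝ}
    (hx : x ∈ convexHull ℝ (V : Set (Fin n → ℝ))) : dotp c x ≤ M := by
  have h : convexHull ℝ (V : Set (Fin n → ℝ)) ⊆ {y | dotp c y ≤ M} := by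
    apply convexHull_min
    · intro v hv; exact hub v hv
    · exact convex_halfSpace_le (dlin c).isLinear M
  exact h hx

lemma dotp_ge_of_mem_hull {V : Finset (Fin n → ℝ)} {c : Fin n → ℝ} {M : ℝ}
    (hub : ∀ v ∈ V, M ≤ dotp c v) {x : Fin n → ℝ}
    (hx : x ∈ convexHull ℝ (V : Set (Fin n → ℝ))) : M ≤ dotp c x := by
  have h : convexHull ℝ (V : Set (Fin n → ℝ)) ⊆ {y | M ≤ dotp c y} := by
    apply convexHull_min
    · intro v hv; exact hub v hv
    · exact convex_halfSpace_ge (dlin c).isLinear M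
  exact h hx

/-- The argmax face of a finite hull. -/
lemma argmax_face_eq {V : Finset (Fin n → ℝ)} {f : Fin n → ℝ} {M : ℝ}
    (hub : ∀ v ∈ V, dotp f v ≤ M)
    (hne : (V.filter fun v => dotp f v = M).Nonempty) :
    {x ∈ convexHull ℝ (V : Set (Fin n → ℝ)) |
        ∀ y ∈ convexHull ℝ (V : Set (Fin n → ℝ)), dotp f y ≤ dotp f x}
      = convexHull ℝ ((V.filter fun v => dotp f v = M : Finset (Fin n → ℝ)) :
          Set (Fin n → ℝ)) := by
  classical
  obtain ⟨v0, hv0⟩ := hne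
  have hv0V : v0 ∈ V := (Finset.mem_filter.1 hv0).1
  have hv0M : dotp f v0 = M := (Finset.mem_filter.1 hv0).2
  apply Set.Subset.antisymm
  · rintro x ⟨hxV, hmax⟩
    have hxM : dotp f x = M := by
      have h1 : dotp f x ≤ M := dotp_le_of_mem_hull hub hxV
      have h2 : M ≤ dotp f x := by
        have := hmax v0 (subset_convexHull ℝ _ (by exact_mod_cast hv0V))
        linarith [hv0M ▸ this]
      linarith
    rw [Finset.convexHull_eq] at hxV ⊢
    obtain ⟨w, hw0, hw1, hwx⟩ := hxV
    rw [Finset.centerMass_eq_of_sum_1 _ _ hw1] at hwx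
    -- ∑ v in V, w v * (M - dotp f v) = 0
    have hsum : ∑ v ∈ V, w v * (M - dotp f v) = 0 := by
      have hfx : ∑ v ∈ V, w v * dotp f v = M := by
        have : dotp f x = ∑ v ∈ V, w v * dotp f v := by
          rw [← hwx]
          rw [show dotp f (∑ v ∈ V, w v • id v) = dlin f (∑ v ∈ V, w v • id v) from rfl]
          rw [map_sum]
          simp [dlin_apply, dotp_smul_right]
        rw [← this, hxM]
      have : ∑ v ∈ V, w v * (M - dotp f v) = (∑ v ∈ V, w v) * M - ∑ v ∈ V, w v * dotp f v := by
        rw [Finset.sum_mul, ← Finset.sum_sub_distrib]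
        apply Finset.sum_congr rfl; intro v _; ring
      rw [this, hw1, hfx]; ring
    have hzero : ∀ v ∈ V, w v * (M - dotp f v) = 0 :=
      (Finset.sum_eq_zero_iff_of_nonneg
        (fun v hv => mul_nonneg (hw0 v hv) (by linarith [hub v hv]))).1 hsum
    have hwzero : ∀ v ∈ V, v ∉ (V.filter fun v => dotp f v = M) → w v = 0 := by
      intro v hv hvn
      have : ¬ (dotp f v = M) := fun h => hvn (Finset.mem_filter.2 ⟨hv, h⟩)
      have h2 := hzero v hv
      rcases mul_eq_zero.1 h2 with h | h
      · exact h
      · exact absurd (by linarith : dotp f v = M) this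
    refine ⟨w, ?_, ?_, ?_⟩
    · intro v hv; exact hw0 v (Finset.mem_filter.1 hv).1
    · rw [← hw1]
      rw [← Finset.sum_filter_add_sum_filter_not V (fun v => dotp f v = M)]
      have : ∑ v ∈ V.filter (fun v => ¬ dotp f v = M), w v = 0 := by
        apply Finset.sum_eq_zero
        intro v hv
        have hv' := Finset.mem_filter.1 hv
        exact hwzero v hv'.1 (fun hc => hv'.2 (Finset.mem_filter.1 hc).2)
      rw [this, add_zero]
    · rw [Finset.centerMass_eq_of_sum_1]
      · rw [← hwx]
        rw [← Finset.sum_filter_add_sum_filter_not V (fun v => dotp f v = M)]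
        have : ∑ v ∈ V.filter (fun v => ¬ dotp f v = M), w v • id v = 0 := by
          apply Finset.sum_eq_zero
          intro v hv
          have hv' := Finset.mem_filter.1 hv
          rw [hwzero v hv'.1 (fun hc => hv'.2 (Finset.mem_filter.1 hc).2), zero_smul]
        rw [this, add_zero]
      · rw [← Finset.sum_filter_add_sum_filter_not V (fun v => dotp f v = M)] at hw1
        have : ∑ v ∈ V.filter (fun v => ¬ dotp f v = M), w v = 0 := by
          apply Finset.sum_eq_zero
          intro v hv
          have hv' := Finset.mem_filter.1 hv
          exact hwzero v hv'.1 (fun hc => hv'.2 (Finset.mem_filter.1 hc).2)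
        rw [this, add_zero] at hw1
        exact hw1
  · intro x hx
    have hxV : x ∈ convexHull ℝ (V : Set (Fin n → ℝ)) :=
      convexHull_mono (by exact_mod_cast Finset.filter_subset _ V) hx
    have hxM : dotp f x = M := by
      have h1 : dotp f x ≤ M := dotp_le_of_mem_hull (fun v hv => hub v (Finset.mem_filter.1 hv).1) hx
      have h2 : M ≤ dotp f x :=
        dotp_ge_of_mem_hull (fun v hv => le_of_eq (Finset.mem_filter.1 hv).2.symm) hx
      linarith
    exact ⟨hxV, fun y hy => by rw [hxM]; exact dotp_le_of_mem_hull hub hy⟩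

lemma dotp_comm (x y : Fin n → ℝ) : dotp x y = dotp y x := by
  simp [dotp, mul_comm]

lemma dotp_sub_left (a b x : Fin n → ℝ) : dotp (a - b) x = dotp a x - dotp b x := by
  simp [dotp, sub_mul, Finset.sum_sub_distrib]

lemma dotp_self_nonneg (x : Fin n → ℝ) : 0 ≤ dotp x x :=
  Finset.sum_nonneg fun i _ => mul_self_nonneg (x i)

lemma dotp_self_pos {x : Fin n → ℝ} (hx : x ≠ 0) : 0 < dotp x x := by
  rcases lt_or_eq_of_le (dotp_self_nonneg x) with h | h
  · exact h
  · exfalso; apply hx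
    have h0 : ∀ i ∈ Finset.univ, x i * x i = 0 := by
      apply (Finset.sum_eq_zero_iff_of_nonneg (fun i _ => mul_self_nonneg (x i))).1
      exact h.symm
    funext i
    have := h0 i (Finset.mem_univ i)
    exact mul_self_eq_zero.1 this

/-- On a sphere, `a - q` strictly exposes the point `a`. -/
lemma sphere_exposer {q : Fin n → ℝ} {ρ : ℝ} {a v : Fin n → ℝ}
    (ha : dotp (a - q) (a - q) = ρ) (hv : dotp (v - q) (v - q) = ρ) (hne : v ≠ a) :
    dotp (a - q) v < dotp (a - q) a := by
  have he : a - v ≠ 0 := sub_ne_zero.2 (fun h => hne h.symm)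
  have hpos : 0 < dotp (a - v) (a - v) := dotp_self_pos he
  have key : dotp (a - q) a - dotp (a - q) v
      = (dotp (a - v) (a - v) + dotp (a - q) (a - q) - dotp (v - q) (v - q)) / 2 := by
    simp only [dotp, Pi.sub_apply, ← Finset.sum_sub_distrib, ← Finset.sum_add_distrib,
      Finset.sum_div]
    exact Finset.sum_congr rfl fun i _ => by ring
  linarith

/-- Parametric breakpoint step. -/
lemma core_step {T : Finset (Fin n → ℝ)} {a : Fin n → ℝ} (haT : a ∈ T)
    (c ℓ : Fin n → ℝ)
    (hexp : ∀ v ∈ T.erase a, dotp ℓ v < dotp ℓ a)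
    {v0 : Fin n → ℝ} (hv0 : v0 ∈ T) (himp : dotp c a < dotp c v0) :
    ∃ t : ℝ, 0 < t ∧
      (∀ v ∈ T, dotp (ℓ + t • c) v ≤ dotp (ℓ + t • c) a) ∧
      (∃ v ∈ T, dotp (ℓ + t • c) v = dotp (ℓ + t • c) a ∧ dotp c a < dotp c v) := by
  classical
  set D := (T.erase a).filter (fun v => dotp c a < dotp c v) with hD
  have hv0D : v0 ∈ D := by
    refine Finset.mem_filter.2 ⟨Finset.mem_erase.2 ⟨?_, hv0⟩, himp⟩
    intro h; rw [h] at himp; exact lt_irrefl _ himp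
  have hDne : D.Nonempty := ⟨v0, hv0D⟩
  set t := D.inf' hDne (fun v => (dotp ℓ a - dotp ℓ v) / (dotp c v - dotp c a)) with ht
  have htpos : 0 < t := by
    rw [ht, Finset.lt_inf'_iff]
    intro v hv
    obtain ⟨hve, hvc⟩ := Finset.mem_filter.1 hv
    exact div_pos (by linarith [hexp v hve]) (by linarith)
  obtain ⟨vm, hvmD, hvmeq⟩ := Finset.exists_mem_eq_inf' hDne
      (fun v => (dotp ℓ a - dotp ℓ v) / (dotp c v - dotp c a))
  obtain ⟨hvme, hvmc⟩ := Finset.mem_filter.1 hvmD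
  refine ⟨t, htpos, ?_, ⟨vm, (Finset.mem_erase.1 hvme).2, ?_, hvmc⟩⟩
  · intro v hvT
    by_cases hva : v = a
    · rw [hva]
    · have hve : v ∈ T.erase a := Finset.mem_erase.2 ⟨hva, hvT⟩
      rw [dotp_add_left, dotp_add_left, dotp_smul_left, dotp_smul_left]
      by_cases hvc : dotp c a < dotp c v
      · have hvD : v ∈ D := Finset.mem_filter.2 ⟨hve, hvc⟩
        have hle : t ≤ (dotp ℓ a - dotp ℓ v) / (dotp c v - dotp c a) := by
          rw [ht]; exact Finset.inf'_le _ hvD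
        have hb : 0 < dotp c v - dotp c a := by linarith
        rw [le_div_iff₀ hb] at hle
        nlinarith
      · push_neg at hvc
        have := hexp v hve
        nlinarith
  · rw [dotp_add_left, dotp_add_left, dotp_smul_left, dotp_smul_left]
    have hb : 0 < dotp c vm - dotp c a := by linarith
    have : t = (dotp ℓ a - dotp ℓ vm) / (dotp c vm - dotp c a) := by rw [ht, hvmeq]
    rw [this, div_mul_eq_mul_div, ]
    field_simp
    ring
  
/-- `T` is the vertex set of an exposed face of the polytope with vertex set `V`. -/
def ExposesIn (V T : Finset (Fin n → ℝ)) : Prop :=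
  T.Nonempty ∧ ∃ (f : Fin n → ℝ) (M : ℝ), (∀ v ∈ V, dotp f v ≤ M) ∧
    T = V.filter (fun v => dotp f v = M)

lemma ExposesIn.subset {V T : Finset (Fin n → ℝ)} (h : ExposesIn V T) : T ⊆ V := by
  obtain ⟨-, f, M, -, rfl⟩ := h; exact Finset.filter_subset _ _

lemma ExposesIn.refl {V : Finset (Fin n → ℝ)} (h : V.Nonempty) : ExposesIn V V := by
  refine ⟨h, 0, 0, ?_, ?_⟩
  · intro v _; simp [dotp]
  · simp [dotp]

lemma ExposesIn.isExposed {V T : Finset (Fin n → ℝ)} (h : ExposesIn V T) :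
    IsExposed ℝ (convexHull ℝ (V : Set (Fin n → ℝ))) (convexHull ℝ (T : Set (Fin n → ℝ))) := by
  obtain ⟨hne, f, M, hub, rfl⟩ := h
  intro _
  refine ⟨dclm f, ?_⟩
  rw [← argmax_face_eq hub hne]
  ext x
  simp only [Set.mem_setOf_eq, dclm_apply]

lemma ExposesIn.trans {V T U : Finset (Fin n → ℝ)} (h1 : ExposesIn V T)
    (h2 : ExposesIn T U) : ExposesIn V U := by
  classical
  obtain ⟨hTne, f, Mf, hubf, hTeq⟩ := h1
  obtain ⟨hUne, g, Mg, hubg, hUeq⟩ := h2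
  by_cases hVT : V = T
  · exact ⟨hUne, g, Mg, fun v hv => hubg v (hVT ▸ hv), by rw [hVT, hUeq]⟩
  · have hTV : T ⊆ V := hTeq ▸ Finset.filter_subset _ _
    have hVne : V.Nonempty := hTne.mono hTV
    have hdiffne : (V \ T).Nonempty := by
      rw [Finset.sdiff_nonempty]
      intro hsub
      exact hVT (Finset.Subset.antisymm hsub hTV)
    set δ : ℝ := (V \ T).inf' hdiffne (fun v => Mf - dotp f v) with hδdef
    have hδpos : 0 < δ := by
      rw [hδdef, Finset.lt_inf'_iff]
      intro v hv
      obtain ⟨hvV, hvT⟩ := Finset.mem_sdiff.1 hv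
      have : dotp f v ≠ Mf := by
        intro hc
        exact hvT (hTeq ▸ Finset.mem_filter.2 ⟨hvV, hc⟩)
      have := hubf v hvV
      cases lt_or_eq_of_le this with
      | inl hlt => linarith
      | inr heq => exact absurd heq ‹dotp f v ≠ Mf›
    set K : ℝ := 1 + V.sup' hVne (fun v => |dotp g v - Mg|) with hKdef
    have hKpos : 0 < K := by
      rw [hKdef]
      obtain ⟨v, hv⟩ := hVne
      have h := Finset.le_sup' (fun v => |dotp g v - Mg|) hv
      have h2 := abs_nonneg (dotp g v - Mg)
      linarith
    set ε : ℝ := δ / K with hεdef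
    have hεpos : 0 < ε := div_pos hδpos hKpos
    refine ⟨hUne, f + ε • g, Mf + ε * Mg, ?_, ?_⟩
    · intro v hv
      rw [dotp_add_left, dotp_smul_left]
      by_cases hvT : v ∈ T
      · have hvT' : v ∈ V.filter (fun v => dotp f v = Mf) := by rw [← hTeq]; exact hvT
        have h1 : dotp f v = Mf := (Finset.mem_filter.1 hvT').2
        have h2 : dotp g v ≤ Mg := hubg v hvT
        nlinarith
      · have h1 : dotp f v ≤ Mf - δ := by
          have := Finset.inf'_le (fun v => Mf - dotp f v) (Finset.mem_sdiff.2 ⟨hv, hvT⟩)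
          linarith [this]
        have h2 : |dotp g v - Mg| ≤ K - 1 := by
          have := Finset.le_sup' (fun v => |dotp g v - Mg|) hv
          rw [hKdef]; linarith [this]
        have h3 : ε * |dotp g v - Mg| < δ := by
          calc ε * |dotp g v - Mg| ≤ ε * (K - 1) := by
                apply mul_le_mul_of_nonneg_left h2 (le_of_lt hεpos)
            _ = δ * (K-1) / K := by rw [hεdef]; ring
            _ < δ := by
                rw [div_lt_iff₀ hKpos]
                nlinarith
        have h4 : dotp g v - Mg ≤ |dotp g v - Mg| := le_abs_self _
        nlinarith [abs_nonneg (dotp g v - Mg)]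
    · rw [hUeq, hTeq]
      ext v
      simp only [Finset.mem_filter, Finset.mem_filter]
      constructor
      · rintro ⟨⟨hvV, hfv⟩, hgv⟩
        refine ⟨hvV, ?_⟩
        rw [dotp_add_left, dotp_smul_left, hfv, hgv]
      · rintro ⟨hvV, hfgv⟩
        rw [dotp_add_left, dotp_smul_left] at hfgv
        by_cases hvT : v ∈ T
        · have hvT' : v ∈ V.filter (fun v => dotp f v = Mf) := by rw [← hTeq]; exact hvT
          have h1 : dotp f v = Mf := (Finset.mem_filter.1 hvT').2
          rw [h1] at hfgv
          have : dotp g v = Mg := by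
            have := mul_left_cancel₀ (ne_of_gt hεpos) (by linarith : ε * dotp g v = ε * Mg)
            exact this
          exact ⟨⟨hvV, h1⟩, this⟩
        · exfalso
          have h1 : dotp f v ≤ Mf - δ := by
            have := Finset.inf'_le (fun v => Mf - dotp f v) (Finset.mem_sdiff.2 ⟨hvV, hvT⟩)
            linarith [this]
          have h2 : |dotp g v - Mg| ≤ K - 1 := by
            have := Finset.le_sup' (fun v => |dotp g v - Mg|) hvV
            rw [hKdef]; linarith [this]
          have h3 : ε * |dotp g v - Mg| < δ := by
            calc ε * |dotp g v - Mg| ≤ ε * (K - 1) := by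
                  apply mul_le_mul_of_nonneg_left h2 (le_of_lt hεpos)
              _ = δ * (K-1) / K := by rw [hεdef]; ring
              _ < δ := by
                  rw [div_lt_iff₀ hKpos]
                  nlinarith
          have h4 : dotp g v - Mg ≤ |dotp g v - Mg| := le_abs_self _
          nlinarith [abs_nonneg (dotp g v - Mg)]

/-- extreme points restrict to subsets -/
lemma extreme_mem_of_subset {A B : Set (Fin n → ℝ)} {x : Fin n → ℝ}
    (hBA : B ⊆ A) (hxB : x ∈ B) (hx : x ∈ Set.extremePoints ℝ A) :
    x ∈ Set.extremePoints ℝ B :=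
  inter_extremePoints_subset_extremePoints_of_subset hBA ⟨hxB, hx⟩

/-- The vertex set of a polytope. -/
lemma exists_vertexFinset (P : Set (Fin n → ℝ)) (hP : IsPolytope P) :
    ∃ V : Finset (Fin n → ℝ), (V : Set (Fin n → ℝ)) = Set.extremePoints ℝ P ∧
      P = convexHull ℝ (V : Set (Fin n → ℝ)) := by
  classical
  obtain ⟨S, hSne, rfl⟩ := hP
  have hfin : (Set.extremePoints ℝ (convexHull ℝ (S : Set (Fin n → ℝ)))).Finite :=
    Set.Finite.subset S.finite_toSet extremePoints_convexHull_subset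
  refine ⟨hfin.toFinset, hfin.coe_toFinset, ?_⟩
  have hcomp : IsCompact (convexHull ℝ (S : Set (Fin n → ℝ))) :=
    S.finite_toSet.isCompact_convexHull (𝕜 := ℝ)
  have hconv : Convex ℝ (convexHull ℝ (S : Set (Fin n → ℝ))) := convex_convexHull ℝ _
  have hKM := closure_convexHull_extremePoints hcomp hconv
  have hclosed : IsClosed (convexHull ℝ
      (Set.extremePoints ℝ (convexHull ℝ (S : Set (Fin n → ℝ))))) :=
    (hfin.isCompact_convexHull (𝕜 := ℝ)).isClosed
  rw [hclosed.closure_eq] at hKM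
  rw [hfin.coe_toFinset]
  exact hKM.symm

lemma dotp_expand (x e : Fin n → ℝ) (μ : ℝ) :
    dotp (x - μ • e) (x - μ • e) = dotp x x - 2*μ*dotp x e + μ^2 * dotp e e := by
  simp only [dotp, Pi.sub_apply, Pi.smul_apply, smul_eq_mul, Finset.mul_sum,
    ← Finset.sum_sub_distrib, ← Finset.sum_add_distrib]
  exact Finset.sum_congr rfl fun i _ => by ring

/-- Core lemma: a non-optimal vertex of a sphere-inscribed polytope has an improving
neighbor (at the level of vertex sets). -/
lemma core (q : Fin n → ℝ) (ρ : ℝ) (c : Fin n → ℝ) :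
    ∀ N : ℕ, ∀ T : Finset (Fin n → ℝ), T.card ≤ N →
      (∀ v ∈ T, dotp (v - q) (v - q) = ρ) →
      ∀ a ∈ T, (∃ v0 ∈ T, dotp c a < dotp c v0) →
      ∃ w ∈ T, w ≠ a ∧ dotp c a < dotp c w ∧ ExposesIn T ({a, w} : Finset (Fin n → ℝ)) := by
  classical
  intro N
  induction N with
  | zero =>
    intro T hcard _ a haT _
    rw [Nat.le_zero, Finset.card_eq_zero] at hcard
    rw [hcard] at haT
    exact absurd haT (Finset.notMem_empty a)
  | succ N ih =>
    rintro T hcard hsph a haT ⟨v0, hv0T, himp⟩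
    have hv0a : v0 ≠ a := fun h => by rw [h] at himp; exact lt_irrefl _ himp
    -- processing an exposer: either done, or degenerate
    have process : ∀ ℓ : Fin n → ℝ, (∀ v ∈ T.erase a, dotp ℓ v < dotp ℓ a) →
        (∃ w ∈ T, w ≠ a ∧ dotp c a < dotp c w ∧ ExposesIn T ({a, w} : Finset (Fin n → ℝ))) ∨
        (∃ t : ℝ, 0 < t ∧ ∀ v ∈ T.erase a,
            dotp ℓ a - dotp ℓ v = t * (dotp c v - dotp c a)) := by
      intro ℓ hexp
      obtain ⟨t, htpos, hub, vm, hvmT, hvmeq, hvmc⟩ := core_step haT c ℓ hexp hv0T himp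
      by_cases hTT : T.filter (fun v => dotp (ℓ + t • c) v = dotp (ℓ + t • c) a) = T
      · right
        refine ⟨t, htpos, fun v hv => ?_⟩
        obtain ⟨hva, hvT⟩ := Finset.mem_erase.1 hv
        have hmem : v ∈ T.filter (fun v => dotp (ℓ + t • c) v = dotp (ℓ + t • c) a) := by
          rw [hTT]; exact hvT
        have heq := (Finset.mem_filter.1 hmem).2
        rw [dotp_add_left, dotp_add_left, dotp_smul_left, dotp_smul_left] at heq
        linear_combination -heq
      · left
        set T' := T.filter (fun v => dotp (ℓ + t • c) v = dotp (ℓ + t • c) a) with hT'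
        have haT' : a ∈ T' := Finset.mem_filter.2 ⟨haT, rfl⟩
        have hvmT' : vm ∈ T' := Finset.mem_filter.2 ⟨hvmT, hvmeq⟩
        have hsub : T' ⊆ T := Finset.filter_subset _ _
        have hlt : T'.card < T.card :=
          Finset.card_lt_card (Finset.ssubset_iff_subset_ne.2 ⟨hsub, hTT⟩)
        have hcard' : T'.card ≤ N := by omega
        have hsph' : ∀ v ∈ T', dotp (v - q) (v - q) = ρ := fun v hv => hsph v (hsub hv)
        obtain ⟨w, hwT', hwa, hwc, hexpw⟩ := ih T' hcard' hsph' a haT' ⟨vm, hvmT', hvmc⟩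
        have hET' : ExposesIn T T' := ⟨⟨a, haT'⟩, ℓ + t • c, dotp (ℓ + t • c) a, hub, hT'⟩
        exact ⟨w, hsub hwT', hwa, hwc, hET'.trans hexpw⟩
    have hexp0 : ∀ v ∈ T.erase a, dotp (a - q) v < dotp (a - q) a := fun v hv =>
      sphere_exposer (hsph a haT) (hsph v (Finset.mem_erase.1 hv).2) (Finset.mem_erase.1 hv).1
    -- two-element case
    by_cases hc2 : T.card ≤ 2
    · have hsub2 : ({a, v0} : Finset (Fin n → ℝ)) ⊆ T := by
        intro x hx
        rcases Finset.mem_insert.1 hx with rfl | hx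
        · exact haT
        · rw [Finset.mem_singleton.1 hx]; exact hv0T
      have hcard2 : ({a, v0} : Finset (Fin n → ℝ)).card = 2 := by
        rw [Finset.card_insert_of_notMem (by simp [Ne.symm hv0a]), Finset.card_singleton]
      have hTeq : ({a, v0} : Finset (Fin n → ℝ)) = T :=
        Finset.eq_of_subset_of_card_le hsub2 (by omega)
      refine ⟨v0, hv0T, hv0a, himp, ?_⟩
      rw [hTeq]
      exact ExposesIn.refl ⟨a, haT⟩
    push_neg at hc2
    by_cases hgoal : ∃ w ∈ T, w ≠ a ∧ dotp c a < dotp c w ∧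
        ExposesIn T ({a, w} : Finset (Fin n → ℝ))
    · exact hgoal
    exfalso
    have deg : ∀ ℓ : Fin n → ℝ, (∀ v ∈ T.erase a, dotp ℓ v < dotp ℓ a) →
        ∃ t : ℝ, 0 < t ∧ ∀ v ∈ T.erase a,
          dotp ℓ a - dotp ℓ v = t * (dotp c v - dotp c a) := by
      intro ℓ hexp
      rcases process ℓ hexp with h | h
      · exact absurd h hgoal
      · exact h
    obtain ⟨t0, ht0, hdeg0⟩ := deg (a - q) hexp0
    have hbpos : ∀ v ∈ T.erase a, 0 < dotp c v - dotp c a := by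
      intro v hv
      have h1 := hdeg0 v hv
      have h2 := hexp0 v hv
      nlinarith
    -- a second vertex distinct from v0
    have hv0e : v0 ∈ T.erase a := Finset.mem_erase.2 ⟨hv0a, hv0T⟩
    have hce : 2 ≤ (T.erase a).card := by
      rw [Finset.card_erase_of_mem haT]; omega
    obtain ⟨v2, hv2e, hv2v0⟩ :=
      Finset.exists_mem_ne (show 1 < (T.erase a).card by omega) v0
    have hv2T : v2 ∈ T := (Finset.mem_erase.1 hv2e).2
    -- vector identity via perturbed exposers
    set b0 := dotp c v0 - dotp c a with hb0
    set b2 := dotp c v2 - dotp c a with hb2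
    have hb0pos : 0 < b0 := hbpos v0 hv0e
    have hb2pos : 0 < b2 := hbpos v2 hv2e
    set η := b0 • (a - v2) - b2 • (a - v0) with hη
    have hηzero : η = 0 := by
      by_contra hηne
      have hηpos : 0 < dotp η η := dotp_self_pos hηne
      have hne : (T.erase a).Nonempty := ⟨v0, hv0e⟩
      set δ := (T.erase a).inf' hne
          (fun v' => (dotp (a-q) a - dotp (a-q) v') / (1 + |dotp η a - dotp η v'|)) with hδ
      have hδpos : 0 < δ := by
        rw [hδ, Finset.lt_inf'_iff]
        intro v' hv'
        exact div_pos (by linarith [hexp0 v' hv']) (by positivity)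
      have hexpδ : ∀ v' ∈ T.erase a, dotp ((a-q) + δ • η) v' < dotp ((a-q) + δ • η) a := by
        intro v' hv'
        rw [dotp_add_left, dotp_add_left, dotp_smul_left, dotp_smul_left]
        have h1 : δ ≤ (dotp (a-q) a - dotp (a-q) v') / (1 + |dotp η a - dotp η v'|) :=
          Finset.inf'_le _ hv'
        have h2 : (0:ℝ) < 1 + |dotp η a - dotp η v'| := by positivity
        rw [le_div_iff₀ h2] at h1
        have h3 : dotp η v' - dotp η a ≤ |dotp η a - dotp η v'| := by
          rw [abs_sub_comm]; exact le_abs_self _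
        nlinarith [abs_nonneg (dotp η a - dotp η v')]
      obtain ⟨t1, ht1, hdeg1⟩ := deg ((a-q) + δ • η) hexpδ
      -- subtract the two degeneracy relations
      have hsubt : ∀ v' ∈ T.erase a,
          δ * (dotp η a - dotp η v') = (t1 - t0) * (dotp c v' - dotp c a) := by
        intro v' hv'
        have h1 := hdeg0 v' hv'
        have h2 := hdeg1 v' hv'
        rw [dotp_add_left, dotp_add_left, dotp_smul_left, dotp_smul_left] at h2
        linarith
      have hs0 := hsubt v0 hv0e
      have hs2 := hsubt v2 hv2e
      -- compute dotp η η
      have hcompute : dotp η η = b0 * (dotp η a - dotp η v2) - b2 * (dotp η a - dotp η v0) := by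
        simp only [hη, dotp, Pi.sub_apply, Pi.smul_apply, smul_eq_mul, Finset.mul_sum,
          ← Finset.sum_sub_distrib]
        exact Finset.sum_congr rfl fun i _ => by ring
      have : δ * dotp η η = 0 := by
        have e0 : δ * (dotp η a - dotp η v0) = (t1 - t0) * b0 := hs0
        have e2 : δ * (dotp η a - dotp η v2) = (t1 - t0) * b2 := hs2
        calc δ * dotp η η = b0 * (δ * (dotp η a - dotp η v2))
              - b2 * (δ * (dotp η a - dotp η v0)) := by rw [hcompute]; ring
          _ = b0 * ((t1 - t0) * b2) - b2 * ((t1 - t0) * b0) := by rw [e0, e2]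
          _ = 0 := by ring
      nlinarith
    -- collinearity: v2 = v0, contradiction
    have hid : b0 • (a - v2) = b2 • (a - v0) := by
      have := sub_eq_zero.1 hηzero
      exact this
    set μ := b2 / b0 with hμ
    have hμpos : 0 < μ := div_pos hb2pos hb0pos
    have hav2 : a - v2 = μ • (a - v0) := by
      have h := congrArg (fun z : Fin n → ℝ => (b0⁻¹ : ℝ) • z) hid
      simp only [smul_smul] at h
      rw [inv_mul_cancel₀ (ne_of_gt hb0pos), one_smul] at h
      rw [h, hμ]
      congr 1
      field_simp
    have he0 : a - v0 ≠ 0 := sub_ne_zero.2 (Ne.symm hv0a)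
    have hee : 0 < dotp (a - v0) (a - v0) := dotp_self_pos he0
    have hq0 : dotp (v0 - q) (v0 - q) = ρ := hsph v0 hv0T
    have hq2 : dotp (v2 - q) (v2 - q) = ρ := hsph v2 hv2T
    have hqa : dotp (a - q) (a - q) = ρ := hsph a haT
    have hrw2 : v2 - q = (a - q) - μ • (a - v0) := by rw [← hav2]; abel
    have hrw0 : v0 - q = (a - q) - (1:ℝ) • (a - v0) := by rw [one_smul]; abel
    have hexp2 : ρ = ρ - 2*μ*dotp (a-q) (a-v0) + μ^2 * dotp (a-v0) (a-v0) := by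
      conv_lhs => rw [← hq2]
      rw [hrw2, dotp_expand, hqa]
    have hexp0' : ρ = ρ - 2*1*dotp (a-q) (a-v0) + 1^2 * dotp (a-v0) (a-v0) := by
      conv_lhs => rw [← hq0]
      rw [hrw0, dotp_expand, hqa]
    have hfac : μ * dotp (a-v0) (a-v0) * (μ - 1) = 0 := by
      linear_combination (-1 : ℝ) * hexp2 + μ * hexp0'
    have hμ1 : μ = 1 := by
      rcases mul_eq_zero.1 hfac with h | h
      · rcases mul_eq_zero.1 h with h' | h'
        · linarith
        · linarith
      · linarith
    have : v2 = v0 := by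
      have h := hav2
      rw [hμ1, one_smul] at h
      exact sub_right_inj.1 h
    exact hv2v0 this
/-- Abstract paths. -/
inductive GPath (R : (Fin n → ℝ) → (Fin n → ℝ) → Prop) :
    (Fin n → ℝ) → (Fin n → ℝ) → ℕ → Prop
  | nil (x : Fin n → ℝ) : GPath R x x 0
  | cons {x y z : Fin n → ℝ} {m : ℕ} (h : R x y) (p : GPath R y z m) : GPath R x z (m + 1)

lemma GPath.mono {R R' : (Fin n → ℝ) → (Fin n → ℝ) → Prop}
    (hRR : ∀ x y, R x y → R' x y) {x z : Fin n → ℝ} {m : ℕ}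
    (p : GPath R x z m) : GPath R' x z m := by
  induction p with
  | nil x => exact GPath.nil x
  | cons h _ ih => exact GPath.cons (hRR _ _ h) ih

lemma GPath.append {R : (Fin n → ℝ) → (Fin n → ℝ) → Prop} {x y z : Fin n → ℝ} {m k : ℕ}
    (p : GPath R x y m) (q : GPath R y z k) : GPath R x z (m + k) := by
  induction p with
  | nil x => simpa using q
  | cons h _ ih => exact (Nat.succ_add _ _) ▸ GPath.cons h (ih q)

lemma GPath.count {R : (Fin n → ℝ) → (Fin n → ℝ) → Prop} {ℓ : Fin n → ℝ}
    (hdrop : ∀ x y, R x y → dotp ℓ y + 1/4 ≤ dotp ℓ x) {x z : Fin n → ℝ} {m : ℕ}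
    (p : GPath R x z m) : dotp ℓ z + m / 4 ≤ dotp ℓ x := by
  induction p with
  | nil x => simp
  | cons h p ih =>
    have h1 := hdrop _ _ h
    push_cast
    push_cast at ih
    linarith

/-- Convert an abstract path to a `Fin`-indexed path. -/
lemma GPath.toFun {R : (Fin n → ℝ) → (Fin n → ℝ) → Prop} {x z : Fin n → ℝ} {m : ℕ}
    (p : GPath R x z m) :
    ∃ p' : Fin (m + 1) → (Fin n → ℝ), p' 0 = x ∧ p' (Fin.last m) = z ∧
      ∀ i : Fin m, R (p' i.castSucc) (p' i.succ) := by
  induction p with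
  | nil x =>
    exact ⟨fun _ => x, rfl, rfl, fun i => i.elim0⟩
  | @cons x y z m h p ih =>
    obtain ⟨p', hp0, hpl, hps⟩ := ih
    refine ⟨Fin.cons x p', Fin.cons_zero _ _, ?_, ?_⟩
    · rw [← Fin.succ_last, Fin.cons_succ]
      exact hpl
    · intro i
      induction i using Fin.cases with
      | zero =>
        have h1 : (0 : Fin (m+1)).castSucc = 0 := rfl
        have h2 : (0 : Fin (m+1)).succ = (Fin.succ 0 : Fin (m+2)) := rfl
        rw [h1, h2, Fin.cons_zero, Fin.cons_succ, hp0]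
        exact h
      | succ j =>
        have h1 : (j.succ).castSucc = (j.castSucc).succ := by
          simp [Fin.ext_iff]
        rw [h1, Fin.cons_succ, Fin.cons_succ]
        exact hps j

/-- quarter-integrality of a term -/
lemma quarter_term {a b : ℝ} (ha : a = 0 ∨ a = 1/2 ∨ a = 1) (hb : b = 0 ∨ b = 1/2 ∨ b = 1) :
    ∃ k : ℤ, (a - 1/2) * b = (k : ℝ)/4 := by
  rcases ha with rfl|rfl|rfl <;> rcases hb with rfl|rfl|rfl
  exacts [⟨0, by norm_num⟩, ⟨-1, by norm_num⟩, ⟨-2, by norm_num⟩, ⟨0, by norm_num⟩,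
    ⟨0, by norm_num⟩, ⟨0, by norm_num⟩, ⟨0, by norm_num⟩, ⟨1, by norm_num⟩, ⟨2, by norm_num⟩]

/-- quarter-integrality of dot products of half-integral vectors -/
lemma dotp_quarter {u x : Fin n → ℝ}
    (hu : ∀ i, u i = 0 ∨ u i = 1/2 ∨ u i = 1) (hx : ∀ i, x i = 0 ∨ x i = 1/2 ∨ x i = 1) :
    ∃ k : ℤ, dotp (u - (fun _ => (1/2 : ℝ))) x = (k : ℝ)/4 := by
  choose K hK using fun i => quarter_term (hu i) (hx i)
  refine ⟨∑ i, K i, ?_⟩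
  rw [dotp]
  push_cast
  rw [Finset.sum_div]
  apply Finset.sum_congr rfl
  intro i _
  simpa using hK i

lemma quarter_gap {x y : ℝ} (hx : ∃ k : ℤ, x = (k:ℝ)/4) (hy : ∃ k : ℤ, y = (k:ℝ)/4)
    (hxy : x < y) : x + 1/4 ≤ y := by
  obtain ⟨k, rfl⟩ := hx
  obtain ⟨l, rfl⟩ := hy
  have : k < l := by
    by_contra h
    push_neg at h
    have : (l:ℝ) ≤ (k:ℝ) := by exact_mod_cast h
    linarith
  have : (k:ℝ) + 1 ≤ (l:ℝ) := by exact_mod_cast this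
  linarith

/-- the sphere radius of a half-integral vertex with exactly `n - s` halves -/
lemma sphere_radius {s : ℕ} (hs : s ≤ n) {v : Fin n → ℝ}
    (hv : ∀ i, v i = 0 ∨ v i = 1/2 ∨ v i = 1)
    (hc : (Finset.univ.filter fun i => v i = 1 / 2).card = n - s) :
    dotp (v - (fun _ => (1/2 : ℝ))) (v - (fun _ => (1/2:ℝ))) = s / 4 := by
  have hterm : ∀ i, (v i - 1/2) * (v i - 1/2) = if v i = 1/2 then 0 else 1/4 := by
    intro i
    rcases hv i with h|h|h <;> rw [h] <;> norm_num
  have : dotp (v - (fun _ => (1/2 : ℝ))) (v - (fun _ => (1/2:ℝ)))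
      = ∑ i, if v i = 1/2 then (0:ℝ) else 1/4 := by
    rw [dotp]
    apply Finset.sum_congr rfl
    intro i _
    simpa using hterm i
  rw [this, Finset.sum_ite, Finset.sum_const_zero, zero_add, Finset.sum_const]
  have hcards := Finset.card_filter_add_card_filter_not
    (s := (Finset.univ : Finset (Fin n))) (p := fun i => v i = 1/2)
  rw [Finset.card_univ, Fintype.card_fin] at hcards
  have h14 : v = v := rfl
  have hfneg : (Finset.univ.filter fun i => ¬ v i = 1 / 2).card = s := by
    have : (Finset.univ.filter fun i => v i = 1 / 2).card = n - s := hc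
    omega
  rw [hfneg]
  rw [nsmul_eq_mul]
  ring

/-- expansion of the square of a sum -/
lemma dotp_expand_add (x y : Fin n → ℝ) :
    dotp (x + y) (x + y) = dotp x x + 2 * dotp x y + dotp y y := by
  simp only [dotp, Pi.add_apply, ← Finset.sum_add_distrib, Finset.mul_sum]
  exact Finset.sum_congr rfl fun i _ => by ring

/-- Inside a face (with vertex set `T`), there is a monotone path from any vertex
to a `c`-maximal vertex. -/
lemma inner (q : Fin n → ℝ) (ρ : ℝ) (c : Fin n → ℝ) :
    ∀ K : ℕ, ∀ T : Finset (Fin n → ℝ),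
      (∀ v ∈ T, dotp (v - q) (v - q) = ρ) →
      ∀ a ∈ T, (T.filter (fun v => dotp c a < dotp c v)).card ≤ K →
      ∃ (b : Fin n → ℝ) (m : ℕ), b ∈ T ∧ (∀ v ∈ T, dotp c v ≤ dotp c b) ∧
        GPath (fun x y => x ≠ y ∧ x ∈ T ∧ y ∈ T ∧ dotp c x < dotp c y ∧
          ExposesIn T ({x, y} : Finset (Fin n → ℝ))) a b m := by
  classical
  intro K
  induction K with
  | zero =>
    intro T hsph a haT hfilter
    refine ⟨a, 0, haT, ?_, GPath.nil a⟩
    intro v hv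
    by_contra h
    push_neg at h
    have : v ∈ T.filter (fun v => dotp c a < dotp c v) := Finset.mem_filter.2 ⟨hv, h⟩
    rw [Finset.card_eq_zero.1 (Nat.le_zero.1 hfilter)] at this
    exact Finset.notMem_empty v this
  | succ K ih =>
    intro T hsph a haT hfilter
    by_cases hopt : ∀ v ∈ T, dotp c v ≤ dotp c a
    · exact ⟨a, 0, haT, hopt, GPath.nil a⟩
    push_neg at hopt
    obtain ⟨v0, hv0T, hv0⟩ := hopt
    obtain ⟨w, hwT, hwa, hwc, hwexp⟩ :=
      core q ρ c T.card T le_rfl hsph a haT ⟨v0, hv0T, hv0⟩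
    have hstep : (T.filter (fun v => dotp c w < dotp c v)).card ≤ K := by
      have hss : T.filter (fun v => dotp c w < dotp c v)
          ⊂ T.filter (fun v => dotp c a < dotp c v) := by
        refine Finset.ssubset_iff_subset_ne.2 ⟨?_, ?_⟩
        · intro v hv
          obtain ⟨hvT, hvv⟩ := Finset.mem_filter.1 hv
          exact Finset.mem_filter.2 ⟨hvT, lt_trans hwc hvv⟩
        · intro h
          have hw1 : w ∈ T.filter (fun v => dotp c a < dotp c v) :=
            Finset.mem_filter.2 ⟨hwT, hwc⟩
          rw [← h] at hw1
          exact lt_irrefl _ (Finset.mem_filter.1 hw1).2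
      have := Finset.card_lt_card hss
      omega
    obtain ⟨b, m, hbT, hbmax, hpath⟩ := ih T hsph w hwT hstep
    exact ⟨b, m + 1, hbT, hbmax,
      GPath.cons ⟨Ne.symm hwa, haT, hwT, hwc, hwexp⟩ hpath⟩

/-- The outer parametric walk. `ℓ` is the exposing functional of the start vertex. -/
lemma outer (q : Fin n → ℝ) (ρ : ℝ) (c ℓ : Fin n → ℝ) (V : Finset (Fin n → ℝ))
    (hsph : ∀ v ∈ V, dotp (v - q) (v - q) = ρ) :
    ∀ K : ℕ, ∀ w ∈ V, ∀ t : ℝ, 0 < t →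
      (∀ v ∈ V, dotp (ℓ + t • c) v ≤ dotp (ℓ + t • c) w) →
      (∀ v ∈ V, dotp (ℓ + t • c) v = dotp (ℓ + t • c) w → dotp c v ≤ dotp c w) →
      (V.filter (fun v => dotp c w < dotp c v)).card ≤ K →
      ∃ (b : Fin n → ℝ) (m : ℕ), b ∈ V ∧ (∀ v ∈ V, dotp c v ≤ dotp c b) ∧
        GPath (fun x y => x ≠ y ∧ x ∈ V ∧ y ∈ V ∧ dotp c x < dotp c y ∧
          dotp ℓ y < dotp ℓ x ∧ ExposesIn V ({x, y} : Finset (Fin n → ℝ))) w b m := by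
  classical
  intro K
  induction K with
  | zero =>
    intro w hwV t ht hub htie hfilter
    refine ⟨w, 0, hwV, ?_, GPath.nil w⟩
    intro v hv
    by_contra h
    push_neg at h
    have : v ∈ V.filter (fun v => dotp c w < dotp c v) := Finset.mem_filter.2 ⟨hv, h⟩
    rw [Finset.card_eq_zero.1 (Nat.le_zero.1 hfilter)] at this
    exact Finset.notMem_empty v this
  | succ K ih =>
    intro w hwV t ht hub htie hfilter
    by_cases hopt : ∀ v ∈ V, dotp c v ≤ dotp c w
    · exact ⟨w, 0, hwV, hopt, GPath.nil w⟩
    push_neg at hopt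
    set D := V.filter (fun v => dotp c w < dotp c v) with hD
    have hDne : D.Nonempty := by
      obtain ⟨v0, hv0V, hv0⟩ := hopt
      exact ⟨v0, Finset.mem_filter.2 ⟨hv0V, hv0⟩⟩
    have hDstrict : ∀ v ∈ D, dotp (ℓ + t • c) v < dotp (ℓ + t • c) w := by
      intro v hv
      obtain ⟨hvV, hvc⟩ := Finset.mem_filter.1 hv
      rcases lt_or_eq_of_le (hub v hvV) with h | h
      · exact h
      · exact absurd (htie v hvV h) (not_le.2 hvc)
    set t' := t + D.inf' hDne (fun v =>
      (dotp (ℓ + t • c) w - dotp (ℓ + t • c) v) / (dotp c v - dotp c w)) with ht'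
    have htt' : t < t' := by
      rw [ht']
      have : 0 < D.inf' hDne (fun v =>
          (dotp (ℓ + t • c) w - dotp (ℓ + t • c) v) / (dotp c v - dotp c w)) := by
        rw [Finset.lt_inf'_iff]
        intro v hv
        have h1 := hDstrict v hv
        have h2 := (Finset.mem_filter.1 hv).2
        exact div_pos (by linarith) (by linarith)
      linarith
    have ht'pos : 0 < t' := by linarith
    -- key expansion
    have hexpand : ∀ x : Fin n → ℝ,
        dotp (ℓ + t' • c) x = dotp (ℓ + t • c) x + (t' - t) * dotp c x := by
      intro x
      rw [dotp_add_left, dotp_add_left, dotp_smul_left, dotp_smul_left]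
      ring
    have hub' : ∀ v ∈ V, dotp (ℓ + t' • c) v ≤ dotp (ℓ + t' • c) w := by
      intro v hvV
      rw [hexpand, hexpand]
      by_cases hvD : v ∈ D
      · have h1 : t' - t ≤ (dotp (ℓ + t • c) w - dotp (ℓ + t • c) v) / (dotp c v - dotp c w) := by
          rw [ht']
          have := Finset.inf'_le (fun v =>
            (dotp (ℓ + t • c) w - dotp (ℓ + t • c) v) / (dotp c v - dotp c w)) hvD
          linarith
        have h2 : 0 < dotp c v - dotp c w := by
          have := (Finset.mem_filter.1 hvD).2; linarith
        rw [le_div_iff₀ h2] at h1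
        nlinarith
      · have h2 : dotp c v ≤ dotp c w := by
          by_contra h
          push_neg at h
          exact hvD (Finset.mem_filter.2 ⟨hvV, h⟩)
        have h3 := hub v hvV
        nlinarith
    set T' := V.filter (fun v => dotp (ℓ + t' • c) v = dotp (ℓ + t' • c) w) with hT'
    have hwT' : w ∈ T' := Finset.mem_filter.2 ⟨hwV, rfl⟩
    obtain ⟨vm, hvmD, hvmeq⟩ := Finset.exists_mem_eq_inf' hDne (fun v =>
      (dotp (ℓ + t • c) w - dotp (ℓ + t • c) v) / (dotp c v - dotp c w))
    have hvmV : vm ∈ V := (Finset.mem_filter.1 hvmD).1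
    have hvmc : dotp c w < dotp c vm := (Finset.mem_filter.1 hvmD).2
    have hvmT' : vm ∈ T' := by
      refine Finset.mem_filter.2 ⟨hvmV, ?_⟩
      rw [hexpand, hexpand]
      have hbpos : 0 < dotp c vm - dotp c w := by linarith
      have : t' - t = (dotp (ℓ + t • c) w - dotp (ℓ + t • c) vm) / (dotp c vm - dotp c w) := by
        rw [ht', ← hvmeq]; ring
      rw [this]
      field_simp
      ring
    have hVT' : ExposesIn V T' := ⟨⟨w, hwT'⟩, ℓ + t' • c, dotp (ℓ + t' • c) w, hub', hT'⟩
    have hsph' : ∀ v ∈ T', dotp (v - q) (v - q) = ρ := fun v hv =>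
      hsph v (Finset.filter_subset _ _ hv)
    -- inner path within T'
    obtain ⟨b', m', hb'T', hb'max, hpath'⟩ := inner q ρ c T'.card T' hsph' w hwT'
      (Finset.card_le_card (Finset.filter_subset _ _))
    have hb'V : b' ∈ V := Finset.filter_subset _ _ hb'T'
    have hb'c : dotp c w < dotp c b' := lt_of_lt_of_le hvmc (hb'max vm hvmT')
    -- convert inner path steps to outer steps
    have hpath'' : GPath (fun x y => x ≠ y ∧ x ∈ V ∧ y ∈ V ∧ dotp c x < dotp c y ∧
        dotp ℓ y < dotp ℓ x ∧ ExposesIn V ({x, y} : Finset (Fin n → ℝ))) w b' m' := by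
      apply GPath.mono (fun x y hxy => ?_) hpath'
      obtain ⟨hne, hxT', hyT', hc, hexp⟩ := hxy
      have hxV : x ∈ V := Finset.filter_subset _ _ hxT'
      have hyV : y ∈ V := Finset.filter_subset _ _ hyT'
      have hfx : dotp (ℓ + t' • c) x = dotp (ℓ + t' • c) w := (Finset.mem_filter.1 hxT').2
      have hfy : dotp (ℓ + t' • c) y = dotp (ℓ + t' • c) w := (Finset.mem_filter.1 hyT').2
      have hldec : dotp ℓ y < dotp ℓ x := by
        have h1 : dotp (ℓ + t' • c) x = dotp (ℓ + t' • c) y := by rw [hfx, hfy]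
        rw [dotp_add_left, dotp_add_left, dotp_smul_left, dotp_smul_left] at h1
        nlinarith
      exact ⟨hne, hxV, hyV, hc, hldec, hVT'.trans hexp⟩
    -- recurse from b'
    have htie' : ∀ v ∈ V, dotp (ℓ + t' • c) v = dotp (ℓ + t' • c) b' → dotp c v ≤ dotp c b' := by
      intro v hvV heq
      have hfb' : dotp (ℓ + t' • c) b' = dotp (ℓ + t' • c) w := (Finset.mem_filter.1 hb'T').2
      have : v ∈ T' := Finset.mem_filter.2 ⟨hvV, by rw [heq, hfb']⟩
      exact hb'max v this
    have hub'' : ∀ v ∈ V, dotp (ℓ + t' • c) v ≤ dotp (ℓ + t' • c) b' := by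
      intro v hvV
      have hfb' : dotp (ℓ + t' • c) b' = dotp (ℓ + t' • c) w := (Finset.mem_filter.1 hb'T').2
      rw [hfb']
      exact hub' v hvV
    have hmeas : (V.filter (fun v => dotp c b' < dotp c v)).card ≤ K := by
      have hss : V.filter (fun v => dotp c b' < dotp c v) ⊂ D := by
        refine Finset.ssubset_iff_subset_ne.2 ⟨?_, ?_⟩
        · intro v hv
          obtain ⟨hvV, hvc⟩ := Finset.mem_filter.1 hv
          exact Finset.mem_filter.2 ⟨hvV, lt_trans hb'c hvc⟩
        · intro h
          have hb1 : b' ∈ D := Finset.mem_filter.2 ⟨hb'V, hb'c⟩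
          rw [← h] at hb1
          exact lt_irrefl _ (Finset.mem_filter.1 hb1).2
      have h1 := Finset.card_lt_card hss
      have h2 : D.card ≤ K + 1 := hfilter
      omega
    obtain ⟨b, m2, hbV, hbmax, hpath2⟩ := ih b' hb'V t' ht'pos hub'' htie' hmeas
    exact ⟨b, m' + m2, hbV, hbmax, hpath''.append hpath2⟩

end HIP

open HIP in
/-- **Proposition (sparse half-integral bound).**
Let `P ⊆ ℝ^n` be a half-integral polytope of dimension `d`, and suppose there is
an integer `s` such that every vertex of `P` has exactly `n − s` coordinates equal
to `1/2`. Then for every `c ∈ ℝ^n` and every vertex `u` of `P` there is a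
`c`-monotone path of length at most `2s` from `u` to a vertex maximizing `cᵀx`
over `P`. -/
theorem half_integral_sparse_monotone_path {n : ℕ} (P : Set (Fin n → ℝ))
    (hP : IsPolytope P)
    (hhalf : ∀ v, IsVertexOf P v → ∀ i, v i = 0 ∨ v i = 1 / 2 ∨ v i = 1)
    (s : ℕ) (hs : s ≤ n)
    (hsupp : ∀ v, IsVertexOf P v →
      (Finset.univ.filter fun i => v i = 1 / 2).card = n - s)
    (c : Fin n → ℝ) (u : Fin n → ℝ) (hu : IsVertexOf P u) :
    ∃ (m : ℕ) (p : Fin (m + 1) → (Fin n → ℝ)),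
      m ≤ 2 * s ∧
      IsMonotonePath P c m p ∧
      p 0 = u ∧
      (∀ x ∈ P, dotp c x ≤ dotp c (p (Fin.last m))) := by
  classical
  obtain ⟨V, hVset, hVP⟩ := exists_vertexFinset P hP
  set q : Fin n → ℝ := fun _ => (1/2 : ℝ) with hq
  set ℓ : Fin n → ℝ := u - q with hℓ
  have hvertV : ∀ v ∈ V, IsVertexOf P v := by
    intro v hv
    have : v ∈ (V : Set (Fin n → ℝ)) := hv
    rw [hVset] at this
    exact this
  have huV : u ∈ V := by
    have : u ∈ (V : Set (Fin n → ℝ)) := by rw [hVset]; exact hu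
    exact this
  have hsph : ∀ v ∈ V, dotp (v - q) (v - q) = (s:ℝ)/4 := fun v hv =>
    sphere_radius hs (hhalf v (hvertV v hv)) (hsupp v (hvertV v hv))
  -- initialization of the parametric walk
  have hinit : ∃ t : ℝ, 0 < t ∧
      (∀ v ∈ V, dotp (ℓ + t • c) v ≤ dotp (ℓ + t • c) u) ∧
      (∀ v ∈ V, dotp (ℓ + t • c) v = dotp (ℓ + t • c) u → dotp c v ≤ dotp c u) := by
    by_cases hVu : (V.erase u).Nonempty
    · set t0 := (V.erase u).inf' hVu
        (fun v => (dotp ℓ u - dotp ℓ v) / (1 + |dotp c v - dotp c u|)) with ht0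
      have hstrict : ∀ v ∈ V.erase u, dotp ℓ v < dotp ℓ u := by
        intro v hv
        obtain ⟨hvu, hvV⟩ := Finset.mem_erase.1 hv
        exact sphere_exposer (hsph u huV) (hsph v hvV) hvu
      have ht0pos : 0 < t0 := by
        rw [ht0, Finset.lt_inf'_iff]
        intro v hv
        exact div_pos (by linarith [hstrict v hv]) (by positivity)
      have hkey : ∀ v ∈ V.erase u, dotp (ℓ + t0 • c) v < dotp (ℓ + t0 • c) u := by
        intro v hv
        rw [dotp_add_left, dotp_add_left, dotp_smul_left, dotp_smul_left]
        have h1 : t0 ≤ (dotp ℓ u - dotp ℓ v) / (1 + |dotp c v - dotp c u|) := by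
          rw [ht0]; exact Finset.inf'_le _ hv
        have h2 : (0:ℝ) < 1 + |dotp c v - dotp c u| := by positivity
        rw [le_div_iff₀ h2] at h1
        have h3 : dotp c v - dotp c u ≤ |dotp c v - dotp c u| := le_abs_self _
        nlinarith [abs_nonneg (dotp c v - dotp c u)]
      refine ⟨t0, ht0pos, ?_, ?_⟩
      · intro v hvV
        by_cases hvu : v = u
        · rw [hvu]
        · exact le_of_lt (hkey v (Finset.mem_erase.2 ⟨hvu, hvV⟩))
      · intro v hvV heq
        by_cases hvu : v = u
        · rw [hvu]
        · exact absurd heq (ne_of_lt (hkey v (Finset.mem_erase.2 ⟨hvu, hvV⟩)))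
    · refine ⟨1, one_pos, ?_, ?_⟩
      all_goals
        intro v hvV
        have hvu : v = u := by
          by_contra hne
          exact hVu ⟨v, Finset.mem_erase.2 ⟨hne, hvV⟩⟩
      · rw [hvu]
      · intro _; rw [hvu]
  obtain ⟨t0, ht0pos, hub0, htie0⟩ := hinit
  obtain ⟨b, m, hbV, hbmax, hpath⟩ := outer q ((s:ℝ)/4) c ℓ V hsph
    (V.filter (fun v => dotp c u < dotp c v)).card u huV t0 ht0pos hub0 htie0 le_rfl
  -- upgrade the path relation
  have hpath2 : GPath (fun x y => (x ≠ y ∧ IsVertexOf P x ∧ IsVertexOf P y ∧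
      IsExposed ℝ P (segment ℝ x y) ∧ dotp c x < dotp c y) ∧
      dotp ℓ y + 1/4 ≤ dotp ℓ x) u b m := by
    apply GPath.mono (fun x y hxy => ?_) hpath
    obtain ⟨hne, hxV, hyV, hc, hl, hexp⟩ := hxy
    have hxvert : IsVertexOf P x := hvertV x hxV
    have hyvert : IsVertexOf P y := hvertV y hyV
    have hedge : IsExposed ℝ P (segment ℝ x y) := by
      have h1 := hexp.isExposed
      rw [← hVP] at h1
      have h2 : ((({x, y} : Finset (Fin n → ℝ)) : Set (Fin n → ℝ))) = {x, y} := by simp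
      rw [h2, convexHull_pair] at h1
      exact h1
    have hqdrop : dotp ℓ y + 1/4 ≤ dotp ℓ x := by
      apply quarter_gap
      · exact dotp_quarter (hhalf u hu) (hhalf y hyvert)
      · exact dotp_quarter (hhalf u hu) (hhalf x hxvert)
      · exact hl
    exact ⟨⟨hne, hxvert, hyvert, hedge, hc⟩, hqdrop⟩
  -- length bound
  have hcount : dotp ℓ b + (m:ℝ)/4 ≤ dotp ℓ u :=
    GPath.count (fun x y h => h.2) hpath2
  have hrange : dotp ℓ u - dotp ℓ b ≤ (s:ℝ)/2 := by
    have h1 : dotp ℓ u - dotp ℓ b = dotp ℓ (u - b) := (dotp_sub_right ℓ u b).symm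
    have h2 : u - b = (u - q) - (b - q) := by abel
    have h3 : dotp ℓ (u - b) = dotp ℓ (u - q) - dotp ℓ (b - q) := by
      rw [h2, dotp_sub_right]
    have h4 : dotp ℓ (u - q) = (s:ℝ)/4 := by rw [hℓ]; exact hsph u huV
    have h5 : (0:ℝ) ≤ dotp ((u-q) + (b-q)) ((u-q) + (b-q)) := by
      have : ∀ x : Fin n → ℝ, 0 ≤ dotp x x :=
        fun x => Finset.sum_nonneg fun i _ => mul_self_nonneg (x i)
      exact this _
    rw [dotp_expand_add] at h5
    have h6 : dotp (u-q) (u-q) = (s:ℝ)/4 := hsph u huV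
    have h7 : dotp (b-q) (b-q) = (s:ℝ)/4 := hsph b hbV
    have h8 : -((s:ℝ)/4) ≤ dotp (u-q) (b-q) := by rw [h6, h7] at h5; linarith
    have h9 : dotp ℓ (b - q) = dotp (u - q) (b - q) := by rw [hℓ]
    linarith [h1, h3, h4, h9]
  have hmle : m ≤ 2 * s := by
    have : (m:ℝ)/4 ≤ (s:ℝ)/2 := by linarith
    have h2 : (m:ℝ) ≤ 2*(s:ℝ) := by linarith
    exact_mod_cast h2
  -- convert to a Fin-indexed path
  obtain ⟨p, hp0, hpl, hpstep⟩ := hpath2.toFun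
  refine ⟨m, p, hmle, ⟨?_, ?_⟩, hp0, ?_⟩
  · -- all path points are vertices
    intro i
    rcases Nat.eq_zero_or_pos m with hm | hm
    · subst hm
      have : i = 0 := by omega
      rw [this, hp0]; exact hu
    · obtain ⟨m', rfl⟩ : ∃ m', m = m' + 1 := ⟨m - 1, by omega⟩
      induction i using Fin.lastCases with
      | last =>
        have h := hpstep (Fin.last m')
        rw [Fin.succ_last] at h
        exact h.1.2.2.1
      | cast j =>
        have h := hpstep j
        exact h.1.2.1
  · intro i
    have h := hpstep i
    exact ⟨⟨h.1.1, h.1.2.1, h.1.2.2.1, h.1.2.2.2.1⟩, h.1.2.2.2.2⟩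
  · intro x hx
    rw [hpl]
    rw [hVP] at hx
    exact dotp_le_of_mem_hull hbmax hx
end

section
/- Let A be an integer r×n matrix and b ∈ ℤ^r, and suppose P = {x ∈ ℝ^n : Ax ≤ b} ⊆ [0,k]^n is a bounded polytope of dimension d ≥ 1 all of whose vertices lie in ℤ^n (a (0,k)-lattice polytope). Then for every c ∈ ℝ^n and every vertex u of P there exists a c-monotone path of length at most d·n·k·‖A‖∞ from u to a vertex maximizing x ↦ cᵀx over P. -/
open Set Finset

/-- `‖A‖∞`: the maximum absolute value of an entry of an integer matrix `A`. -/
def matNormInf {r n : ℕ} (A : Matrix (Fin r) (Fin n) ℤ) : ℕ :=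
  Finset.univ.sup fun p : Fin r × Fin n => (A p.1 p.2).natAbs

namespace LatticePivot

open scoped Classical

variable {n r : ℕ}

lemma dotp_isLinear (w : Fin n → ℝ) : IsLinearMap ℝ (dotp w) := by
  constructor
  · intro x y
    simp only [dotp, Pi.add_apply, mul_add, Finset.sum_add_distrib]
  · intro a x
    simp only [dotp, Pi.smul_apply, smul_eq_mul, Finset.mul_sum]
    exact Finset.sum_congr rfl fun i _ => by ring

noncomputable def dotCLM (w : Fin n → ℝ) : (Fin n → ℝ) →L[ℝ] ℝ :=
  LinearMap.toContinuousLinearMap (IsLinearMap.mk' (dotp w) (dotp_isLinear w))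

@[simp] lemma dotCLM_apply (w x : Fin n → ℝ) : dotCLM w x = dotp w x := rfl

lemma dotp_add_left (w₁ w₂ x : Fin n → ℝ) : dotp (w₁ + w₂) x = dotp w₁ x + dotp w₂ x := by
  simp only [dotp, Pi.add_apply, add_mul, Finset.sum_add_distrib]

lemma dotp_smul_left (a : ℝ) (w x : Fin n → ℝ) : dotp (a • w) x = a * dotp w x := by
  simp only [dotp, Pi.smul_apply, smul_eq_mul, Finset.mul_sum, mul_assoc]

lemma dotp_neg_left (w x : Fin n → ℝ) : dotp (-w) x = -dotp w x := by
  simp only [dotp, Pi.neg_apply, neg_mul, Finset.sum_neg_distrib]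

lemma dotp_sub_right (w x y : Fin n → ℝ) : dotp w (x - y) = dotp w x - dotp w y := by
  simp only [dotp, Pi.sub_apply, mul_sub, Finset.sum_sub_distrib]

lemma dotp_smul_right (w : Fin n → ℝ) (a : ℝ) (x : Fin n → ℝ) :
    dotp w (a • x) = a * dotp w x := by
  simp only [dotp, Pi.smul_apply, smul_eq_mul, Finset.mul_sum]
  exact Finset.sum_congr rfl fun i _ => by ring

lemma dotp_self_pos {z : Fin n → ℝ} (hz : z ≠ 0) : 0 < dotp z z := by
  obtain ⟨j, hj⟩ := Function.ne_iff.1 hz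
  exact Finset.sum_pos' (fun i _ => mul_self_nonneg _)
    ⟨j, Finset.mem_univ j, mul_self_pos.2 hj⟩

lemma clm_eq_dotp (f : (Fin n → ℝ) →L[ℝ] ℝ) : ∃ w, ∀ x, f x = dotp w x := by
  refine ⟨fun i => f (Pi.single i 1), fun x => ?_⟩
  have hx : x = ∑ i, x i • (Pi.single i (1:ℝ) : Fin n → ℝ) := by
    funext j
    simp [Finset.sum_apply, Pi.single_apply]
  calc f x = f (∑ i, x i • (Pi.single i (1:ℝ) : Fin n → ℝ)) := by rw [← hx]
    _ = ∑ i, x i • f (Pi.single i (1:ℝ)) := by rw [map_sum]; exact Finset.sum_congr rfl fun i _ => by rw [map_smul]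
    _ = dotp (fun i => f (Pi.single i 1)) x := by
        simp [dotp, smul_eq_mul, mul_comm]

lemma dotp_le_hull {S : Finset (Fin n → ℝ)} {w : Fin n → ℝ} {M : ℝ}
    (h : ∀ s ∈ S, dotp w s ≤ M) :
    ∀ x ∈ convexHull ℝ (S : Set (Fin n → ℝ)), dotp w x ≤ M := by
  have hlin : IsLinearMap ℝ (dotp w) := by
    constructor
    · intro x y; simp only [dotp, Pi.add_apply, mul_add, Finset.sum_add_distrib]
    · intro a x; simp only [dotp, Pi.smul_apply, smul_eq_mul, Finset.mul_sum]
      exact Finset.sum_congr rfl fun i _ => by ring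
  intro x hx
  have := convexHull_min (show (S : Set (Fin n → ℝ)) ⊆ {x | dotp w x ≤ M} from fun s hs => h s hs)
    (convex_halfSpace_le hlin M)
  exact this hx

noncomputable def Tmax (S : Finset (Fin n → ℝ)) (w : Fin n → ℝ) : Finset (Fin n → ℝ) :=
  S.filter (fun s => ∀ s' ∈ S, dotp w s' ≤ dotp w s)
lemma Tmax_subset (S : Finset (Fin n → ℝ)) (w : Fin n → ℝ) : Tmax S w ⊆ S :=
  Finset.filter_subset _ _
lemma mem_Tmax {S : Finset (Fin n → ℝ)} {w s : Fin n → ℝ} :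
    s ∈ Tmax S w ↔ s ∈ S ∧ ∀ s' ∈ S, dotp w s' ≤ dotp w s := Finset.mem_filter
lemma Tmax_nonempty {S : Finset (Fin n → ℝ)} (hS : S.Nonempty) (w : Fin n → ℝ) :
    (Tmax S w).Nonempty := by
  obtain ⟨t, ht, hmax⟩ := S.exists_max_image (dotp w) hS
  exact ⟨t, mem_Tmax.2 ⟨ht, hmax⟩⟩

lemma hull_Tmax {S : Finset (Fin n → ℝ)} (hS : S.Nonempty) (w : Fin n → ℝ) :
    {x ∈ convexHull ℝ (S : Set (Fin n → ℝ)) |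
      ∀ y ∈ convexHull ℝ (S : Set (Fin n → ℝ)), dotp w y ≤ dotp w x}
      = convexHull ℝ ((Tmax S w : Finset (Fin n → ℝ)) : Set (Fin n → ℝ)) := by
  obtain ⟨t₀, ht₀⟩ := Tmax_nonempty hS w
  obtain ⟨ht₀S, ht₀max⟩ := mem_Tmax.1 ht₀
  set M := dotp w t₀ with hM
  have hhull : ∀ x ∈ convexHull ℝ (S : Set (Fin n → ℝ)), dotp w x ≤ M :=
    dotp_le_hull ht₀max
  have hTval : ∀ s ∈ Tmax S w, dotp w s = M := by
    intro s hs
    obtain ⟨hsS, hsmax⟩ := mem_Tmax.1 hs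
    exact le_antisymm (ht₀max s hsS) (hsmax t₀ ht₀S)
  have hTsub : (convexHull ℝ ((Tmax S w : Finset (Fin n → ℝ)) : Set (Fin n → ℝ))) ⊆
      {x | dotp w x = M} := by
    have hlin := (by
      constructor
      · intro x y; simp only [dotp, Pi.add_apply, mul_add, Finset.sum_add_distrib]
      · intro a x; simp only [dotp, Pi.smul_apply, smul_eq_mul, Finset.mul_sum]
        exact Finset.sum_congr rfl fun i _ => by ring : IsLinearMap ℝ (dotp w))
    exact convexHull_min (fun s hs => hTval s hs) (convex_hyperplane hlin M)
  apply Set.Subset.antisymm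
  · rintro x ⟨hxP, hxmax⟩
    have hxM : dotp w x = M := le_antisymm (hhull x hxP)
      (hxmax t₀ (subset_convexHull ℝ _ ht₀S))
    rw [Finset.convexHull_eq] at hxP
    obtain ⟨wt, hwt₀, hwt₁, hwx⟩ := hxP
    have hx' : x = ∑ s ∈ S, wt s • s := by
      rw [← hwx, Finset.centerMass_eq_of_sum_1 _ _ hwt₁]; rfl
    have hdx : dotp w x = ∑ s ∈ S, wt s * dotp w s := by
      rw [hx']
      simp only [dotp, Finset.sum_apply, Pi.smul_apply, smul_eq_mul, Finset.mul_sum]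
      rw [Finset.sum_comm]
      exact Finset.sum_congr rfl fun s _ => Finset.sum_congr rfl fun i _ => by ring
    have hzero : ∑ s ∈ S, wt s * (M - dotp w s) = 0 := by
      simp only [mul_sub]
      rw [Finset.sum_sub_distrib, ← Finset.sum_mul, hwt₁, one_mul, ← hdx, hxM]
      ring
    have hterm : ∀ s ∈ S, wt s * (M - dotp w s) = 0 := by
      rw [Finset.sum_eq_zero_iff_of_nonneg] at hzero
      · exact hzero
      · intro s hs
        have := sub_nonneg.2 (hhull s (subset_convexHull ℝ _ hs))
        exact mul_nonneg (hwt₀ s hs) this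
    have hsupp : ∀ s ∈ S, s ∉ Tmax S w → wt s = 0 := by
      intro s hs hsT
      by_contra hws
      have h1 : dotp w s = M := by
        have := hterm s hs
        rcases mul_eq_zero.1 this with h | h
        · exact absurd h hws
        · linarith [sub_eq_zero.1 h]
      exact hsT (mem_Tmax.2 ⟨hs, fun s' hs' => by
        rw [h1]; exact hhull s' (subset_convexHull ℝ _ hs')⟩)
    have hsum' : ∑ s ∈ Tmax S w, wt s = 1 := by
      rw [← hwt₁]
      exact Finset.sum_subset (Tmax_subset S w) (fun s hs hsT => hsupp s hs hsT)
    have : x = (Tmax S w).centerMass wt id := by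
      rw [← hwx]
      unfold Finset.centerMass
      rw [hsum', hwt₁]
      congr 1
      exact (Finset.sum_subset (Tmax_subset S w)
        (fun s hs hsT => by rw [hsupp s hs hsT, zero_smul])).symm
    rw [this]
    have hpos : (0:ℝ) < ∑ s ∈ Tmax S w, wt s := by rw [hsum']; norm_num
    exact Finset.centerMass_mem_convexHull _ (fun s hs => hwt₀ s (Tmax_subset S w hs))
      hpos (fun s hs => Finset.mem_coe.2 hs)
  · intro y hy
    have hyM : dotp w y = M := hTsub hy
    have hyP : y ∈ convexHull ℝ (S : Set (Fin n → ℝ)) :=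
      convexHull_mono (by exact_mod_cast Finset.filter_subset _ _) hy
    exact ⟨hyP, fun z hz => by rw [hyM]; exact hhull z hz⟩

lemma isExposed_Tmax {S : Finset (Fin n → ℝ)} (hS : S.Nonempty) (w : Fin n → ℝ) :
    IsExposed ℝ (convexHull ℝ (S : Set (Fin n → ℝ)))
      (convexHull ℝ ((Tmax S w : Finset (Fin n → ℝ)) : Set (Fin n → ℝ))) :=
  fun _ => ⟨dotCLM w, (hull_Tmax hS w).symm⟩

lemma perturb {S : Finset (Fin n → ℝ)} (hS : S.Nonempty) (w₁ w₂ : Fin n → ℝ) :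
    ∃ ε : ℝ, 0 < ε ∧ Tmax S (w₁ + ε • w₂) = Tmax (Tmax S w₁) w₂ := by
  obtain ⟨t₀, ht₀⟩ := Tmax_nonempty hS w₁
  obtain ⟨ht₀S, ht₀max⟩ := mem_Tmax.1 ht₀
  set M := dotp w₁ t₀ with hM
  have hTval : ∀ s ∈ Tmax S w₁, dotp w₁ s = M := fun s hs =>
    le_antisymm (ht₀max s (mem_Tmax.1 hs).1) ((mem_Tmax.1 hs).2 t₀ ht₀S)
  -- gap
  set G := S.filter (fun s => dotp w₁ s < M) with hG
  have hGc : ∀ s ∈ S, s ∉ G → s ∈ Tmax S w₁ := by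
    intro s hs hsG
    have : ¬ dotp w₁ s < M := fun h => hsG (Finset.mem_filter.2 ⟨hs, h⟩)
    have hsM : dotp w₁ s = M := le_antisymm (ht₀max s hs) (not_lt.1 this)
    exact mem_Tmax.2 ⟨hs, fun s' hs' => hsM ▸ ht₀max s' hs'⟩
  -- oscillation of w₂ over S
  obtain ⟨sM, hsM, hsMmax⟩ := S.exists_max_image (dotp w₂) hS
  obtain ⟨sm, hsm, hsmmin⟩ := S.exists_min_image (dotp w₂) hS
  set osc := dotp w₂ sM - dotp w₂ sm with hosc
  have hosc0 : 0 ≤ osc := sub_nonneg.2 (hsmmin sM hsM)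
  by_cases hGne : G.Nonempty
  · obtain ⟨δ, hδmem, hδ⟩ : ∃ δ, δ ∈ G.image (fun s => M - dotp w₁ s) ∧
        ∀ y ∈ G.image (fun s => M - dotp w₁ s), δ ≤ y := by
      obtain ⟨a, ha, hmin⟩ := (G.image (fun s => M - dotp w₁ s)).exists_min_image id
        (hGne.image _)
      exact ⟨a, ha, hmin⟩
    have hδpos : 0 < δ := by
      obtain ⟨s, hsG, rfl⟩ := Finset.mem_image.1 hδmem
      have := (Finset.mem_filter.1 hsG).2
      linarith
    refine ⟨δ / (1 + osc), by positivity, ?_⟩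
    have hkey : ∀ s ∈ G, ∀ t ∈ Tmax S w₁,
        dotp (w₁ + (δ/(1+osc)) • w₂) s < dotp (w₁ + (δ/(1+osc)) • w₂) t := by
      intro s hsG t htT
      rw [dotp_add_left, dotp_add_left, dotp_smul_left, dotp_smul_left]
      have h1 : M - dotp w₁ s ≥ δ := hδ _ (Finset.mem_image_of_mem _ hsG)
      have h2 : dotp w₁ t = M := hTval t htT
      have h3 : dotp w₂ s - dotp w₂ t ≤ osc := by
        have := hsMmax s (Finset.mem_filter.1 hsG).1
        have := hsmmin t (Tmax_subset S w₁ htT)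
        simp only [hosc]; linarith
      have h4 : (δ/(1+osc)) * (dotp w₂ s - dotp w₂ t) ≤ (δ/(1+osc)) * osc :=
        mul_le_mul_of_nonneg_left h3 (by positivity)
      have h5 : (δ/(1+osc)) * osc < δ := by
        rw [div_mul_eq_mul_div, div_lt_iff₀ (by linarith)]
        nlinarith
      nlinarith [h4, h5, h1, h2]
    ext x
    constructor
    · intro hx
      obtain ⟨hxS, hxmax⟩ := mem_Tmax.1 hx
      obtain ⟨t₁, ht₁⟩ := Tmax_nonempty (⟨t₀, ht₀⟩ : (Tmax S w₁).Nonempty) w₂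
      have ht₁T : t₁ ∈ Tmax S w₁ := Tmax_subset _ _ ht₁
      have hxT : x ∈ Tmax S w₁ := by
        by_contra hxT
        have hxG : x ∈ G := by
          by_contra hxG
          exact hxT (hGc x hxS hxG)
        have := hkey x hxG t₁ ht₁T
        have := hxmax t₁ (Tmax_subset S w₁ ht₁T)
        linarith
      refine mem_Tmax.2 ⟨hxT, ?_⟩
      intro s' hs'
      have h2 : dotp w₁ s' = dotp w₁ x := by rw [hTval _ hs', hTval _ hxT]
      have := hxmax s' (Tmax_subset S w₁ hs')
      rw [dotp_add_left, dotp_add_left, dotp_smul_left, dotp_smul_left, h2] at this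
      have hε : (0:ℝ) < δ/(1+osc) := by positivity
      nlinarith [this]
    · intro hx
      obtain ⟨hxT, hxmax⟩ := mem_Tmax.1 hx
      refine mem_Tmax.2 ⟨Tmax_subset S w₁ hxT, ?_⟩
      intro s' hs'
      by_cases hs'T : s' ∈ Tmax S w₁
      · rw [dotp_add_left, dotp_add_left, dotp_smul_left, dotp_smul_left,
          hTval _ hs'T, hTval _ hxT]
        have := hxmax s' hs'T
        have hε : (0:ℝ) ≤ δ/(1+osc) := by positivity
        nlinarith
      · have hs'G : s' ∈ G := by
          by_contra h
          exact hs'T (hGc s' hs' h)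
        exact le_of_lt (hkey s' hs'G x hxT)
  · -- no gap: w₁ constant on S, Tmax S w₁ = S
    have hTS : Tmax S w₁ = S := by
      apply Finset.Subset.antisymm (Tmax_subset S w₁)
      intro s hs
      exact hGc s hs (fun h => hGne ⟨s, h⟩)
    refine ⟨1, one_pos, ?_⟩
    rw [hTS]
    ext x
    have hconst : ∀ s ∈ S, dotp w₁ s = M := by
      intro s hs
      by_contra h
      exact hGne ⟨s, Finset.mem_filter.2 ⟨hs, lt_of_le_of_ne (ht₀max s hs) h⟩⟩
    constructor
    · intro hx
      obtain ⟨hxS, hxmax⟩ := mem_Tmax.1 hx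
      refine mem_Tmax.2 ⟨hxS, fun s' hs' => ?_⟩
      have := hxmax s' hs'
      rw [dotp_add_left, dotp_add_left, one_smul, hconst _ hs', hconst _ hxS] at this
      linarith
    · intro hx
      obtain ⟨hxS, hxmax⟩ := mem_Tmax.1 hx
      refine mem_Tmax.2 ⟨hxS, fun s' hs' => ?_⟩
      rw [dotp_add_left, dotp_add_left, one_smul, hconst _ hs', hconst _ hxS]
      linarith [hxmax s' hs']

lemma extreme_mono {A B : Set (Fin n → ℝ)} {u : Fin n → ℝ} (hAB : A ⊆ B) (huA : u ∈ A)
    (hu : u ∈ B.extremePoints ℝ) : u ∈ A.extremePoints ℝ := by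
  exact ⟨huA, fun x₁ h₁ x₂ h₂ hseg => hu.2 (hAB h₁) (hAB h₂) hseg⟩

lemma endpoint_extreme {u v : Fin n → ℝ} (huv : u ≠ v) :
    u ∈ (segment ℝ u v).extremePoints ℝ := by
  refine ⟨left_mem_segment ℝ u v, ?_⟩
  intro x₁ hx₁ x₂ hx₂ hu
  rw [segment_eq_image'] at hx₁ hx₂
  obtain ⟨s, hs, rfl⟩ := hx₁
  obtain ⟨t, ht, rfl⟩ := hx₂
  obtain ⟨a, b, ha, hb, hab, habu⟩ := hu
  have hvu : v - u ≠ 0 := sub_ne_zero.2 (Ne.symm huv)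
  have hcomb : (a * s + b * t) • (v - u) = 0 := by
    have h0 : a • (u + s • (v - u)) + b • (u + t • (v - u)) = u := habu
    have h2 : (a + b) • u + (a * s + b * t) • (v - u) = u := by
      have h2' : (a + b) • u + (a * s + b * t) • (v - u)
          = a • (u + s • (v - u)) + b • (u + t • (v - u)) := by module
      rw [h2', h0]
    rw [hab, one_smul] at h2
    have := congrArg (fun y => y - u) h2
    simpa [add_sub_cancel_left] using this
  have hst : a * s + b * t = 0 := by
    rcases smul_eq_zero.1 hcomb with h | h
    · exact h
    · exact absurd h hvu
  have hs0 : s = 0 := by nlinarith [hs.1, ht.1, mul_nonneg (le_of_lt ha) hs.1, mul_nonneg (le_of_lt hb) ht.1]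
  have ht0 : t = 0 := by nlinarith [hs.1, ht.1, mul_nonneg (le_of_lt ha) hs.1, mul_nonneg (le_of_lt hb) ht.1]
  simp [hs0, ht0]

lemma avoid (Z : Finset (Fin n → ℝ)) : ∃ h, ∀ z ∈ Z, z ≠ 0 → dotp h z ≠ 0 := by
  classical
  induction Z using Finset.induction_on with
  | empty => exact ⟨0, fun z hz => absurd hz (Finset.notMem_empty z)⟩
  | @insert z₀ Z' hz₀notmem ih =>
    obtain ⟨h, hh⟩ := ih
    by_cases hz₀0 : z₀ = 0
    · refine ⟨h, fun z hz hzne => ?_⟩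
      rcases Finset.mem_insert.1 hz with rfl | hz
      · exact absurd hz₀0 hzne
      · exact hh z hz hzne
    · -- choose ε avoiding finitely many bad values
      set bad : Finset ℝ := (insert z₀ Z').image (fun z => - dotp h z / dotp z₀ z) ∪ {0} with hbad
      obtain ⟨ε, hε⟩ := Infinite.exists_notMem_finset bad
      have hε0 : ε ≠ 0 := fun h0 => hε (by rw [h0]; exact Finset.mem_union_right _ (Finset.mem_singleton_self 0))
      refine ⟨h + ε • z₀, fun z hz hzne => ?_⟩
      have hdd : dotp (h + ε • z₀) z = dotp h z + ε * dotp z₀ z := by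
        simp only [dotp, Pi.add_apply, Pi.smul_apply, smul_eq_mul, add_mul, mul_assoc,
          Finset.sum_add_distrib, Finset.mul_sum]
      rw [hdd]
      by_cases hzz : dotp z₀ z = 0
      · rw [hzz, mul_zero, add_zero]
        rcases Finset.mem_insert.1 hz with rfl | hzZ
        · -- z = z₀ : but dotp z₀ z₀ > 0 contradicts hzz
          exfalso
          have : 0 < dotp z z := by
            obtain ⟨j, hj⟩ := Function.ne_iff.1 hzne
            exact Finset.sum_pos' (fun i _ => mul_self_nonneg _) ⟨j, Finset.mem_univ j, mul_self_pos.2 hj⟩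
          rw [hzz] at this; exact lt_irrefl 0 this
        · exact hh z hzZ hzne
      · intro habs
        apply hε
        refine Finset.mem_union_left _ (Finset.mem_image.2 ⟨z, hz, ?_⟩)
        field_simp
        linarith

lemma edge_mk {S : Finset (Fin n → ℝ)} (hS : S.Nonempty) {w u v : Fin n → ℝ}
    (h : convexHull ℝ ((Tmax S w : Finset (Fin n → ℝ)) : Set (Fin n → ℝ)) = segment ℝ u v)
    (huv : u ≠ v) : IsEdgeOf (convexHull ℝ (S : Set (Fin n → ℝ))) u v := by
  have hexp : IsExposed ℝ (convexHull ℝ (S : Set (Fin n → ℝ))) (segment ℝ u v) := by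
    rw [← h]; exact isExposed_Tmax hS w
  have hext : IsExtreme ℝ (convexHull ℝ (S : Set (Fin n → ℝ))) (segment ℝ u v) :=
    hexp.isExtreme
  refine ⟨huv, ?_, ?_, hexp⟩
  · exact hext.extremePoints_subset_extremePoints (endpoint_extreme huv)
  · apply hext.extremePoints_subset_extremePoints
    rw [segment_symm]
    exact endpoint_extreme huv.symm

lemma exists_exposer (S : Finset (Fin n → ℝ)) (u : Fin n → ℝ)
    (hu : u ∈ (convexHull ℝ (S : Set (Fin n → ℝ))).extremePoints ℝ) :
    ∃ g, ∀ s ∈ S.erase u, dotp g s < dotp g u := by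
  by_cases hne : (S.erase u).Nonempty
  · set C := convexHull ℝ ((S.erase u : Finset (Fin n → ℝ)) : Set (Fin n → ℝ)) with hC
    have hCconv : Convex ℝ C := convex_convexHull ℝ _
    have hCclosed : IsClosed C :=
      ((S.erase u).finite_toSet.isCompact_convexHull ℝ).isClosed
    have huC : u ∉ C := by
      intro huC
      have hext : u ∈ C.extremePoints ℝ := by
        apply extreme_mono ?_ huC hu
        exact convexHull_mono (by exact_mod_cast Finset.erase_subset u S)
      have : u ∈ ((S.erase u : Finset (Fin n → ℝ)) : Set (Fin n → ℝ)) :=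
        extremePoints_convexHull_subset hext
      simp at this
    obtain ⟨f, th, hfC, hfu⟩ := geometric_hahn_banach_closed_point hCconv hCclosed huC
    obtain ⟨g, hg⟩ := clm_eq_dotp f
    refine ⟨g, fun s hs => ?_⟩
    have hsC : (s : Fin n → ℝ) ∈ C := subset_convexHull ℝ _ (by exact_mod_cast hs)
    have h1 := hfC s hsC
    rw [hg] at h1 hfu
    linarith
  · exact ⟨0, fun s hs => absurd ⟨s, hs⟩ hne⟩

lemma edgeExists (S : Finset (Fin n → ℝ)) (u : Fin n → ℝ) (hu : u ∈ S) (g : Fin n → ℝ)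
    (hg : ∀ s ∈ S.erase u, dotp g s < dotp g u) (hne : (S.erase u).Nonempty) :
    ∃ v w, v ∈ S.erase u ∧
      convexHull ℝ ((Tmax S w : Finset (Fin n → ℝ)) : Set (Fin n → ℝ)) = segment ℝ u v := by
  -- σ s := dotp g u - dotp g s > 0 on erase
  set σ : (Fin n → ℝ) → ℝ := fun s => dotp g u - dotp g s with hσ
  have hσpos : ∀ s ∈ S.erase u, 0 < σ s := fun s hs => sub_pos.2 (hg s hs)
  -- generic h
  set Z : Finset (Fin n → ℝ) :=
    ((S.erase u).image (fun s => s - u)) ∪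
    (((S.erase u) ×ˢ (S.erase u)).image
      (fun p => σ p.1 • (p.2 - u) - σ p.2 • (p.1 - u))) with hZ
  obtain ⟨h₀, hh₀⟩ := avoid Z
  -- key properties of h₀ and -h₀
  have hprop : ∀ (h : Fin n → ℝ),
      (∀ z ∈ Z, z ≠ 0 → dotp h z ≠ 0) →
      (∀ s ∈ S.erase u, dotp h s ≠ dotp h u) ∧
      (∀ s ∈ S.erase u, ∀ s' ∈ S.erase u,
        σ s * (dotp h s' - dotp h u) = σ s' * (dotp h s - dotp h u) →
        σ s • (s' - u) = σ s' • (s - u)) := by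
    intro h hh
    constructor
    · intro s hs habs
      have hz : (s - u) ∈ Z := Finset.mem_union_left _ (Finset.mem_image_of_mem _ hs)
      have hsne : s - u ≠ 0 := sub_ne_zero.2 (Finset.ne_of_mem_erase hs)
      exact hh _ hz hsne (by rw [dotp_sub_right]; linarith)
    · intro s hs s' hs' heq
      by_contra hzne
      have hz : (σ s • (s' - u) - σ s' • (s - u)) ∈ Z := by
        refine Finset.mem_union_right _ (Finset.mem_image.2 ⟨(s, s'), ?_, rfl⟩)
        exact Finset.mem_product.2 ⟨hs, hs'⟩
      have hne0 : σ s • (s' - u) - σ s' • (s - u) ≠ 0 := sub_ne_zero.2 hzne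
      apply hh _ hz hne0
      rw [dotp_sub_right, dotp_smul_right, dotp_smul_right, dotp_sub_right, dotp_sub_right]
      nlinarith [heq]
  -- get h with some improving point
  obtain ⟨h, hh, ⟨s₁, hs₁, hs₁h⟩⟩ :
      ∃ h, (∀ z ∈ Z, z ≠ 0 → dotp h z ≠ 0) ∧ ∃ s ∈ S.erase u, dotp h u < dotp h s := by
    obtain ⟨s₁, hs₁⟩ := hne
    rcases lt_or_gt_of_ne ((hprop h₀ hh₀).1 s₁ hs₁) with hlt | hgt
    · refine ⟨-h₀, ?_, ⟨s₁, hs₁, ?_⟩⟩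
      · intro z hz hzne
        rw [dotp_neg_left]
        exact neg_ne_zero.2 (hh₀ z hz hzne)
      · rw [dotp_neg_left, dotp_neg_left]
        linarith
    · exact ⟨h₀, hh₀, ⟨s₁, hs₁, hgt⟩⟩
  obtain ⟨hdist, hcol⟩ := hprop h hh
  -- interpolation
  set Δ : (Fin n → ℝ) → ℝ := fun s => dotp h s - dotp h u with hΔ
  set D : Finset (Fin n → ℝ) := (S.erase u).filter (fun s => 0 < Δ s) with hD
  have hDne : D.Nonempty := ⟨s₁, Finset.mem_filter.2 ⟨hs₁, sub_pos.2 hs₁h⟩⟩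
  set τ : (Fin n → ℝ) → ℝ := fun s => σ s / (σ s + Δ s) with hτ
  set t : ℝ := D.inf' hDne τ with ht
  obtain ⟨sm, hsmD, hsmt⟩ := Finset.exists_mem_eq_inf' hDne τ
  have hsm_erase : sm ∈ S.erase u := (Finset.mem_filter.1 hsmD).1
  have hsmΔ : 0 < Δ sm := (Finset.mem_filter.1 hsmD).2
  have hsmσ : 0 < σ sm := hσpos sm hsm_erase
  have htpos : 0 < t := by
    rw [ht, hsmt]
    exact div_pos hsmσ (by linarith)
  have htlt : t < 1 := by
    rw [ht, hsmt, div_lt_one (by linarith)]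
    linarith
  have hτle : ∀ s ∈ D, t ≤ τ s := fun s hs => ht ▸ Finset.inf'_le τ hs
  -- the functional
  set w : Fin n → ℝ := (1 - t) • g + t • h with hw
  have hwval : ∀ x, dotp w x = (1-t) * dotp g x + t * dotp h x := by
    intro x; rw [hw, dotp_add_left, dotp_smul_left, dotp_smul_left]
  -- f s := dotp w u - dotp w s = (1-t) σ s - t Δ s
  have hf : ∀ s, dotp w u - dotp w s = (1-t) * σ s - t * Δ s := by
    intro s; rw [hwval, hwval, hσ, hΔ]; ring
  have hfnonneg : ∀ s ∈ S.erase u, 0 ≤ dotp w u - dotp w s := by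
    intro s hs
    rw [hf]
    by_cases hsD : s ∈ D
    · have h1 : t ≤ τ s := hτle s hsD
      have hΔs : 0 < Δ s := (Finset.mem_filter.1 hsD).2
      have hσs : 0 < σ s := hσpos s hs
      rw [hτ] at h1
      simp only at h1
      rw [le_div_iff₀ (by linarith)] at h1
      nlinarith
    · have hΔs : ¬ 0 < Δ s := fun hh' => hsD (Finset.mem_filter.2 ⟨hs, hh'⟩)
      have hσs : 0 < σ s := hσpos s hs
      push_neg at hΔs
      nlinarith
  have humax : ∀ s ∈ S, dotp w s ≤ dotp w u := by
    intro s hs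
    by_cases hsu : s = u
    · rw [hsu]
    · linarith [hfnonneg s (Finset.mem_erase.2 ⟨hsu, hs⟩)]
  have huT : u ∈ Tmax S w := mem_Tmax.2 ⟨hu, fun s' hs' => humax s' hs'⟩
  -- tie set characterization
  have hTie : ∀ s ∈ (Tmax S w).erase u, dotp w s = dotp w u ∧ s ∈ D ∧ (1-t) * σ s = t * Δ s := by
    intro s hs
    have hsT := Finset.mem_of_mem_erase hs
    have hsS := Tmax_subset S w hsT
    have hse : s ∈ S.erase u := Finset.mem_erase.2 ⟨Finset.ne_of_mem_erase hs, hsS⟩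
    have hval : dotp w s = dotp w u :=
      le_antisymm (humax s hsS) ((mem_Tmax.1 hsT).2 u hu)
    have hzero : (1-t) * σ s - t * Δ s = 0 := by rw [← hf]; linarith
    have hσs : 0 < σ s := hσpos s hse
    have hΔpos : 0 < Δ s := by
      have h1t : 0 < 1 - t := by linarith
      nlinarith
    exact ⟨hval, Finset.mem_filter.2 ⟨hse, hΔpos⟩, by linarith⟩
  -- sm is in the tie set
  have hsmT : sm ∈ Tmax S w := by
    have hfsm : dotp w u - dotp w sm = 0 := by
      rw [hf]
      have : t = σ sm / (σ sm + Δ sm) := hsmt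
      field_simp at this ⊢
      nlinarith [this]
    refine mem_Tmax.2 ⟨(Finset.mem_erase.1 hsm_erase).2, fun s' hs' => ?_⟩
    have := humax s' hs'
    linarith
  -- choose the farthest point on the ray
  obtain ⟨sf, hsf, hsfmax⟩ := ((Tmax S w).erase u).exists_max_image σ
    ⟨sm, Finset.mem_erase.2 ⟨Finset.ne_of_mem_erase hsm_erase, hsmT⟩⟩
  have hsf_er : sf ∈ S.erase u := by
    have := Finset.mem_of_mem_erase hsf
    exact Finset.mem_erase.2 ⟨Finset.ne_of_mem_erase hsf, Tmax_subset S w this⟩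
  have hσf : 0 < σ sf := hσpos sf hsf_er
  -- every tie point is on the segment [u, sf]
  have hray : ∀ s ∈ (Tmax S w).erase u, s = u + (σ s / σ sf) • (sf - u) := by
    intro s hs
    obtain ⟨hval, hsD', hrel⟩ := hTie s hs
    obtain ⟨hvalf, hsDf, hrelf⟩ := hTie sf hsf
    have hse : s ∈ S.erase u := by
      have := Finset.mem_of_mem_erase hs
      exact Finset.mem_erase.2 ⟨Finset.ne_of_mem_erase hs, Tmax_subset S w this⟩
    -- σ s * Δ sf = σ sf * Δ s
    have hcross : σ s * Δ sf = σ sf * Δ s := by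
      have h1t : 0 < 1 - t := by linarith
      have e1 : Δ s = (1-t) * σ s / t := by field_simp [ne_of_gt htpos] at hrel ⊢; linarith
      have e2 : Δ sf = (1-t) * σ sf / t := by field_simp [ne_of_gt htpos] at hrelf ⊢; linarith
      rw [e1, e2]; field_simp
    have hcoll := hcol s hse sf hsf_er (by simpa using hcross)
    -- σ s • (sf - u) = σ sf • (s - u)
    have : s - u = (σ s / σ sf) • (sf - u) := by
      have := hcoll.symm
      rw [div_eq_inv_mul, ← smul_smul]
      rw [← this]
      rw [smul_smul, inv_mul_cancel₀ (ne_of_gt hσf), one_smul]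
    have h2 := congrArg (fun y => u + y) this
    simpa using h2
  -- conclude : convexHull of Tmax = segment u sf
  refine ⟨sf, w, hsf_er, ?_⟩
  apply Set.Subset.antisymm
  · apply convexHull_min
    · intro x hx
      rw [Finset.mem_coe] at hx
      by_cases hxu : x = u
      · rw [hxu]; exact left_mem_segment ℝ u sf
      · have hxe : x ∈ (Tmax S w).erase u := Finset.mem_erase.2 ⟨hxu, hx⟩
        rw [hray x hxe]
        rw [segment_eq_image']
        have hxse : x ∈ S.erase u := by
          have := Finset.mem_of_mem_erase hxe
          exact Finset.mem_erase.2 ⟨hxu, Tmax_subset S w this⟩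
        refine ⟨σ x / σ sf, ⟨?_, ?_⟩, rfl⟩
        · exact div_nonneg (le_of_lt (hσpos x hxse)) (le_of_lt hσf)
        · rw [div_le_one hσf]
          exact hsfmax x hxe
        -- need : 0 ≤ σ x
    · exact convex_segment u sf
  · rw [← convexHull_pair]
    apply convexHull_mono
    intro x hx
    rcases hx with rfl | hx
    · exact Finset.mem_coe.2 huT
    · simp only [Set.mem_singleton_iff] at hx
      subst hx
      exact Finset.mem_coe.2 (Finset.mem_of_mem_erase hsf)

lemma lemD : ∀ (N : ℕ) (S : Finset (Fin n → ℝ)), S.card ≤ N → ∀ (u c : Fin n → ℝ),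
    u ∈ (convexHull ℝ (S : Set (Fin n → ℝ))).extremePoints ℝ →
    (∃ s ∈ S, dotp c u < dotp c s) →
    ∃ v w, dotp c u < dotp c v ∧ u ≠ v ∧
      convexHull ℝ ((Tmax S w : Finset (Fin n → ℝ)) : Set (Fin n → ℝ)) = segment ℝ u v := by
  intro N
  induction N with
  | zero =>
    intro S hcard u c hu ⟨s, hs, _⟩
    exact absurd (Finset.card_pos.2 ⟨s, hs⟩) (by omega)
  | succ N ih =>
    intro S hcard u c hu hwit
    obtain ⟨s₀, hs₀S, hs₀⟩ := hwit
    have huS : u ∈ S := extremePoints_convexHull_subset hu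
    obtain ⟨g, hg⟩ := exists_exposer S u hu
    -- interpolation between g and c
    set σ : (Fin n → ℝ) → ℝ := fun s => dotp g u - dotp g s with hσ
    have hσpos : ∀ s ∈ S.erase u, 0 < σ s := fun s hs => sub_pos.2 (hg s hs)
    set γ : (Fin n → ℝ) → ℝ := fun s => dotp c s - dotp c u with hγ
    set D : Finset (Fin n → ℝ) := (S.erase u).filter (fun s => 0 ≤ γ s) with hD
    have hs₀e : s₀ ∈ S.erase u := Finset.mem_erase.2 ⟨fun h => by subst h; linarith, hs₀S⟩
    have hDne : D.Nonempty := ⟨s₀, Finset.mem_filter.2 ⟨hs₀e, by simp only [hγ]; linarith⟩⟩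
    set τ : (Fin n → ℝ) → ℝ := fun s => σ s / (σ s + γ s) with hτ
    set t : ℝ := D.inf' hDne τ with ht
    obtain ⟨sm, hsmD, hsmt⟩ := Finset.exists_mem_eq_inf' hDne τ
    have hsm_erase : sm ∈ S.erase u := (Finset.mem_filter.1 hsmD).1
    have hsmγ : 0 ≤ γ sm := (Finset.mem_filter.1 hsmD).2
    have hsmσ : 0 < σ sm := hσpos sm hsm_erase
    have htpos : 0 < t := by
      rw [ht, hsmt]
      exact div_pos hsmσ (by linarith)
    have hτs₀ : τ s₀ < 1 := by
      have h1 : 0 < γ s₀ := by simp only [hγ]; linarith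
      have h2 : 0 < σ s₀ := hσpos s₀ hs₀e
      rw [hτ]; simp only
      rw [div_lt_one (by linarith)]
      linarith
    have htlt : t < 1 := lt_of_le_of_lt (ht ▸ Finset.inf'_le τ (Finset.mem_filter.2
      ⟨hs₀e, by simp only [hγ]; linarith⟩)) hτs₀
    have hτle : ∀ s ∈ D, t ≤ τ s := fun s hs => ht ▸ Finset.inf'_le τ hs
    set w₁ : Fin n → ℝ := (1 - t) • g + t • c with hw₁
    have hwval : ∀ x, dotp w₁ x = (1-t) * dotp g x + t * dotp c x := by
      intro x; rw [hw₁, dotp_add_left, dotp_smul_left, dotp_smul_left]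
    have hf : ∀ s, dotp w₁ u - dotp w₁ s = (1-t) * σ s - t * γ s := by
      intro s; rw [hwval, hwval, hσ, hγ]; ring
    have hfnonneg : ∀ s ∈ S.erase u, 0 ≤ dotp w₁ u - dotp w₁ s := by
      intro s hs
      rw [hf]
      have hσs : 0 < σ s := hσpos s hs
      by_cases hsD : s ∈ D
      · have h1 : t ≤ τ s := hτle s hsD
        have hγs : 0 ≤ γ s := (Finset.mem_filter.1 hsD).2
        rw [hτ] at h1
        simp only at h1
        rw [le_div_iff₀ (by linarith)] at h1
        nlinarith
      · have hγs : ¬ 0 ≤ γ s := fun hh' => hsD (Finset.mem_filter.2 ⟨hs, hh'⟩)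
        push_neg at hγs
        nlinarith
    have humax : ∀ s ∈ S, dotp w₁ s ≤ dotp w₁ u := by
      intro s hs
      by_cases hsu : s = u
      · rw [hsu]
      · linarith [hfnonneg s (Finset.mem_erase.2 ⟨hsu, hs⟩)]
    have huT : u ∈ Tmax S w₁ := mem_Tmax.2 ⟨huS, humax⟩
    -- sm is in the tie set and has strictly better c value
    have hsmzero : dotp w₁ u - dotp w₁ sm = 0 := by
      rw [hf]
      have e : t = σ sm / (σ sm + γ sm) := by rw [ht, hsmt]
      field_simp at e
      nlinarith [e]
    have hsmT : sm ∈ Tmax S w₁ := by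
      refine mem_Tmax.2 ⟨(Finset.mem_erase.1 hsm_erase).2, fun s' hs' => ?_⟩
      have := humax s' hs'
      linarith
    have hsmc : dotp c u < dotp c sm := by
      -- γ sm > 0 since t < 1 and (1-t) σ sm = t γ sm
      have h1 : (1-t) * σ sm - t * γ sm = 0 := by rw [← hf]; linarith
      have hγpos : 0 < γ sm := by nlinarith
      simp only [hγ] at hγpos; linarith
    -- case analysis
    by_cases hTS : Tmax S w₁ = S
    · -- all points of S.erase u improve c; find any edge
      have hall : ∀ s ∈ S.erase u, dotp c u < dotp c s := by
        intro s hs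
        have hsT : s ∈ Tmax S w₁ := by rw [hTS]; exact (Finset.mem_erase.1 hs).2
        have hval : dotp w₁ s = dotp w₁ u :=
          le_antisymm (humax s (Finset.mem_erase.1 hs).2) ((mem_Tmax.1 hsT).2 u huS)
        have h1 : (1-t) * σ s - t * γ s = 0 := by rw [← hf]; linarith
        have hσs : 0 < σ s := hσpos s hs
        have : 0 < γ s := by nlinarith
        simp only [hγ] at this; linarith
      obtain ⟨v, w, hv, hseg⟩ := edgeExists S u huS g hg ⟨s₀, hs₀e⟩
      exact ⟨v, w, hall v hv, (Finset.ne_of_mem_erase hv).symm, hseg⟩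
    · -- recurse into the proper face
      set T : Finset (Fin n → ℝ) := Tmax S w₁ with hT
      have hTssub : T ⊂ S := Finset.ssubset_iff_subset_ne.2 ⟨Tmax_subset S w₁, hTS⟩
      have hTcard : T.card ≤ N := by
        have := Finset.card_lt_card hTssub
        omega
      have huT' : u ∈ (convexHull ℝ (T : Set (Fin n → ℝ))).extremePoints ℝ := by
        apply extreme_mono (convexHull_mono (by exact_mod_cast hTssub.1)) ?_ hu
        exact subset_convexHull ℝ _ (Finset.mem_coe.2 huT)
      obtain ⟨v, w₂, hvc, hvne, hseg⟩ := ih T hTcard u c huT' ⟨sm, hsmT, hsmc⟩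
      obtain ⟨ε, hεpos, hε⟩ := perturb (⟨u, huS⟩ : S.Nonempty) w₁ w₂
      refine ⟨v, w₁ + ε • w₂, hvc, hvne, ?_⟩
      rw [hε]
      exact hseg

lemma shadowStep {S : Finset (Fin n → ℝ)} (hS : S.Nonempty) {P : Set (Fin n → ℝ)}
    (hP : P = convexHull ℝ (S : Set (Fin n → ℝ))) (c g x₀ : Fin n → ℝ)
    (hx₀ : IsVertexOf P x₀) (lam₀ : ℝ) (hlam₀ : 0 ≤ lam₀)
    (hmax : ∀ s ∈ S, dotp c s + lam₀ * dotp g s ≤ dotp c x₀ + lam₀ * dotp g x₀)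
    (hnon : ∃ s ∈ S, dotp c x₀ < dotp c s) :
    ∃ v lam₁, 0 ≤ lam₁ ∧
      (∀ s ∈ S, dotp c s + lam₁ * dotp g s ≤ dotp c v + lam₁ * dotp g v) ∧
      IsEdgeOf P x₀ v ∧ dotp c x₀ < dotp c v ∧ dotp g v < dotp g x₀ := by
  have hx₀S : x₀ ∈ S := by
    rw [hP] at hx₀
    exact extremePoints_convexHull_subset hx₀
  -- define lam*
  set B : Finset (Fin n → ℝ) := S.filter (fun s => dotp g s < dotp g x₀) with hB
  set ρ : (Fin n → ℝ) → ℝ := fun s => (dotp c s - dotp c x₀) / (dotp g x₀ - dotp g s) with hρ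
  have hρle : ∀ s ∈ B, ρ s ≤ lam₀ := by
    intro s hs
    obtain ⟨hsS, hslt⟩ := Finset.mem_filter.1 hs
    rw [hρ]
    rw [div_le_iff₀ (by linarith)]
    have := hmax s hsS
    nlinarith
  by_cases hBne : B.Nonempty
  · set lam : ℝ := max 0 (B.sup' hBne ρ) with hlam
    have hlamnn : 0 ≤ lam := le_max_left _ _
    have hlamle : lam ≤ lam₀ := by
      rw [hlam]
      apply max_le hlam₀
      apply Finset.sup'_le
      exact hρle
    have hlamge : ∀ s ∈ B, ρ s ≤ lam := fun s hs =>
      le_trans (Finset.le_sup' ρ hs) (le_max_right _ _)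
    -- all constraints hold at lam
    have hmax' : ∀ s ∈ S, dotp c s + lam * dotp g s ≤ dotp c x₀ + lam * dotp g x₀ := by
      intro s hsS
      rcases lt_trichotomy (dotp g s) (dotp g x₀) with hlt | heq | hgt
      · have hsB : s ∈ B := Finset.mem_filter.2 ⟨hsS, hlt⟩
        have := hlamge s hsB
        rw [hρ] at this
        rw [div_le_iff₀ (by linarith)] at this
        nlinarith
      · have := hmax s hsS
        rw [heq] at this ⊢
        nlinarith
      · have := hmax s hsS
        nlinarith
    -- lam > 0 since x₀ is not optimal
    have hlampos : 0 < lam := by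
      rcases hnon with ⟨s₁, hs₁S, hs₁⟩
      by_contra hle
      push_neg at hle
      have hlam0 : lam = 0 := le_antisymm hle hlamnn
      have := hmax' s₁ hs₁S
      rw [hlam0] at this
      simp at this
      linarith
    -- the tie set T
    set w₁ : Fin n → ℝ := c + lam • g with hw₁
    have hwval : ∀ x, dotp w₁ x = dotp c x + lam * dotp g x := by
      intro x; rw [hw₁, dotp_add_left, dotp_smul_left]
    have hx₀T : x₀ ∈ Tmax S w₁ := by
      refine mem_Tmax.2 ⟨hx₀S, fun s' hs' => ?_⟩
      rw [hwval, hwval]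
      exact hmax' s' hs'
    -- the binding element
    have hsup : ∃ s ∈ B, ρ s = lam := by
      obtain ⟨s, hsB, hseq⟩ := Finset.exists_mem_eq_sup' hBne ρ
      refine ⟨s, hsB, ?_⟩
      have h1 : B.sup' hBne ρ = lam := by
        rw [hlam, max_eq_right]
        by_contra hcon
        push_neg at hcon
        have : B.sup' hBne ρ < 0 := hcon
        have h2 : lam = 0 := by
          rw [hlam, max_eq_left (le_of_lt this)]
        linarith [hlampos, h2]
      rw [← hseq, h1]
    obtain ⟨sb, hsbB, hsbρ⟩ := hsup
    obtain ⟨hsbS, hsblt⟩ := Finset.mem_filter.1 hsbB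
    have hsbtie : dotp c sb + lam * dotp g sb = dotp c x₀ + lam * dotp g x₀ := by
      have : ρ sb = lam := hsbρ
      rw [hρ] at this
      field_simp [ne_of_gt (sub_pos.2 hsblt)] at this
      nlinarith
    have hsbc : dotp c x₀ < dotp c sb := by nlinarith [hsblt, hlampos]
    have hsbT : sb ∈ Tmax S w₁ := by
      refine mem_Tmax.2 ⟨hsbS, fun s' hs' => ?_⟩
      rw [hwval, hwval, hsbtie]
      exact hmax' s' hs'
    -- apply lemD inside the face
    set T : Finset (Fin n → ℝ) := Tmax S w₁ with hT
    have hx₀T' : x₀ ∈ (convexHull ℝ (T : Set (Fin n → ℝ))).extremePoints ℝ := by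
      apply extreme_mono (convexHull_mono (by exact_mod_cast Tmax_subset S w₁)) ?_ (hP ▸ hx₀)
      exact subset_convexHull ℝ _ (Finset.mem_coe.2 hx₀T)
    obtain ⟨v, w₂, hvc, hvne, hseg⟩ := lemD T.card T le_rfl x₀ c hx₀T' ⟨sb, hsbT, hsbc⟩
    obtain ⟨ε, hεpos, hε⟩ := perturb hS w₁ w₂
    have hvT : v ∈ T := by
      have hvext : v ∈ (convexHull ℝ ((Tmax T w₂ : Finset (Fin n → ℝ)) :
          Set (Fin n → ℝ))).extremePoints ℝ := by
        rw [hseg, segment_symm]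
        exact endpoint_extreme hvne.symm
      have hv2 : v ∈ ((Tmax T w₂ : Finset (Fin n → ℝ)) : Set (Fin n → ℝ)) :=
        extremePoints_convexHull_subset hvext
      exact Tmax_subset T w₂ (Finset.mem_coe.1 hv2)
    have hvtie : dotp c v + lam * dotp g v = dotp c x₀ + lam * dotp g x₀ := by
      have h1 := (mem_Tmax.1 hvT).2 x₀ hx₀S
      have h2 := hmax' v (Tmax_subset S w₁ hvT)
      rw [hwval, hwval] at h1
      linarith
    have hgv : dotp g v < dotp g x₀ := by nlinarith [hvc, hlampos]
    have hedge : IsEdgeOf P x₀ v := by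
      rw [hP]
      apply edge_mk hS (w := w₁ + ε • w₂) ?_ hvne
      rw [hε, ← hT, hseg]
    refine ⟨v, lam, hlamnn, ?_, hedge, hvc, hgv⟩
    intro s hs
    have := hmax' s hs
    linarith [hvtie]
  · -- B empty : every s has dotp g s ≥ dotp g x₀... then lam = 0 must work?
    -- but constraints at lam₀ hold; since no s has g s < g x₀,
    -- So x₀ is c-optimal, contradicting hnon.
    exfalso
    obtain ⟨s₁, hs₁S, hs₁⟩ := hnon
    have hns₁ : ¬ dotp g s₁ < dotp g x₀ := fun h => hBne ⟨s₁, Finset.mem_filter.2 ⟨hs₁S, h⟩⟩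
    push_neg at hns₁
    have := hmax s₁ hs₁S
    nlinarith

lemma mainInd {S : Finset (Fin n → ℝ)} (hS : S.Nonempty) {P : Set (Fin n → ℝ)}
    (hP : P = convexHull ℝ (S : Set (Fin n → ℝ))) (c g : Fin n → ℝ)
    (hgap : ∀ x y, IsVertexOf P x → IsVertexOf P y → dotp g y < dotp g x →
      dotp g y + 1 ≤ dotp g x) :
    ∀ (t : ℕ) (x₀ : Fin n → ℝ), IsVertexOf P x₀ →
    (∃ lam₀ : ℝ, 0 ≤ lam₀ ∧
      ∀ s ∈ S, dotp c s + lam₀ * dotp g s ≤ dotp c x₀ + lam₀ * dotp g x₀) →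
    (∀ v, IsVertexOf P v → dotp g x₀ - dotp g v ≤ (t : ℝ)) →
    ∃ m ≤ t, ∃ q : ℕ → (Fin n → ℝ), q 0 = x₀ ∧ (∀ j, IsVertexOf P (q j)) ∧
      (∀ j < m, IsEdgeOf P (q j) (q (j+1)) ∧ dotp c (q j) < dotp c (q (j+1))) ∧
      (∀ x ∈ P, dotp c x ≤ dotp c (q m)) := by
  intro t
  induction t with
  | zero =>
    intro x₀ hx₀ hinv hbound
    by_cases hopt : ∀ s ∈ S, dotp c s ≤ dotp c x₀
    · refine ⟨0, le_refl 0, fun _ => x₀, rfl, fun _ => hx₀, fun j hj => absurd hj (by omega), ?_⟩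
      intro x hx
      rw [hP] at hx
      exact dotp_le_hull hopt x hx
    · exfalso
      push_neg at hopt
      obtain ⟨lam₀, hlam₀, hmax⟩ := hinv
      obtain ⟨s₁, hs₁S, hs₁⟩ := hopt
      obtain ⟨v, _, _, _, hedge, hvc, hvg⟩ :=
        shadowStep hS hP c g x₀ hx₀ lam₀ hlam₀ hmax ⟨s₁, hs₁S, hs₁⟩
      have hvvert : IsVertexOf P v := hedge.2.2.1
      have h1 := hgap x₀ v hx₀ hvvert hvg
      have h2 := hbound v hvvert
      norm_num at h2
      linarith
  | succ t ih =>
    intro x₀ hx₀ hinv hbound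
    by_cases hopt : ∀ s ∈ S, dotp c s ≤ dotp c x₀
    · refine ⟨0, by omega, fun _ => x₀, rfl, fun _ => hx₀, fun j hj => absurd hj (by omega), ?_⟩
      intro x hx
      rw [hP] at hx
      exact dotp_le_hull hopt x hx
    · push_neg at hopt
      obtain ⟨lam₀, hlam₀, hmax⟩ := hinv
      obtain ⟨s₁, hs₁S, hs₁⟩ := hopt
      obtain ⟨v, lam₁, hlam₁, hmax₁, hedge, hvc, hvg⟩ :=
        shadowStep hS hP c g x₀ hx₀ lam₀ hlam₀ hmax ⟨s₁, hs₁S, hs₁⟩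
      have hvvert : IsVertexOf P v := hedge.2.2.1
      have h1 := hgap x₀ v hx₀ hvvert hvg
      have hbound' : ∀ v', IsVertexOf P v' → dotp g v - dotp g v' ≤ (t : ℝ) := by
        intro v' hv'
        have := hbound v' hv'
        push_cast at this ⊢
        linarith
      obtain ⟨m, hm, q, hq0, hqvert, hqedge, hqopt⟩ :=
        ih v hvvert ⟨lam₁, hlam₁, hmax₁⟩ hbound'
      refine ⟨m + 1, by omega, fun j => Nat.casesOn j x₀ q, rfl, ?_, ?_, ?_⟩
      · intro j
        cases j with
        | zero => exact hx₀
        | succ j => exact hqvert j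
      · intro j hj
        cases j with
        | zero =>
          simpa [hq0] using And.intro hedge hvc
        | succ j =>
          exact hqedge j (by omega)
      · exact hqopt

lemma tight_rows (A : Matrix (Fin r) (Fin n) ℤ) (b : Fin r → ℤ) (P : Set (Fin n → ℝ))
    (hPdef : P = {x : Fin n → ℝ | ∀ i : Fin r, ∑ j, (A i j : ℝ) * x j ≤ (b i : ℝ)})
    (u : Fin n → ℝ) (hu : IsVertexOf P u) :
    ∀ x ∈ P, (∀ i : Fin r, (∑ j, (A i j : ℝ) * u j) = b i → (∑ j, (A i j : ℝ) * x j) = b i)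
      → x = u := by
  intro x hxP htight
  by_contra hxu
  have huP : u ∈ P := hu.1
  set row : Fin r → (Fin n → ℝ) → ℝ := fun i y => ∑ j, (A i j : ℝ) * y j with hrow
  have hrow_lin : ∀ (i : Fin r) (a : ℝ),
      row i (u + a • (u - x)) = row i u + a * (row i u - row i x) := by
    intro i a
    simp only [hrow]
    have hterm : ∀ j ∈ Finset.univ, (A i j : ℝ) * ((u + a • (u - x)) j)
        = ((A i j : ℝ) * u j + a * ((A i j : ℝ) * u j - (A i j : ℝ) * x j)) := by
      intro j _
      simp only [Pi.add_apply, Pi.smul_apply, Pi.sub_apply, smul_eq_mul]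
      ring
    rw [Finset.sum_congr rfl hterm, Finset.sum_add_distrib, ← Finset.mul_sum,
      Finset.sum_sub_distrib]
  set Iu : Finset (Fin r) := Finset.univ.filter (fun i => row i u = b i) with hIu
  have hslack : ∀ i, i ∉ Iu → row i u < b i := by
    intro i hi
    have hne : ¬ (row i u = (b i : ℝ)) := fun h => hi (Finset.mem_filter.2 ⟨Finset.mem_univ i, h⟩)
    rw [hPdef] at huP
    exact lt_of_le_of_ne (huP i) hne
  set f : Fin r → ℝ := fun i => ((b i : ℝ) - row i u) / (1 + |row i u - row i x|) with hf
  set Sl : Finset (Fin r) := Finset.univ.filter (fun i => i ∉ Iu) with hSl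
  set ε : ℝ := min (1/2) (if h : Sl.Nonempty then Sl.inf' h f else 1) with hε
  have hfpos : ∀ i ∈ Sl, 0 < f i := by
    intro i hi
    have h1 := hslack i (Finset.mem_filter.1 hi).2
    have h2 : (0:ℝ) < 1 + |row i u - row i x| := by positivity
    exact div_pos (by linarith) h2
  have hεpos : 0 < ε := by
    rw [hε]
    apply lt_min (by norm_num)
    split_ifs with h
    · obtain ⟨i, hi, heq⟩ := Finset.exists_mem_eq_inf' h f
      rw [heq]; exact hfpos i hi
    · norm_num
  have hεkey : ∀ i, i ∉ Iu → ε * (1 + |row i u - row i x|) ≤ (b i : ℝ) - row i u := by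
    intro i hi
    have hiSl : i ∈ Sl := Finset.mem_filter.2 ⟨Finset.mem_univ i, hi⟩
    have h1 : ε ≤ f i := by
      rw [hε]
      refine le_trans (min_le_right _ _) ?_
      rw [dif_pos ⟨i, hiSl⟩]
      exact Finset.inf'_le f hiSl
    have h2 : (0:ℝ) < 1 + |row i u - row i x| := by positivity
    rw [hf] at h1
    calc ε * (1 + |row i u - row i x|)
        ≤ (((b i : ℝ) - row i u) / (1 + |row i u - row i x|)) * (1 + |row i u - row i x|) :=
          mul_le_mul_of_nonneg_right h1 (le_of_lt h2)
      _ = (b i : ℝ) - row i u := by field_simp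
  have hmem : ∀ a : ℝ, |a| ≤ ε → u + a • (u - x) ∈ P := by
    intro a ha
    rw [hPdef]
    intro i
    have hval := hrow_lin i a
    show row i (u + a • (u - x)) ≤ (b i : ℝ)
    by_cases hiI : i ∈ Iu
    · have h1 : row i u = b i := (Finset.mem_filter.1 hiI).2
      have h2 : row i x = b i := htight i h1
      rw [hval, h1, h2]
      simp
    · have h3 := hεkey i hiI
      have h4 : a * (row i u - row i x) ≤ ε * (1 + |row i u - row i x|) := by
        have h5 : a * (row i u - row i x) ≤ |a| * |row i u - row i x| := by
          calc a * (row i u - row i x) ≤ |a * (row i u - row i x)| := le_abs_self _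
            _ = |a| * |row i u - row i x| := abs_mul _ _
        have h6 : |a| * |row i u - row i x| ≤ ε * (1 + |row i u - row i x|) := by
          apply mul_le_mul ha (by linarith [le_refl (|row i u - row i x|)])
            (abs_nonneg _) (le_of_lt hεpos)
        linarith
      rw [hval]
      linarith
  have hw : u + ε • (u - x) ∈ P := hmem ε (by rw [abs_of_pos hεpos])
  have hy : u + (-ε) • (u - x) ∈ P := hmem (-ε) (by rw [abs_neg, abs_of_pos hεpos])
  have hseg : u ∈ openSegment ℝ (u + ε • (u - x)) (u + (-ε) • (u - x)) := by
    refine ⟨1/2, 1/2, by norm_num, by norm_num, by norm_num, ?_⟩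
    module
  have := hu.2 hw hy hseg
  have heq := this
  have : ε • (u - x) = 0 := by
    have h7 := congrArg (fun y => y - u) heq
    simpa using h7
  rcases smul_eq_zero.1 this with h | h
  · exact absurd h (ne_of_gt hεpos)
  · exact hxu (by
      have := sub_eq_zero.1 h
      exact this.symm)

lemma reduce_rows (A : Matrix (Fin r) (Fin n) ℤ) (b : Fin r → ℤ) (P : Set (Fin n → ℝ))
    (hPdef : P = {x : Fin n → ℝ | ∀ i : Fin r, ∑ j, (A i j : ℝ) * x j ≤ (b i : ℝ)})
    (d : ℕ) (hd : d = polytopeDim P)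
    (u : Fin n → ℝ) (hu : IsVertexOf P u) :
    ∃ I : Finset (Fin r), I.card ≤ d ∧ (∀ i ∈ I, (∑ j, (A i j : ℝ) * u j) = b i) ∧
      (∀ x ∈ P, (∀ i ∈ I, (∑ j, (A i j : ℝ) * x j) = b i) → x = u) := by
  classical
  set V : Submodule ℝ (Fin n → ℝ) := (affineSpan ℝ P).direction with hV
  -- row functionals restricted to V
  set ψ : Fin r → ((Fin n → ℝ) →ₗ[ℝ] ℝ) :=
    fun i => ∑ j, (A i j : ℝ) • (LinearMap.proj j : (Fin n → ℝ) →ₗ[ℝ] ℝ) with hψ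
  have hψval : ∀ i x, ψ i x = ∑ j, (A i j : ℝ) * x j := by
    intro i x
    simp [hψ, LinearMap.sum_apply, LinearMap.smul_apply, LinearMap.proj_apply, smul_eq_mul]
  set φ : Fin r → Module.Dual ℝ V := fun i => (ψ i).comp V.subtype with hφ
  set Iu : Finset (Fin r) := Finset.univ.filter
    (fun i => (∑ j, (A i j : ℝ) * u j) = (b i : ℝ)) with hIu
  set sSet : Set (Module.Dual ℝ V) := φ '' (Iu : Set (Fin r)) with hsSet
  obtain ⟨tt, htsub, htspan, htind⟩ := exists_linearIndependent ℝ sSet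
  have htfin : tt.Finite := htind.setFinite
  haveI : Fintype tt := htfin.fintype
  -- card bound
  have hcard : tt.toFinset.card ≤ d := by
    have h1 : Module.finrank ℝ (Submodule.span ℝ tt) = tt.toFinset.card :=
      finrank_span_set_eq_card htind
    have h2 : Module.finrank ℝ (Submodule.span ℝ tt) ≤ Module.finrank ℝ (Module.Dual ℝ V) :=
      Submodule.finrank_le _
    have h3 : Module.finrank ℝ (Module.Dual ℝ V) = Module.finrank ℝ V :=
      Subspace.dual_finrank_eq
    have h4 : Module.finrank ℝ V = Module.finrank ℝ ((affineSpan ℝ P).direction) := rfl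
    rw [hd]
    unfold polytopeDim
    omega
  -- pick a row index for each element of tt
  have hpick : ∀ ξ ∈ tt, ∃ i : Fin r, i ∈ Iu ∧ φ i = ξ := by
    intro ξ hξ
    obtain ⟨i, hi, hφi⟩ := htsub hξ
    exact ⟨i, hi, hφi⟩
  set pick : ∀ ξ ∈ tt.toFinset, Fin r := fun ξ hξ =>
    Classical.choose (hpick ξ (Set.mem_toFinset.1 hξ)) with hpickdef
  set I : Finset (Fin r) := tt.toFinset.attach.image
    (fun ξ => Classical.choose (hpick ξ.1 (Set.mem_toFinset.1 ξ.2))) with hI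
  have hIsub : I ⊆ Iu := by
    intro i hi
    rw [hI] at hi
    obtain ⟨ξ, _, rfl⟩ := Finset.mem_image.1 hi
    exact (Classical.choose_spec (hpick ξ.1 (Set.mem_toFinset.1 ξ.2))).1
  have hIcard : I.card ≤ d := le_trans (le_trans Finset.card_image_le (by simp)) hcard
  have hIspan : ∀ i' ∈ Iu, φ i' ∈ Submodule.span ℝ ((φ '' (I : Set (Fin r)))) := by
    intro i' hi'
    have h1 : φ i' ∈ sSet := ⟨i', hi', rfl⟩
    have h2 : φ i' ∈ Submodule.span ℝ sSet := Submodule.subset_span h1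
    rw [← htspan] at h2
    have h3 : tt ⊆ φ '' (I : Set (Fin r)) := by
      intro ξ hξ
      have hξ' : ξ ∈ tt.toFinset := Set.mem_toFinset.2 hξ
      refine ⟨Classical.choose (hpick ξ (Set.mem_toFinset.1 hξ')), ?_, ?_⟩
      · rw [hI]
        exact Finset.mem_coe.2 (Finset.mem_image.2 ⟨⟨ξ, hξ'⟩, Finset.mem_attach _ _, rfl⟩)
      · exact (Classical.choose_spec (hpick ξ (Set.mem_toFinset.1 hξ'))).2
    exact Submodule.span_mono h3 h2
  refine ⟨I, hIcard, fun i hi => (Finset.mem_filter.1 (hIsub hi)).2, ?_⟩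
  intro x hxP hxtight
  apply tight_rows A b P hPdef u hu x hxP
  intro i' hi'u
  have hi'Iu : i' ∈ Iu := Finset.mem_filter.2 ⟨Finset.mem_univ i', hi'u⟩
  -- x - u ∈ V
  have hxV : x - u ∈ V := by
    rw [hV]
    have h1 : x ∈ affineSpan ℝ P := subset_affineSpan ℝ P hxP
    have h2 : u ∈ affineSpan ℝ P := subset_affineSpan ℝ P hu.1
    have := AffineSubspace.vsub_mem_direction h1 h2
    simpa using this
  -- evaluation functional at x - u
  set ev : Module.Dual ℝ V →ₗ[ℝ] ℝ := LinearMap.applyₗ (⟨x - u, hxV⟩ : V) with hev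
  have hker : ∀ i ∈ I, φ i ∈ LinearMap.ker ev := by
    intro i hi
    rw [LinearMap.mem_ker, hev]
    show φ i ⟨x - u, hxV⟩ = 0
    rw [hφ]
    show ψ i (x - u) = 0
    have h1 : ψ i (x - u) = ψ i x - ψ i u := by rw [map_sub]
    have h2 : (∑ j, (A i j : ℝ) * u j) = b i := (Finset.mem_filter.1 (hIsub hi)).2
    have h3 : (∑ j, (A i j : ℝ) * x j) = b i := hxtight i hi
    rw [h1, hψval, hψval, h2, h3, sub_self]
  have hspanker : Submodule.span ℝ (φ '' (I : Set (Fin r))) ≤ LinearMap.ker ev := by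
    rw [Submodule.span_le]
    rintro ξ ⟨i, hi, rfl⟩
    exact hker i hi
  have h4 : φ i' ∈ LinearMap.ker ev := hspanker (hIspan i' hi'Iu)
  rw [LinearMap.mem_ker, hev] at h4
  have h5 : ψ i' (x - u) = 0 := h4
  rw [map_sub] at h5
  rw [hψval, hψval] at h5
  have : (∑ j, (A i' j : ℝ) * x j) = ∑ j, (A i' j : ℝ) * u j := by linarith
  rw [this, hi'u]

theorem main {r n : ℕ}
    (A : Matrix (Fin r) (Fin n) ℤ) (b : Fin r → ℤ) (k : ℕ)
    (P : Set (Fin n → ℝ))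
    (hPdef : P = {x : Fin n → ℝ | ∀ i : Fin r, ∑ j, (A i j : ℝ) * x j ≤ (b i : ℝ)})
    (hP : IsPolytope P)
    (hsub : P ⊆ {x : Fin n → ℝ | ∀ i, 0 ≤ x i ∧ x i ≤ (k : ℝ)})
    (hvert : ∀ v, IsVertexOf P v → ∀ i, ∃ z : ℤ, v i = (z : ℝ))
    (d : ℕ) (hd : d = polytopeDim P) (hd1 : 1 ≤ d)
    (c : Fin n → ℝ) (u : Fin n → ℝ) (hu : IsVertexOf P u) :
    ∃ (m : ℕ) (p : Fin (m + 1) → (Fin n → ℝ)),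
      m ≤ d * n * k * matNormInf A ∧
      IsMonotonePath P c m p ∧
      p 0 = u ∧
      (∀ x ∈ P, dotp c x ≤ dotp c (p (Fin.last m))) := by
  classical
  obtain ⟨S, hSne, hPhull⟩ := hP
  obtain ⟨I, hIcard, hItight, hIkey⟩ := reduce_rows A b P hPdef d hd u hu
  set g : Fin n → ℝ := fun j => ∑ i ∈ I, (A i j : ℝ) with hg
  -- dotp g x = sum over rows in I of row values
  have hgrow : ∀ x : Fin n → ℝ, dotp g x = ∑ i ∈ I, ∑ j, (A i j : ℝ) * x j := by
    intro x
    rw [dotp]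
    rw [Finset.sum_comm]
    apply Finset.sum_congr rfl
    intro j _
    rw [hg]
    rw [Finset.sum_mul]
  -- u maximizes g strictly on P \ {u}
  have hgmax : ∀ x ∈ P, x ≠ u → dotp g x < dotp g u := by
    intro x hxP hxu
    have h1 : dotp g x ≤ dotp g u := by
      rw [hgrow, hgrow]
      apply Finset.sum_le_sum
      intro i hi
      rw [hItight i hi]
      rw [hPdef] at hxP
      exact hxP i
    rcases lt_or_eq_of_le h1 with h | h
    · exact h
    · exfalso
      apply hxu
      apply hIkey x hxP
      intro i hi
      by_contra hne
      rw [hPdef] at hxP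
      have hlt : (∑ j, (A i j : ℝ) * x j) < b i := lt_of_le_of_ne (hxP i) hne
      have hstrict : ∑ i ∈ I, ∑ j, (A i j : ℝ) * x j < ∑ i ∈ I, ∑ j, (A i j : ℝ) * u j := by
        apply Finset.sum_lt_sum
        · intro i' hi'
          rw [hItight i' hi']
          exact hxP i'
        · exact ⟨i, hi, by rw [hItight i hi]; exact hlt⟩
      rw [← hgrow, ← hgrow] at hstrict
      linarith
  -- integrality gap
  have hgap : ∀ x y, IsVertexOf P x → IsVertexOf P y → dotp g y < dotp g x →
      dotp g y + 1 ≤ dotp g x := by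
    intro x y hx hy hlt
    have hint : ∀ v, IsVertexOf P v → ∃ z : ℤ, dotp g v = (z : ℝ) := by
      intro v hv
      refine ⟨∑ j, (∑ i ∈ I, A i j) * Classical.choose (hvert v hv j), ?_⟩
      rw [dotp]
      push_cast
      apply Finset.sum_congr rfl
      intro j _
      conv_lhs => rw [(Classical.choose_spec (hvert v hv j) : v j = _)]
    obtain ⟨zx, hzx⟩ := hint x hx
    obtain ⟨zy, hzy⟩ := hint y hy
    rw [hzx, hzy] at hlt ⊢
    have : zy < zx := by exact_mod_cast hlt
    have : zy + 1 ≤ zx := this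
    exact_mod_cast this
  -- initial lam₀
  have hlam : ∃ lam₀ : ℝ, 0 ≤ lam₀ ∧
      ∀ s ∈ S, dotp c s + lam₀ * dotp g s ≤ dotp c u + lam₀ * dotp g u := by
    by_cases hne : (S.erase u).Nonempty
    · set ρ : (Fin n → ℝ) → ℝ := fun s => (dotp c s - dotp c u) / (dotp g u - dotp g s) with hρ
      refine ⟨max 0 ((S.erase u).sup' hne ρ), le_max_left _ _, ?_⟩
      intro s hs
      by_cases hsu : s = u
      · rw [hsu]
      · have hse : s ∈ S.erase u := Finset.mem_erase.2 ⟨hsu, hs⟩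
        have hsP : s ∈ P := by
          rw [hPhull]; exact subset_convexHull ℝ _ (Finset.mem_coe.2 hs)
        have hglt : dotp g s < dotp g u := hgmax s hsP hsu
        have h1 : ρ s ≤ max 0 ((S.erase u).sup' hne ρ) :=
          le_trans (Finset.le_sup' ρ hse) (le_max_right _ _)
        rw [hρ] at h1
        simp only at h1
        rw [div_le_iff₀ (by linarith)] at h1
        nlinarith [le_max_left (0:ℝ) ((S.erase u).sup' hne ρ), hglt]
    · refine ⟨0, le_refl 0, ?_⟩
      intro s hs
      have : s = u := by
        by_contra hsu
        exact hne ⟨s, Finset.mem_erase.2 ⟨hsu, hs⟩⟩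
      rw [this]
  -- the bound on the g-range over vertices
  set N : ℕ := matNormInf A with hN
  have hbound : ∀ v, IsVertexOf P v → dotp g u - dotp g v ≤ ((d * n * k * N : ℕ) : ℝ) := by
    intro v hv
    have hvP : v ∈ P := hv.1
    have huP : u ∈ P := hu.1
    have hcoordb : ∀ (x : Fin n → ℝ), x ∈ P → ∀ j, 0 ≤ x j ∧ x j ≤ (k:ℝ) := by
      intro x hx j
      exact hsub hx j
    have hgj : ∀ j, |g j| ≤ (I.card : ℝ) * (N : ℝ) := by
      intro j
      rw [hg]
      calc |∑ i ∈ I, (A i j : ℝ)| ≤ ∑ i ∈ I, |(A i j : ℝ)| := Finset.abs_sum_le_sum_abs _ _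
        _ ≤ ∑ _i ∈ I, (N : ℝ) := by
            apply Finset.sum_le_sum
            intro i _
            have h1 : (A i j).natAbs ≤ N := by
              rw [hN]
              exact Finset.le_sup (f := fun p : Fin r × Fin n => (A p.1 p.2).natAbs)
                (Finset.mem_univ (i, j))
            calc |(A i j : ℝ)| = ((A i j).natAbs : ℝ) := by
                  rw [← Int.cast_abs, Int.abs_eq_natAbs, Int.cast_natCast]
              _ ≤ (N : ℝ) := by exact_mod_cast h1
        _ = (I.card : ℝ) * (N : ℝ) := by rw [Finset.sum_const, nsmul_eq_mul]
    have hterm : ∀ j, g j * (u j - v j) ≤ (I.card : ℝ) * (N : ℝ) * (k : ℝ) := by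
      intro j
      have h1 : |u j - v j| ≤ (k : ℝ) := by
        have h2 := hcoordb u huP j
        have h3 := hcoordb v hvP j
        rw [abs_sub_le_iff]
        constructor <;> linarith
      calc g j * (u j - v j) ≤ |g j * (u j - v j)| := le_abs_self _
        _ = |g j| * |u j - v j| := abs_mul _ _
        _ ≤ ((I.card : ℝ) * (N : ℝ)) * (k : ℝ) := by
            apply mul_le_mul (hgj j) h1 (abs_nonneg _)
            exact mul_nonneg (Nat.cast_nonneg _) (Nat.cast_nonneg _)
    have hsum : dotp g u - dotp g v = ∑ j, g j * (u j - v j) := by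
      rw [dotp, dotp, ← Finset.sum_sub_distrib]
      apply Finset.sum_congr rfl
      intro j _
      ring
    rw [hsum]
    calc ∑ j, g j * (u j - v j) ≤ ∑ _j : Fin n, (I.card : ℝ) * (N : ℝ) * (k : ℝ) :=
          Finset.sum_le_sum (fun j _ => hterm j)
      _ = (n : ℝ) * ((I.card : ℝ) * (N : ℝ) * (k : ℝ)) := by
          rw [Finset.sum_const, nsmul_eq_mul, Finset.card_univ, Fintype.card_fin]
      _ ≤ ((d * n * k * N : ℕ) : ℝ) := by
          push_cast
          have h1 : (I.card : ℝ) ≤ (d : ℝ) := by exact_mod_cast hIcard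
          have h2 : (0:ℝ) ≤ (N : ℝ) := Nat.cast_nonneg _
          have h3 : (0:ℝ) ≤ (k : ℝ) := Nat.cast_nonneg _
          have h4 : (0:ℝ) ≤ (n : ℝ) := Nat.cast_nonneg _
          have h5 : (I.card : ℝ) * (N:ℝ) * (k:ℝ) ≤ (d:ℝ) * (N:ℝ) * (k:ℝ) :=
            mul_le_mul_of_nonneg_right (mul_le_mul_of_nonneg_right h1 h2) h3
          have h6 : (n:ℝ) * ((I.card : ℝ) * (N:ℝ) * (k:ℝ)) ≤ (n:ℝ) * ((d:ℝ) * (N:ℝ) * (k:ℝ)) :=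
            mul_le_mul_of_nonneg_left h5 h4
          nlinarith [h6]
  -- apply the main induction
  obtain ⟨m, hm, q, hq0, hqvert, hqedge, hqopt⟩ :=
    mainInd hSne hPhull c g hgap (d * n * k * N) u hu hlam hbound
  refine ⟨m, fun i => q i.val, hm, ⟨fun i => hqvert i.val, ?_⟩, hq0, ?_⟩
  · intro i
    have := hqedge i.val i.isLt
    simpa [Fin.coe_castSucc, Fin.val_succ] using this
  · intro x hx
    have := hqopt x hx
    simpa [Fin.val_last] using this

end LatticePivot

/-- **Theorem (lattice shadow pivot rule bound).**
Let `A` be an integer matrix, `b ∈ ℤ^r`, and suppose `P = {x : Ax ≤ b} ⊆ [0,k]^n`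
is a bounded polytope of dimension `d ≥ 1` all of whose vertices are integral.
Then for every `c ∈ ℝ^n` and every vertex `u` of `P` there is a `c`-monotone path
of length at most `d·n·k·‖A‖∞` from `u` to a vertex maximizing `cᵀx` over `P`. -/
theorem lattice_shadow_pivot_bound {r n : ℕ}
    (A : Matrix (Fin r) (Fin n) ℤ) (b : Fin r → ℤ) (k : ℕ)
    (P : Set (Fin n → ℝ))
    (hPdef : P = {x : Fin n → ℝ | ∀ i : Fin r, ∑ j, (A i j : ℝ) * x j ≤ (b i : ℝ)})
    (hP : IsPolytope P)
    (hsub : P ⊆ {x : Fin n → ℝ | ∀ i, 0 ≤ x i ∧ x i ≤ (k : ℝ)})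
    (hvert : ∀ v, IsVertexOf P v → ∀ i, ∃ z : ℤ, v i = (z : ℝ))
    (d : ℕ) (hd : d = polytopeDim P) (hd1 : 1 ≤ d)
    (c : Fin n → ℝ) (u : Fin n → ℝ) (hu : IsVertexOf P u) :
    ∃ (m : ℕ) (p : Fin (m + 1) → (Fin n → ℝ)),
      m ≤ d * n * k * matNormInf A ∧
      IsMonotonePath P c m p ∧
      p 0 = u ∧
      (∀ x ∈ P, dotp c x ≤ dotp c (p (Fin.last m))) := by
  classical
  exact LatticePivot.main A b k P hPdef hP hsub hvert d hd hd1 c u hu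
end
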